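/- arXiv:1409.1958 — 13 statements merged into one kernel-verified Lean document; each statement's English description precedes it below -/
import Mathlib

section
/- For positive bounded operators A, B on a Hilbert space H, the pair (A^{1/2}, (A+B)^{1/2} − A^{1/2}) has the range additivity property, i.e., R((A+B)^{1/2}) = R(A^{1/2}) + R((A+B)^{1/2} − A^{1/2}). -/
open ContinuousLinearMap

open scoped InnerProductSpace

variable {H : Type*} [NormedAddCommGroup H] [InnerProductSpace ℂ H] [CompleteSpace H]

/-- Douglas-type range inclusion: if `C`, `D` are self-adjoint and `‖C x‖ ≤ k * ‖D x‖`
for all `x`, then `range C ≤ range D`. -/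
theorem range_le_of_norm_le (C D : H →L[ℂ] H) (hC : IsSelfAdjoint C) (hD : IsSelfAdjoint D)
    (k : ℝ) (h : ∀ x, ‖C x‖ ≤ k * ‖D x‖) :
    LinearMap.range (C : H →ₗ[ℂ] H) ≤ LinearMap.range (D : H →ₗ[ℂ] H) := by
  rintro y ⟨u, rfl⟩
  set Dl : H →ₗ[ℂ] H := (D : H →ₗ[ℂ] H) with hDl
  set φ : H →ₗ[ℂ] ℂ := (((innerSL ℂ u).comp C : H →L[ℂ] ℂ) : H →ₗ[ℂ] ℂ) with hφ
  have hφ_apply : ∀ x, φ x = ⟪u, C x⟫_ℂ := fun x => rfl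
  have hle : LinearMap.ker Dl ≤ LinearMap.ker φ := by
    intro x hx
    have hx' : D x = 0 := hx
    have h0 : ‖C x‖ ≤ 0 := by simpa [hx'] using h x
    have hCx : C x = 0 := norm_le_zero_iff.mp h0
    have : φ x = 0 := by rw [hφ_apply, hCx, inner_zero_right]
    exact this
  set ψ : (H ⧸ LinearMap.ker Dl) →ₗ[ℂ] ℂ := (LinearMap.ker Dl).liftQ φ hle with hψ
  set e := Dl.quotKerEquivRange with he
  set g₀ : LinearMap.range Dl →ₗ[ℂ] ℂ := ψ.comp (e.symm : LinearMap.range Dl →ₗ[ℂ] _) with hg₀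
  have hg₀_apply : ∀ (x : H) (hm : D x ∈ LinearMap.range Dl), g₀ ⟨D x, hm⟩ = ⟪u, C x⟫_ℂ := by
    intro x hm
    have h1 : e.symm ⟨D x, hm⟩ = Submodule.Quotient.mk x :=
      Dl.quotKerEquivRange_symm_apply_image x hm
    simp only [hg₀, LinearMap.comp_apply, LinearEquiv.coe_coe, h1, hψ,
      Submodule.liftQ_apply, hφ_apply]
  have hbound : ∀ w : LinearMap.range Dl, ‖g₀ w‖ ≤ (k * ‖u‖) * ‖w‖ := by
    intro w
    obtain ⟨x, hx⟩ := Submodule.Quotient.mk_surjective _ (e.symm w)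
    have h4 : e (Submodule.Quotient.mk x) = w := by rw [hx]; exact e.apply_symm_apply w
    have hw : w = ⟨D x, ⟨x, rfl⟩⟩ := by
      apply Subtype.ext
      rw [← h4]
      exact Dl.quotKerEquivRange_apply_mk x
    rw [hw, hg₀_apply x ⟨x, rfl⟩]
    have hwn : ‖(⟨D x, ⟨x, rfl⟩⟩ : LinearMap.range Dl)‖ = ‖D x‖ := rfl
    rw [hwn]
    calc ‖⟪u, C x⟫_ℂ‖ ≤ ‖u‖ * ‖C x‖ := norm_inner_le_norm _ _
      _ ≤ ‖u‖ * (k * ‖D x‖) := by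
          exact mul_le_mul_of_nonneg_left (h x) (norm_nonneg u)
      _ = (k * ‖u‖) * ‖D x‖ := by ring
  set g := g₀.mkContinuous (k * ‖u‖) hbound with hg
  obtain ⟨G, hG, -⟩ := exists_extension_norm_eq (LinearMap.range Dl) g
  obtain ⟨z, hz⟩ := (InnerProductSpace.toDual ℂ H).surjective G
  refine ⟨z, ?_⟩
  have key : ∀ x : H, ⟪z, D x⟫_ℂ = ⟪u, C x⟫_ℂ := by
    intro x
    have hmem : D x ∈ LinearMap.range Dl := ⟨x, rfl⟩
    have h1 : G (D x) = g ⟨D x, hmem⟩ := hG ⟨D x, hmem⟩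
    have h2 : g ⟨D x, hmem⟩ = ⟪u, C x⟫_ℂ := hg₀_apply x hmem
    have h3 : G (D x) = ⟪z, D x⟫_ℂ := by rw [← hz]; exact InnerProductSpace.toDual_apply_apply
    rw [← h3, h1, h2]
  have key2 : ∀ x : H, ⟪D z - C u, x⟫_ℂ = 0 := by
    intro x
    rw [inner_sub_left, sub_eq_zero]
    calc ⟪D z, x⟫_ℂ = ⟪z, D x⟫_ℂ := by
          nth_rewrite 1 [← hD.adjoint_eq]
          exact ContinuousLinearMap.adjoint_inner_left _ _ _
      _ = ⟪u, C x⟫_ℂ := key x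
      _ = ⟪C u, x⟫_ℂ := by
          nth_rewrite 2 [← hC.adjoint_eq]
          exact (ContinuousLinearMap.adjoint_inner_left _ _ _).symm
  have := key2 (D z - C u)
  rw [inner_self_eq_zero] at this
  exact sub_eq_zero.mp this

/-- For positive operators `A, B`, the pair `(A^{1/2}, (A+B)^{1/2} - A^{1/2})` has the
range additivity property: `R((A+B)^{1/2}) = R(A^{1/2}) + R((A+B)^{1/2} - A^{1/2})`.
Here `sA` is the positive square root of `A` and `sAB` that of `A + B`. -/
theorem sqrt_range_additivity (A B sA sAB : H →L[ℂ] H)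
    (hA : A.IsPositive) (hB : B.IsPositive)
    (hsA : sA.IsPositive) (hsA2 : sA ∘L sA = A)
    (hsAB : sAB.IsPositive) (hsAB2 : sAB ∘L sAB = A + B) :
    LinearMap.range (sAB : H →ₗ[ℂ] H) = LinearMap.range (sA : H →ₗ[ℂ] H) ⊔ LinearMap.range ((sAB - sA : H →L[ℂ] H) : H →ₗ[ℂ] H) := by
  have hS := hsA.isSelfAdjoint
  have hT := hsAB.isSelfAdjoint
  have e1 : ∀ x, RCLike.re ⟪A x, x⟫_ℂ = ‖sA x‖ ^ 2 := by
    intro x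
    have h1 : ⟪A x, x⟫_ℂ = ⟪sA x, sA x⟫_ℂ := by
      rw [← hsA2, ContinuousLinearMap.comp_apply]
      nth_rewrite 1 [← hS.adjoint_eq]
      exact ContinuousLinearMap.adjoint_inner_left _ _ _
    rw [h1]
    exact inner_self_eq_norm_sq _
  have e2 : ∀ x, RCLike.re ⟪(A + B) x, x⟫_ℂ = ‖sAB x‖ ^ 2 := by
    intro x
    have h1 : ⟪(A + B) x, x⟫_ℂ = ⟪sAB x, sAB x⟫_ℂ := by
      rw [← hsAB2, ContinuousLinearMap.comp_apply]
      nth_rewrite 1 [← hT.adjoint_eq]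
      exact ContinuousLinearMap.adjoint_inner_left _ _ _
    rw [h1]
    exact inner_self_eq_norm_sq _
  have hnorm : ∀ x, ‖sA x‖ ≤ ‖sAB x‖ := by
    intro x
    have hsq : ‖sA x‖ ^ 2 ≤ ‖sAB x‖ ^ 2 := by
      rw [← e1, ← e2]
      have hBx : 0 ≤ RCLike.re ⟪B x, x⟫_ℂ := (RCLike.nonneg_iff.mp (hB.inner_nonneg_left x)).1
      simp only [ContinuousLinearMap.add_apply, inner_add_left, map_add]
      linarith
    nlinarith [norm_nonneg (sA x), norm_nonneg (sAB x)]
  have h1 : ∀ x, ‖sA x‖ ≤ 1 * ‖sAB x‖ := by intro x; rw [one_mul]; exact hnorm x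
  have h2 : ∀ x, ‖(sAB - sA) x‖ ≤ 2 * ‖sAB x‖ := by
    intro x
    rw [ContinuousLinearMap.sub_apply]
    calc ‖sAB x - sA x‖ ≤ ‖sAB x‖ + ‖sA x‖ := norm_sub_le _ _
      _ ≤ 2 * ‖sAB x‖ := by linarith [hnorm x]
  apply le_antisymm
  · rintro y ⟨x, rfl⟩
    have : sAB x = sA x + (sAB - sA) x := by
      rw [ContinuousLinearMap.sub_apply]; abel
    change sAB x ∈ _
    rw [this]
    exact Submodule.add_mem_sup ⟨x, rfl⟩ ⟨x, rfl⟩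
  · exact sup_le (range_le_of_norm_le sA sAB hS hT 1 h1)
      (range_le_of_norm_le (sAB - sA) sAB (hT.sub hS) hT 2 h2)
end

section
/- Let A, B be bounded linear operators on a Hilbert space H. Then R(A+B) = R(A) + R(B) if and only if R(A) ∩ R(B) ⊆ R(A+B) and H = A^{-1}(R(B)) + B^{-1}(R(A)). -/
open ContinuousLinearMap

variable {H : Type*} [NormedAddCommGroup H] [InnerProductSpace ℂ H] [CompleteSpace H]

/-- `R(A+B) = R(A) + R(B)` iff `R(A) ∩ R(B) ⊆ R(A+B)` and
`H = A⁻¹(R(B)) + B⁻¹(R(A))`. -/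
theorem range_additivity_iff_preimages (A B : H →L[ℂ] H) :
    LinearMap.range ((A + B : H →L[ℂ] H) : H →ₗ[ℂ] H) = LinearMap.range (A : H →ₗ[ℂ] H) ⊔ LinearMap.range (B : H →ₗ[ℂ] H) ↔
      (LinearMap.range (A : H →ₗ[ℂ] H) ⊓ LinearMap.range (B : H →ₗ[ℂ] H) ≤ LinearMap.range ((A + B : H →L[ℂ] H) : H →ₗ[ℂ] H) ∧
        Submodule.comap (A : H →ₗ[ℂ] H) (LinearMap.range (B : H →ₗ[ℂ] H)) ⊔
          Submodule.comap (B : H →ₗ[ℂ] H) (LinearMap.range (A : H →ₗ[ℂ] H)) = ⊤) := by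
  constructor
  · intro h
    refine ⟨by rw [h]; exact inf_le_left.trans le_sup_left, ?_⟩
    rw [Submodule.eq_top_iff']
    intro x
    have hx : A x ∈ LinearMap.range ((A + B : H →L[ℂ] H) : H →ₗ[ℂ] H) := by
      rw [h]; exact Submodule.mem_sup_left ⟨x, rfl⟩
    obtain ⟨y, hy⟩ := hx
    have hy' : A y + B y = A x := by simpa using hy
    rw [Submodule.mem_sup]
    refine ⟨x - y, ?_, y, ?_, by abel⟩
    · exact ⟨y, by simp only [ContinuousLinearMap.coe_coe, map_sub]; rw [eq_sub_iff_add_eq, add_comm]; exact hy'⟩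
    · exact ⟨x - y, by simp only [ContinuousLinearMap.coe_coe, map_sub]; rw [sub_eq_iff_eq_add']; exact hy'.symm⟩
  · rintro ⟨h1, h2⟩
    apply le_antisymm
    · rintro _ ⟨x, rfl⟩
      exact Submodule.add_mem_sup ⟨x, rfl⟩ ⟨x, rfl⟩
    · rw [sup_le_iff]
      constructor
      · rintro _ ⟨x, rfl⟩
        have hx : x ∈ (⊤ : Submodule ℂ H) := trivial
        rw [← h2, Submodule.mem_sup] at hx
        obtain ⟨u, hu, v, hv, huv⟩ := hx
        have h3 : A u ∈ LinearMap.range ((A + B : H →L[ℂ] H) : H →ₗ[ℂ] H) := h1 ⟨⟨u, rfl⟩, hu⟩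
        have h4 : B v ∈ LinearMap.range ((A + B : H →L[ℂ] H) : H →ₗ[ℂ] H) := h1 ⟨hv, ⟨v, rfl⟩⟩
        have h5 : (A + B) v ∈ LinearMap.range ((A + B : H →L[ℂ] H) : H →ₗ[ℂ] H) := ⟨v, rfl⟩
        have : A x = A u + ((A + B) v - B v) := by
          simp only [ContinuousLinearMap.add_apply]
          rw [← huv]; simp [map_add]
        rw [ContinuousLinearMap.coe_coe, this]
        exact Submodule.add_mem _ h3 (Submodule.sub_mem _ h5 h4)
      · rintro _ ⟨x, rfl⟩
        have hx : x ∈ (⊤ : Submodule ℂ H) := trivial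
        rw [← h2, Submodule.mem_sup] at hx
        obtain ⟨u, hu, v, hv, huv⟩ := hx
        have h3 : B v ∈ LinearMap.range ((A + B : H →L[ℂ] H) : H →ₗ[ℂ] H) := h1 ⟨hv, ⟨v, rfl⟩⟩
        have h4 : A u ∈ LinearMap.range ((A + B : H →L[ℂ] H) : H →ₗ[ℂ] H) := h1 ⟨⟨u, rfl⟩, hu⟩
        have h5 : (A + B) u ∈ LinearMap.range ((A + B : H →L[ℂ] H) : H →ₗ[ℂ] H) := ⟨u, rfl⟩
        have : B x = B v + ((A + B) u - A u) := by
          simp only [ContinuousLinearMap.add_apply]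
          rw [← huv]; simp [map_add]; abel
        rw [ContinuousLinearMap.coe_coe, this]
        exact Submodule.add_mem _ h3 (Submodule.sub_mem _ h5 h4)
end

section
/- Let A, B be bounded linear operators on a Hilbert space H with R(A) ∩ R(B) = {0}. Then R(A+B) = R(A) + R(B) if and only if N(A) + N(B) = H. -/
open ContinuousLinearMap

variable {H : Type*} [NormedAddCommGroup H] [InnerProductSpace ℂ H] [CompleteSpace H]

/-- If `R(A) ∩ R(B) = {0}`, then `R(A+B) = R(A) + R(B)` iff `N(A) + N(B) = H`. -/
theorem range_additivity_iff_ker_sum (A B : H →L[ℂ] H)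
    (h : LinearMap.range (A : H →ₗ[ℂ] H) ⊓ LinearMap.range (B : H →ₗ[ℂ] H) = ⊥) :
    LinearMap.range ((A + B : H →L[ℂ] H) : H →ₗ[ℂ] H) =
      LinearMap.range (A : H →ₗ[ℂ] H) ⊔ LinearMap.range (B : H →ₗ[ℂ] H) ↔
      LinearMap.ker (A : H →ₗ[ℂ] H) ⊔ LinearMap.ker (B : H →ₗ[ℂ] H) = ⊤ := by
  constructor
  · intro hR
    rw [eq_top_iff]
    intro x _
    have hx : A x ∈ LinearMap.range ((A + B : H →L[ℂ] H) : H →ₗ[ℂ] H) := by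
      rw [hR]
      exact Submodule.mem_sup_left (LinearMap.mem_range_self (A : H →ₗ[ℂ] H) x)
    obtain ⟨y, hy⟩ := hx
    have hy' : A y + B y = A x := by simpa [add_apply] using hy
    have h1 : A (x - y) = B y := by
      simp only [map_sub]
      rw [← hy']; abel
    have h2 : B y ∈ LinearMap.range (A : H →ₗ[ℂ] H) ⊓ LinearMap.range (B : H →ₗ[ℂ] H) :=
      ⟨⟨x - y, h1⟩, LinearMap.mem_range_self (B : H →ₗ[ℂ] H) y⟩
    rw [h] at h2
    have hBy : B y = 0 := h2
    have hAxy : x - y ∈ LinearMap.ker (A : H →ₗ[ℂ] H) := by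
      rw [LinearMap.mem_ker, ContinuousLinearMap.coe_coe]; rw [h1, hBy]
    have hyk : y ∈ LinearMap.ker (B : H →ₗ[ℂ] H) := hBy
    exact Submodule.mem_sup.2 ⟨x - y, hAxy, y, hyk, by abel⟩
  · intro hK
    apply le_antisymm
    · rintro _ ⟨z, rfl⟩
      have : ((A + B : H →L[ℂ] H) : H →ₗ[ℂ] H) z = A z + B z := rfl
      rw [this]
      exact Submodule.add_mem_sup (LinearMap.mem_range_self (A : H →ₗ[ℂ] H) z)
        (LinearMap.mem_range_self (B : H →ₗ[ℂ] H) z)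
    · rintro w hw
      obtain ⟨u, hu, v, hv, rfl⟩ := Submodule.mem_sup.1 hw
      obtain ⟨x, rfl⟩ := hu
      obtain ⟨y, rfl⟩ := hv
      have hxy : x - y ∈ LinearMap.ker (A : H →ₗ[ℂ] H) ⊔ LinearMap.ker (B : H →ₗ[ℂ] H) := by
        rw [hK]; trivial
      obtain ⟨nA, hnA, nB, hnB, hsum⟩ := Submodule.mem_sup.1 hxy
      have hnA' : A nA = 0 := hnA
      have hnB' : B nB = 0 := hnB
      refine ⟨x - nA, ?_⟩
      have hx' : x = nA + nB + y := by rw [hsum]; abel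
      have hz : x - nA = y + nB := by rw [hx']; abel
      calc (A + B) (x - nA) = A (x - nA) + B (x - nA) := rfl
        _ = A x + B (y + nB) := by rw [map_sub, hnA', sub_zero, hz]
        _ = A x + B y := by rw [map_add, hnB', add_zero]
end

section
/- For bounded linear operators A, B on a Hilbert space H: if the closures of R(A*) and R(B*) intersect trivially and their (direct) sum is closed, then N(A) + N(B) = H; and if N(A) + N(B) = H, then R(A+B) = R(A) + R(B). -/
open ContinuousLinearMap

variable {H : Type*} [NormedAddCommGroup H] [InnerProductSpace ℂ H] [CompleteSpace H]

private lemma ker_eq_orthogonal_range_adjoint (A : H →L[ℂ] H) :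
    LinearMap.ker (A : H →ₗ[ℂ] H) = (LinearMap.range ((adjoint A : H →L[ℂ] H) : H →ₗ[ℂ] H))ᗮ := by
  ext x
  simp only [LinearMap.mem_ker, Submodule.mem_orthogonal, ContinuousLinearMap.coe_coe]
  constructor
  · rintro hx _ ⟨y, rfl⟩
    rw [ContinuousLinearMap.coe_coe, adjoint_inner_left, hx, inner_zero_right]
  · intro hx
    have := hx (adjoint A (A x)) ⟨A x, rfl⟩
    rw [adjoint_inner_left, inner_self_eq_zero] at this
    exact this

private lemma orth_sum_top (M N : Submodule ℂ H) (hM : IsClosed (M : Set H))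
    (hN : IsClosed (N : Set H)) (hMN : M ⊓ N = ⊥)
    (hK : IsClosed ((M ⊔ N : Submodule ℂ H) : Set H)) : Mᗮ ⊔ Nᗮ = ⊤ := by
  set K : Submodule ℂ H := M ⊔ N with hKdef
  haveI : CompleteSpace K := hK.completeSpace_coe
  set M' : Submodule ℂ K := M.comap K.subtype with hM'def
  set N' : Submodule ℂ K := N.comap K.subtype with hN'def
  have hM'c : IsClosed (M' : Set K) := hM.preimage continuous_subtype_val
  have hN'c : IsClosed (N' : Set K) := hN.preimage continuous_subtype_val
  have hcompl : IsCompl M' N' := by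
    constructor
    · rw [disjoint_iff, eq_bot_iff]
      rintro x ⟨hx1, hx2⟩
      have : (x : H) ∈ M ⊓ N := ⟨hx1, hx2⟩
      rw [hMN, Submodule.mem_bot] at this
      rw [Submodule.mem_bot]
      exact Subtype.ext this
    · rw [codisjoint_iff, eq_top_iff]
      rintro k -
      have hk : (k : H) ∈ M ⊔ N := k.2
      rw [Submodule.mem_sup] at hk
      obtain ⟨m, hm, n, hn, hmn⟩ := hk
      rw [Submodule.mem_sup]
      refine ⟨⟨m, (le_sup_left : M ≤ K) hm⟩, hm, ⟨n, (le_sup_right : N ≤ K) hn⟩, hn, ?_⟩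
      exact Subtype.ext hmn
  set P : K →L[ℂ] M' := M'.linearProjOfClosedCompl N' hcompl hM'c hN'c with hPdef
  rw [eq_top_iff]
  rintro x -
  -- decompose x = k + w with k ∈ K, w ∈ Kᗮ
  have hKcompl : IsCompl K Kᗮ := Submodule.isCompl_orthogonal_of_hasOrthogonalProjection
  have hx : x ∈ K ⊔ Kᗮ := by rw [hKcompl.sup_eq_top]; trivial
  rw [Submodule.mem_sup] at hx
  obtain ⟨k, hk, w, hw, rfl⟩ := hx
  set φ : K →L[ℂ] ℂ :=
    (innerSL ℂ k).comp (K.subtypeL.comp (M'.subtypeL.comp P)) with hφdef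
  set v' : K := (InnerProductSpace.toDual ℂ K).symm φ with hv'def
  have hv' : ∀ c : K, inner ℂ v' c = φ c := fun c =>
    InnerProductSpace.toDual_symm_apply
  set v : H := (v' : H) with hvdef
  have hvN : v ∈ Nᗮ := by
    rw [Submodule.mem_orthogonal']
    intro n hn
    have hnK : n ∈ K := (le_sup_right : N ≤ K) hn
    have hn' : (⟨n, hnK⟩ : K) ∈ N' := hn
    have := hv' ⟨n, hnK⟩
    rw [Submodule.coe_inner] at this
    have hP0 : P ⟨n, hnK⟩ = 0 := by
      have := Submodule.linearProjOfIsCompl_apply_right hcompl ⟨(⟨n, hnK⟩ : K), hn'⟩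
      simpa [hPdef, Submodule.coe_continuous_linearProjOfClosedCompl'] using this
    simpa [hφdef, hP0] using this
  have hvM : k - v ∈ Mᗮ := by
    rw [Submodule.mem_orthogonal']
    intro m hm
    have hmK : m ∈ K := (le_sup_left : M ≤ K) hm
    have hm' : (⟨m, hmK⟩ : K) ∈ M' := hm
    have hvm := hv' ⟨m, hmK⟩
    rw [Submodule.coe_inner] at hvm
    have hP1 : P ⟨m, hmK⟩ = ⟨⟨m, hmK⟩, hm'⟩ := by
      have := Submodule.linearProjOfIsCompl_apply_left hcompl ⟨(⟨m, hmK⟩ : K), hm'⟩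
      simpa [hPdef, Submodule.coe_continuous_linearProjOfClosedCompl'] using this
    have hvm' : inner ℂ v m = inner ℂ k m := by
      simpa [hφdef, hP1] using hvm
    rw [inner_sub_left, hvm', sub_self]
  have hwM : w ∈ Mᗮ := (Submodule.orthogonal_le (le_sup_left : M ≤ K)) hw
  have : k + w = ((k - v) + w) + v := by abel
  rw [this]
  exact Submodule.add_mem _
    (Submodule.mem_sup_left (Submodule.add_mem _ hvM hwM)) (Submodule.mem_sup_right hvN)

/-- If the closures of `R(A*)` and `R(B*)` intersect trivially and their (direct) sum is
closed, then `N(A) + N(B) = H`; and if `N(A) + N(B) = H`, then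
`R(A+B) = R(A) + R(B)`. -/
theorem closed_adjoint_sum_imp_ker_sum_imp_range_additivity (A B : H →L[ℂ] H) :
    (((LinearMap.range ((adjoint A : H →L[ℂ] H) : H →ₗ[ℂ] H)).topologicalClosure ⊓
        (LinearMap.range ((adjoint B : H →L[ℂ] H) : H →ₗ[ℂ] H)).topologicalClosure = ⊥ ∧
      IsClosed (((LinearMap.range ((adjoint A : H →L[ℂ] H) : H →ₗ[ℂ] H)).topologicalClosure ⊔
        (LinearMap.range ((adjoint B : H →L[ℂ] H) : H →ₗ[ℂ] H)).topologicalClosure : Submodule ℂ H) : Set H)) →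
      LinearMap.ker (A : H →ₗ[ℂ] H) ⊔ LinearMap.ker (B : H →ₗ[ℂ] H) = ⊤) ∧
    (LinearMap.ker (A : H →ₗ[ℂ] H) ⊔ LinearMap.ker (B : H →ₗ[ℂ] H) = ⊤ →
      LinearMap.range ((A + B : H →L[ℂ] H) : H →ₗ[ℂ] H) = LinearMap.range (A : H →ₗ[ℂ] H) ⊔ LinearMap.range (B : H →ₗ[ℂ] H)) := by
  constructor
  · rintro ⟨h1, h2⟩
    have hA : LinearMap.ker (A : H →ₗ[ℂ] H) = ((LinearMap.range ((adjoint A : H →L[ℂ] H) : H →ₗ[ℂ] H)).topologicalClosure)ᗮ := by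
      rw [← (LinearMap.range ((adjoint A : H →L[ℂ] H) : H →ₗ[ℂ] H)).orthogonal_orthogonal_eq_closure,
        Submodule.triorthogonal_eq_orthogonal, ker_eq_orthogonal_range_adjoint]
    have hB : LinearMap.ker (B : H →ₗ[ℂ] H) = ((LinearMap.range ((adjoint B : H →L[ℂ] H) : H →ₗ[ℂ] H)).topologicalClosure)ᗮ := by
      rw [← (LinearMap.range ((adjoint B : H →L[ℂ] H) : H →ₗ[ℂ] H)).orthogonal_orthogonal_eq_closure,
        Submodule.triorthogonal_eq_orthogonal, ker_eq_orthogonal_range_adjoint]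
    rw [hA, hB]
    exact orth_sum_top _ _ (Submodule.isClosed_topologicalClosure _)
      (Submodule.isClosed_topologicalClosure _) h1 h2
  · intro h
    apply le_antisymm
    · rintro _ ⟨x, rfl⟩
      rw [ContinuousLinearMap.coe_add, LinearMap.add_apply]
      exact Submodule.add_mem _ (Submodule.mem_sup_left ⟨x, rfl⟩)
        (Submodule.mem_sup_right ⟨x, rfl⟩)
    · rintro z hz
      rw [Submodule.mem_sup] at hz
      obtain ⟨_, ⟨x, rfl⟩, _, ⟨y, rfl⟩, rfl⟩ := hz
      have hxy : x - y ∈ LinearMap.ker (A : H →ₗ[ℂ] H) ⊔ LinearMap.ker (B : H →ₗ[ℂ] H) := by rw [h]; trivial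
      rw [Submodule.mem_sup] at hxy
      obtain ⟨u, hu, w, hw, huw⟩ := hxy
      rw [LinearMap.mem_ker] at hu hw
      refine ⟨x - u, ?_⟩
      have hxu : x - u = y + w := by
        have : w = x - y - u := by rw [← huw]; abel
        rw [this]; abel
      rw [ContinuousLinearMap.coe_add, LinearMap.add_apply]
      nth_rw 2 [hxu]
      rw [map_sub, hu, sub_zero, map_add, hw, add_zero]
end

section
/- Crimmins' identity: for bounded linear operators A, B from H to K, R(A) + R(B) = R((AA* + BB*)^{1/2}). -/
open ContinuousLinearMap

variable {H K : Type*} [NormedAddCommGroup H] [InnerProductSpace ℂ H] [CompleteSpace H]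
  [NormedAddCommGroup K] [InnerProductSpace ℂ K] [CompleteSpace K]

/-- Douglas-type factorization. -/
theorem douglas {E F G : Type*} [NormedAddCommGroup E] [InnerProductSpace ℂ E]
    [NormedAddCommGroup F] [InnerProductSpace ℂ F] [CompleteSpace F]
    [NormedAddCommGroup G] [InnerProductSpace ℂ G] [CompleteSpace G]
    (S : E →L[ℂ] F) (R : E →L[ℂ] G) (h : ∀ x, ‖S x‖ ≤ ‖R x‖) :
    ∃ V : G →L[ℂ] F, V ∘L R = S := by
  have hker : LinearMap.ker (R : E →ₗ[ℂ] G) ≤ LinearMap.ker (S : E →ₗ[ℂ] F) := by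
    intro x hx
    have h0 : R x = 0 := hx
    have hx2 := h x
    rw [h0, norm_zero] at hx2
    exact norm_le_zero_iff.mp hx2
  set M : Submodule ℂ G := LinearMap.range (R : E →ₗ[ℂ] G) with hM
  let g : (E ⧸ LinearMap.ker (R : E →ₗ[ℂ] G)) →ₗ[ℂ] F :=
    (LinearMap.ker (R : E →ₗ[ℂ] G)).liftQ (S : E →ₗ[ℂ] F) hker
  let f₀ : M →ₗ[ℂ] F := g ∘ₗ (LinearMap.quotKerEquivRange (R : E →ₗ[ℂ] G)).symm.toLinearMap
  have hf₀ : ∀ x : E, ∀ hx : (R : E →ₗ[ℂ] G) x ∈ M, f₀ ⟨(R : E →ₗ[ℂ] G) x, hx⟩ = S x := by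
    intro x hx
    show g ((LinearMap.quotKerEquivRange (R : E →ₗ[ℂ] G)).symm ⟨(R : E →ₗ[ℂ] G) x, hx⟩) = S x
    rw [LinearMap.quotKerEquivRange_symm_apply_image]
    simp [g, Submodule.liftQ_apply]
  have hbound : ∀ m : M, ‖f₀ m‖ ≤ 1 * ‖m‖ := by
    rintro ⟨-, x, rfl⟩
    rw [hf₀ x (LinearMap.mem_range_self _ x), one_mul]
    exact h x
  let f : M →L[ℂ] F := LinearMap.mkContinuous f₀ 1 hbound
  set N : Submodule ℂ G := M.topologicalClosure with hN
  haveI : CompleteSpace N := M.isClosed_topologicalClosure.completeSpace_coe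
  let eiso : M →ₗᵢ[ℂ] N :=
    { toLinearMap := Submodule.inclusion M.le_topologicalClosure
      norm_map' := fun x => rfl }
  let e : M →L[ℂ] N := eiso.toContinuousLinearMap
  have h_dense : DenseRange e := by
    intro x
    rw [closure_subtype]
    have himg : Subtype.val '' Set.range e = (M : Set G) := by
      ext y
      constructor
      · rintro ⟨z, ⟨m, rfl⟩, rfl⟩
        exact m.2
      · intro hy
        exact ⟨e ⟨y, hy⟩, ⟨⟨y, hy⟩, rfl⟩, rfl⟩
    rw [himg]
    have hx2 : (x : G) ∈ (N : Set G) := x.2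
    have : (N : Set G) = closure (M : Set G) := Submodule.topologicalClosure_coe M
    rw [this] at hx2
    exact hx2
  have h_e : IsUniformInducing e := eiso.isometry.isUniformInducing
  let fe : N →L[ℂ] F := f.extend e
  refine ⟨fe ∘L (N.orthogonalProjectionOnto : G →L[ℂ] N), ?_⟩
  ext x
  have hmem : R x ∈ N := M.le_topologicalClosure (LinearMap.mem_range_self _ x)
  have hproj : N.orthogonalProjectionOnto (R x) = ⟨R x, hmem⟩ :=
    Submodule.orthogonalProjectionOnto_mem_subspace_eq_self (⟨R x, hmem⟩ : N)
  simp only [ContinuousLinearMap.comp_apply, ContinuousLinearMap.coe_comp', Function.comp_apply,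
    hproj]
  have hEe : (⟨R x, hmem⟩ : N) = e ⟨(R : E →ₗ[ℂ] G) x, LinearMap.mem_range_self _ x⟩ := rfl
  rw [hEe, ContinuousLinearMap.extend_eq _ h_dense h_e]
  exact hf₀ x _


local notation "⟪" x ", " y "⟫" => @inner ℂ _ _ x y

/-- Crimmins' identity: `R(A) + R(B) = R((A A* + B B*)^{1/2})`, where `C` is the
positive square root of `A A* + B B*`. -/
theorem crimmins (A B : H →L[ℂ] K) (C : K →L[ℂ] K)
    (hC : C.IsPositive) (hC2 : C ∘L C = A ∘L adjoint A + B ∘L adjoint B) :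
    LinearMap.range (A : H →ₗ[ℂ] K) ⊔ LinearMap.range (B : H →ₗ[ℂ] K) = LinearMap.range (C : K →ₗ[ℂ] K) := by
  have hCsa : adjoint C = C := hC.isSelfAdjoint.adjoint_eq
  -- the key norm identity
  have key : ∀ y : K, ‖adjoint A y‖ ^ 2 + ‖adjoint B y‖ ^ 2 = ‖C y‖ ^ 2 := by
    intro y
    have h1 : ⟪C (C y), y⟫ = ⟪C y, C y⟫ := by
      nth_rewrite 1 [← hCsa]
      exact ContinuousLinearMap.adjoint_inner_left C y (C y)
    have h2 : C (C y) = A (adjoint A y) + B (adjoint B y) := by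
      have := congrArg (fun T : K →L[ℂ] K => T y) hC2
      simpa using this
    have h3 : ⟪A (adjoint A y) + B (adjoint B y), y⟫
        = ⟪adjoint A y, adjoint A y⟫ + ⟪adjoint B y, adjoint B y⟫ := by
      rw [inner_add_left, ← ContinuousLinearMap.adjoint_inner_right A,
        ← ContinuousLinearMap.adjoint_inner_right B]
    have h4 : ⟪adjoint A y, adjoint A y⟫ + ⟪adjoint B y, adjoint B y⟫ = ⟪C y, C y⟫ := by
      rw [← h3, ← h2, h1]
    rw [inner_self_eq_norm_sq_to_K, inner_self_eq_norm_sq_to_K,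
      inner_self_eq_norm_sq_to_K] at h4
    exact_mod_cast h4
  -- range A and range B are contained in range C
  have hsub : ∀ D : H →L[ℂ] K, (∀ y, ‖adjoint D y‖ ≤ ‖C y‖) →
      LinearMap.range (D : H →ₗ[ℂ] K) ≤ LinearMap.range (C : K →ₗ[ℂ] K) := by
    intro D hD
    obtain ⟨V, hV⟩ := douglas (adjoint D) C hD
    have hadj : C ∘L adjoint V = D := by
      have := congrArg ContinuousLinearMap.adjoint hV
      rwa [ContinuousLinearMap.adjoint_comp, hCsa, ContinuousLinearMap.adjoint_adjoint] at this
    rintro _ ⟨x, rfl⟩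
    refine ⟨adjoint V x, ?_⟩
    have := congrArg (fun T : H →L[ℂ] K => T x) hadj
    simpa using this
  have hA : LinearMap.range (A : H →ₗ[ℂ] K) ≤ LinearMap.range (C : K →ₗ[ℂ] K) := by
    refine hsub A fun y => ?_
    have h1 : ‖adjoint A y‖ ^ 2 ≤ ‖C y‖ ^ 2 := by
      rw [← key y]; exact le_add_of_nonneg_right (by positivity)
    have h2 := Real.sqrt_le_sqrt h1
    rwa [Real.sqrt_sq (norm_nonneg _), Real.sqrt_sq (norm_nonneg _)] at h2
  have hB : LinearMap.range (B : H →ₗ[ℂ] K) ≤ LinearMap.range (C : K →ₗ[ℂ] K) := by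
    refine hsub B fun y => ?_
    have h1 : ‖adjoint B y‖ ^ 2 ≤ ‖C y‖ ^ 2 := by
      rw [← key y]; exact le_add_of_nonneg_left (by positivity)
    have h2 := Real.sqrt_le_sqrt h1
    rwa [Real.sqrt_sq (norm_nonneg _), Real.sqrt_sq (norm_nonneg _)] at h2
  -- reverse inclusion via Douglas applied to `P y = (A* y, B* y)`
  let P : K →L[ℂ] WithLp 2 (H × H) :=
    ((WithLp.prodContinuousLinearEquiv 2 ℂ H H).symm : (H × H) →L[ℂ] WithLp 2 (H × H)) ∘L
      ((adjoint A).prod (adjoint B))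
  have hPnorm : ∀ y, ‖C y‖ ≤ ‖P y‖ := by
    intro y
    have h1 : ‖P y‖ ^ 2 = ‖adjoint A y‖ ^ 2 + ‖adjoint B y‖ ^ 2 := by
      rw [WithLp.prod_norm_sq_eq_of_L2]
      rfl
    have h2 : ‖C y‖ ^ 2 ≤ ‖P y‖ ^ 2 := by rw [h1, key]
    have h3 := Real.sqrt_le_sqrt h2
    rwa [Real.sqrt_sq (norm_nonneg _), Real.sqrt_sq (norm_nonneg _)] at h3
  obtain ⟨W, hW⟩ := douglas C P hPnorm
  let Q : WithLp 2 (H × H) →L[ℂ] K :=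
    (A.coprod B) ∘L
      ((WithLp.prodContinuousLinearEquiv 2 ℂ H H) : WithLp 2 (H × H) →L[ℂ] (H × H))
  have hQ : Q = ContinuousLinearMap.adjoint P := by
    rw [ContinuousLinearMap.eq_adjoint_iff]
    intro z y
    have hL : Q z = A z.fst + B z.snd := rfl
    have hR : ⟪z, P y⟫ = ⟪z.fst, adjoint A y⟫ + ⟪z.snd, adjoint B y⟫ := rfl
    rw [hL, hR, inner_add_left, ← ContinuousLinearMap.adjoint_inner_right A,
      ← ContinuousLinearMap.adjoint_inner_right B]
  have hCQ : C = Q ∘L adjoint W := by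
    have := congrArg ContinuousLinearMap.adjoint hW
    rw [ContinuousLinearMap.adjoint_comp, hCsa, ← hQ] at this
    exact this.symm
  have hrev : LinearMap.range (C : K →ₗ[ℂ] K) ≤ LinearMap.range (A : H →ₗ[ℂ] K) ⊔ LinearMap.range (B : H →ₗ[ℂ] K) := by
    rintro _ ⟨y, rfl⟩
    have hy : C y = A (adjoint W y).fst + B (adjoint W y).snd := by
      have := congrArg (fun T : K →L[ℂ] K => T y) hCQ
      exact this
    rw [show (C : K →ₗ[ℂ] K) y = C y from rfl, hy]
    exact Submodule.add_mem_sup (LinearMap.mem_range_self _ _) (LinearMap.mem_range_self _ _)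
  exact le_antisymm (sup_le hA hB) hrev
end

section
/- For positive bounded operators A, B on a Hilbert space H, R(A+B) = R(A) + R(B) if and only if (A+B)^2 and A^2 + B^2 are Thompson equivalent, i.e., there exist positive reals r, s with r(A+B)^2 ≤ A^2 + B^2 ≤ s(A+B)^2. -/
set_option maxHeartbeats 1000000


open ContinuousLinearMap RCLike Filter Topology

section Douglas

variable {E F G : Type*} [NormedAddCommGroup E] [InnerProductSpace ℂ E] [CompleteSpace E]
  [NormedAddCommGroup F] [InnerProductSpace ℂ F] [CompleteSpace F]
  [NormedAddCommGroup G] [InnerProductSpace ℂ G] [CompleteSpace G]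

/-- A vector `y` is in the range of `S` provided the functional `z ↦ ⟪y, z⟫` is dominated by
`z ↦ ‖S† z‖`. -/
lemma aux_mem_range_of_inner_bound (S : E →L[ℂ] F) (y : F) (c : ℝ)
    (hb : ∀ z : F, ‖(inner ℂ y z : ℂ)‖ ≤ c * ‖S.adjoint z‖) :
    y ∈ LinearMap.range (S : E →ₗ[ℂ] F) := by
  classical
  set Sa : F →ₗ[ℂ] E := (S.adjoint : F →ₗ[ℂ] E) with hSadef
  have hSa : ∀ z, Sa z = S.adjoint z := fun _ => rfl
  set h : F →ₗ[ℂ] ℂ := (innerSL ℂ y).toLinearMap with hhdef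
  have hh : ∀ z, h z = (inner ℂ y z : ℂ) := fun _ => rfl
  have hker : LinearMap.ker Sa ≤ LinearMap.ker h := by
    intro z hz
    rw [LinearMap.mem_ker] at hz ⊢
    have := hb z
    rw [← hSa, hz] at this
    simpa [hh] using norm_le_zero_iff.mp (by simpa using this)
  set f₁ : (F ⧸ LinearMap.ker Sa) →ₗ[ℂ] ℂ := (LinearMap.ker Sa).liftQ h hker with hf₁def
  set e := Sa.quotKerEquivRange with hedef
  set f₀ : LinearMap.range Sa →ₗ[ℂ] ℂ := f₁.comp (e.symm : LinearMap.range Sa →ₗ[ℂ] _) with hf₀def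
  have hf₀ : ∀ (z : F) (hz : Sa z ∈ LinearMap.range Sa), f₀ ⟨Sa z, hz⟩ = h z := by
    intro z hz
    have h1 : e (Submodule.Quotient.mk z) = ⟨Sa z, hz⟩ :=
      Subtype.ext (Sa.quotKerEquivRange_apply_mk z)
    calc f₀ ⟨Sa z, hz⟩ = f₁ (e.symm (e (Submodule.Quotient.mk z))) := by rw [h1]; rfl
      _ = f₁ (Submodule.Quotient.mk z) := by rw [e.symm_apply_apply]
      _ = h z := Submodule.liftQ_apply _ _ _
  have hbd : ∀ w : LinearMap.range Sa, ‖f₀ w‖ ≤ c * ‖w‖ := by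
    rintro ⟨w, hw⟩
    have hz := hw
    obtain ⟨z, rfl⟩ := hz
    rw [hf₀]
    simpa [hh, hSa] using hb z
  set F₀ := f₀.mkContinuous c hbd with hF₀def
  obtain ⟨g, hg, -⟩ := exists_extension_norm_eq (LinearMap.range Sa) F₀
  set u := (InnerProductSpace.toDual ℂ E).symm g with hudef
  refine ⟨u, ?_⟩
  refine (ext_inner_right ℂ fun v => ?_)
  have m : Sa v ∈ LinearMap.range Sa := ⟨v, rfl⟩
  calc (inner ℂ (S u) v : ℂ) = inner ℂ u (S.adjoint v) := (adjoint_inner_right S u v).symm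
    _ = g (S.adjoint v) := InnerProductSpace.toDual_symm_apply
    _ = F₀ ⟨Sa v, m⟩ := hg ⟨Sa v, m⟩
    _ = f₀ ⟨Sa v, m⟩ := rfl
    _ = h v := hf₀ v m
    _ = inner ℂ y v := hh v

/-- Any element of the range of `S` gives rise to such a bound. -/
lemma aux_inner_bound_of_mem_range (S : E →L[ℂ] F) {y : F} (hy : y ∈ LinearMap.range (S : E →ₗ[ℂ] F)) :
    ∃ c : ℝ, 0 ≤ c ∧ ∀ z : F, ‖(inner ℂ y z : ℂ)‖ ≤ c * ‖S.adjoint z‖ := by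
  obtain ⟨u, rfl⟩ := hy
  refine ⟨‖u‖, norm_nonneg _, fun z => ?_⟩
  rw [ContinuousLinearMap.coe_coe, ← adjoint_inner_right]
  exact norm_inner_le_norm _ _

/-- Easy direction of Douglas' lemma: a pointwise domination of adjoints gives a range
inclusion. -/
lemma aux_range_le_of_adjoint_bound (T : E →L[ℂ] F) (S : G →L[ℂ] F) (c : ℝ)
    (h : ∀ z : F, ‖T.adjoint z‖ ≤ c * ‖S.adjoint z‖) :
    LinearMap.range (T : E →ₗ[ℂ] F) ≤ LinearMap.range (S : G →ₗ[ℂ] F) := by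
  rintro y hy
  obtain ⟨c', hc', hb⟩ := aux_inner_bound_of_mem_range T hy
  refine aux_mem_range_of_inner_bound S y (c' * c) fun z => ?_
  calc ‖(inner ℂ y z : ℂ)‖ ≤ c' * ‖T.adjoint z‖ := hb z
    _ ≤ c' * (c * ‖S.adjoint z‖) := mul_le_mul_of_nonneg_left (h z) hc'
    _ = c' * c * ‖S.adjoint z‖ := by ring

/-- Hard direction of Douglas' lemma: a range inclusion yields a uniform domination of the
adjoints, via the closed graph theorem. -/
lemma aux_adjoint_bound_of_range_le (T : E →L[ℂ] F) (S : G →L[ℂ] F)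
    (h : LinearMap.range (T : E →ₗ[ℂ] F) ≤ LinearMap.range (S : G →ₗ[ℂ] F)) :
    ∃ c : ℝ, 0 ≤ c ∧ ∀ x : F, ‖T.adjoint x‖ ≤ c * ‖S.adjoint x‖ := by
  classical
  set N : Submodule ℂ G := LinearMap.ker (S : G →ₗ[ℂ] F) with hN
  haveI : CompleteSpace N := (isClosed_ker S).completeSpace_coe
  have hchoice : ∀ x : E, ∃ u : G, S u = T x := fun x => h (LinearMap.mem_range_self (T : E →ₗ[ℂ] F) x)
  choose u hu using hchoice
  set C0 : E → G := fun x => u x - (N.orthogonalProjectionOnto (u x) : G) with hC0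
  have hmem : ∀ x, C0 x ∈ Nᗮ := fun x => Submodule.sub_starProjection_mem_orthogonal (K := N) _
  have hproj : ∀ x, S ((N.orthogonalProjectionOnto (u x) : G)) = 0 := by
    intro x
    exact LinearMap.mem_ker.mp (N.orthogonalProjectionOnto (u x)).2
  have hS0 : ∀ x, S (C0 x) = T x := by
    intro x
    simp only [hC0, map_sub, hproj, hu, sub_zero]
  have huniq : ∀ w ∈ Nᗮ, S w = 0 → w = 0 := by
    intro w hw h0
    have hw' : w ∈ N ⊓ Nᗮ := ⟨LinearMap.mem_ker.mpr h0, hw⟩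
    simpa using N.orthogonal_disjoint.le_bot hw'
  set C : E →ₗ[ℂ] G :=
    { toFun := C0
      map_add' := fun x y => by
        have h1 : C0 (x + y) - (C0 x + C0 y) ∈ Nᗮ :=
          Submodule.sub_mem _ (hmem _) (Submodule.add_mem _ (hmem _) (hmem _))
        have h2 : S (C0 (x + y) - (C0 x + C0 y)) = 0 := by
          simp [map_sub, map_add, hS0]
        have := huniq _ h1 h2
        rwa [sub_eq_zero] at this
      map_smul' := fun a x => by
        have h1 : C0 (a • x) - a • C0 x ∈ Nᗮ :=
          Submodule.sub_mem _ (hmem _) (Submodule.smul_mem _ _ (hmem _))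
        have h2 : S (C0 (a • x) - a • C0 x) = 0 := by
          simp [map_sub, map_smul, hS0]
        have := huniq _ h1 h2
        rw [sub_eq_zero] at this
        simpa using this } with hCdef
  have hCapp : ∀ x, C x = C0 x := fun _ => rfl
  have hseq : ∀ (un : ℕ → E) (x y), Tendsto un atTop (𝓝 x) →
      Tendsto (⇑C ∘ un) atTop (𝓝 y) → y = C x := by
    intro un x y hx hy
    have hymem : y ∈ Nᗮ := by
      refine N.isClosed_orthogonal.mem_of_tendsto hy (Eventually.of_forall fun n => ?_)
      exact hmem (un n)
    have h1 : Tendsto (fun n => S (C (un n))) atTop (𝓝 (S y)) :=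
      (S.continuous.tendsto y).comp hy
    have h2 : Tendsto (fun n => T (un n)) atTop (𝓝 (T x)) :=
      (T.continuous.tendsto x).comp hx
    have h3 : S y = T x := by
      refine tendsto_nhds_unique ?_ h2
      simpa only [hCapp, hS0] using h1
    have h4 : y - C x ∈ Nᗮ := Submodule.sub_mem _ hymem (hmem x)
    have h5 : S (y - C x) = 0 := by
      rw [map_sub, h3, hCapp, hS0, sub_self]
    have := huniq _ h4 h5
    rwa [sub_eq_zero] at this
  set Cc : E →L[ℂ] G := ContinuousLinearMap.ofSeqClosedGraph hseq with hCc
  have hcomp : S ∘L Cc = T := by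
    ext x
    have : Cc x = C0 x := rfl
    simp [ContinuousLinearMap.comp_apply, this, hS0]
  have hadj : T.adjoint = Cc.adjoint ∘L S.adjoint := by
    rw [← hcomp, adjoint_comp]
  refine ⟨‖Cc.adjoint‖, norm_nonneg _, fun x => ?_⟩
  rw [hadj]
  exact (Cc.adjoint).le_opNorm _

end Douglas

variable {H : Type*} [NormedAddCommGroup H] [InnerProductSpace ℂ H] [CompleteSpace H]

/-- For positive operators `A, B`, range additivity `R(A+B) = R(A) + R(B)` holds iff
`(A+B)²` and `A² + B²` are Thompson equivalent: there are `r, s > 0` with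
`r (A+B)² ≤ A² + B² ≤ s (A+B)²` in the Löwner order. -/
theorem range_additivity_iff_thompson (A B : H →L[ℂ] H)
    (hA : A.IsPositive) (hB : B.IsPositive) :
    LinearMap.range ((A + B : H →L[ℂ] H) : H →ₗ[ℂ] H) = LinearMap.range (A : H →ₗ[ℂ] H) ⊔ LinearMap.range (B : H →ₗ[ℂ] H) ↔
      ∃ r s : ℝ, 0 < r ∧ 0 < s ∧
        ((A ∘L A + B ∘L B) - r • ((A + B) ∘L (A + B))).IsPositive ∧
        (s • ((A + B) ∘L (A + B)) - (A ∘L A + B ∘L B)).IsPositive := by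
  have hAsa : adjoint A = A := by rw [← star_eq_adjoint]; exact hA.isSelfAdjoint
  have hBsa : adjoint B = B := by rw [← star_eq_adjoint]; exact hB.isSelfAdjoint
  have hTsa : adjoint (A + B) = A + B := by rw [← star_eq_adjoint]; exact hA.isSelfAdjoint.add hB.isSelfAdjoint
  -- the operator S : H ×₂ H → H, (u, v) ↦ A u + B v
  set e : WithLp 2 (H × H) ≃L[ℂ] H × H := WithLp.prodContinuousLinearEquiv 2 ℂ H H with hedef
  set S : WithLp 2 (H × H) →L[ℂ] H := (A.coprod B).comp (e : WithLp 2 (H × H) →L[ℂ] H × H)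
    with hSdef
  have hSapp : ∀ w : WithLp 2 (H × H), S w = A w.fst + B w.snd := fun _ => rfl
  set Sa : H →L[ℂ] WithLp 2 (H × H) :=
    (e.symm.toContinuousLinearMap).comp (A.prod B) with hSadef
  have hSaapp : ∀ z : H, ((Sa z).fst = A z ∧ (Sa z).snd = B z) := by
    intro z
    constructor
    · show (WithLp.toLp 2 (A z, B z)).fst = A z
      rw [WithLp.toLp_fst]
    · show (WithLp.toLp 2 (A z, B z)).snd = B z
      rw [WithLp.toLp_snd]
  have hadj : S.adjoint = Sa := by
    symm
    rw [eq_adjoint_iff]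
    intro x v
    rw [hSapp v, WithLp.prod_inner_apply, ← WithLp.fst.eq_1, ← WithLp.snd.eq_1, (hSaapp x).1, (hSaapp x).2, inner_add_right]
    congr 1
    · conv_lhs => rw [← hAsa]
      exact adjoint_inner_left A v.fst x
    · conv_lhs => rw [← hBsa]
      exact adjoint_inner_left B v.snd x
  have hSnorm : ∀ z : H, ‖S.adjoint z‖ ^ 2 = ‖A z‖ ^ 2 + ‖B z‖ ^ 2 := by
    intro z
    rw [hadj, WithLp.prod_norm_sq_eq_of_L2, (hSaapp z).1, (hSaapp z).2]
  have hrange : LinearMap.range (S : WithLp 2 (H × H) →ₗ[ℂ] H) = LinearMap.range (A : H →ₗ[ℂ] H) ⊔ LinearMap.range (B : H →ₗ[ℂ] H) := by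
    apply le_antisymm
    · rintro y ⟨w, rfl⟩
      rw [ContinuousLinearMap.coe_coe, hSapp]
      exact Submodule.add_mem_sup (LinearMap.mem_range_self (A : H →ₗ[ℂ] H) _) (LinearMap.mem_range_self (B : H →ₗ[ℂ] H) _)
    · rw [sup_le_iff]
      constructor
      · rintro y ⟨x, rfl⟩
        refine ⟨e.symm (x, 0), ?_⟩
        show A x + B 0 = A x
        simp
      · rintro y ⟨x, rfl⟩
        refine ⟨e.symm (0, x), ?_⟩
        show A 0 + B x = B x
        simp
  -- scalar expansions
  have key : ∀ (C : H →L[ℂ] H), adjoint C = C → ∀ x : H,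
      re (inner ℂ ((C ∘L C) x) x : ℂ) = ‖C x‖ ^ 2 := by
    intro C hC x
    rw [ContinuousLinearMap.comp_apply]
    conv_lhs => rw [show C (C x) = adjoint C (C x) by rw [hC]]
    rw [adjoint_inner_left]
    exact inner_self_eq_norm_sq _
  have expand : ∀ (t : ℝ) (x : H),
      re (inner ℂ (((t • ((A + B) ∘L (A + B))) - (A ∘L A + B ∘L B)) x) x : ℂ)
        = t * ‖(A + B) x‖ ^ 2 - (‖A x‖ ^ 2 + ‖B x‖ ^ 2) := by
    intro t x
    rw [ContinuousLinearMap.sub_apply, ContinuousLinearMap.add_apply,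
      ContinuousLinearMap.smul_apply, inner_sub_left, inner_add_left, map_sub, map_add,
      real_smul_eq_coe_smul (K := ℂ), inner_smul_left]
    simp only [conj_ofReal, ofReal_re, mul_re, ofReal_im, zero_mul, sub_zero]
    rw [key A hAsa, key B hBsa, key (A + B) hTsa]
  have expand' : ∀ (t : ℝ) (x : H),
      re (inner ℂ (((A ∘L A + B ∘L B) - t • ((A + B) ∘L (A + B))) x) x : ℂ)
        = (‖A x‖ ^ 2 + ‖B x‖ ^ 2) - t * ‖(A + B) x‖ ^ 2 := by
    intro t x
    have haux9 : (A ∘L A + B ∘L B) - t • ((A + B) ∘L (A + B))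
        = -((t • ((A + B) ∘L (A + B))) - (A ∘L A + B ∘L B)) := (neg_sub _ _).symm
    rw [haux9, ContinuousLinearMap.neg_apply, inner_neg_left, map_neg, expand]
    ring
  -- self-adjointness facts
  have hsaX : IsSelfAdjoint (A ∘L A + B ∘L B) := by
    have h1 : IsSelfAdjoint (A ∘L A) := by
      show star (A * A) = A * A
      rw [star_mul, hA.isSelfAdjoint.star_eq]
    have h2 : IsSelfAdjoint (B ∘L B) := by
      show star (B * B) = B * B
      rw [star_mul, hB.isSelfAdjoint.star_eq]
    exact h1.add h2
  have hsaY : ∀ t : ℝ, IsSelfAdjoint (t • ((A + B) ∘L (A + B))) := by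
    intro t
    have h0 : IsSelfAdjoint ((A + B) ∘L (A + B)) := by
      show star ((A + B) * (A + B)) = (A + B) * (A + B)
      rw [star_mul, (hA.isSelfAdjoint.add hB.isSelfAdjoint).star_eq]
    have h0adj : adjoint ((A + B) ∘L (A + B)) = (A + B) ∘L (A + B) := by
      rw [← star_eq_adjoint]; exact h0
    rw [IsSelfAdjoint, star_eq_adjoint]
    symm
    rw [eq_adjoint_iff]
    intro x y
    rw [ContinuousLinearMap.smul_apply, ContinuousLinearMap.smul_apply,
      real_smul_eq_coe_smul (K := ℂ) (r := t), real_smul_eq_coe_smul (K := ℂ) (r := t),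
      inner_smul_left, inner_smul_right, conj_ofReal]
    congr 1
    conv_lhs => rw [show ((A + B) ∘L (A + B)) x = adjoint ((A + B) ∘L (A + B)) x by rw [h0adj]]
    exact adjoint_inner_left _ y x
  constructor
  · -- range additivity implies Thompson equivalence
    intro hrg
    have hle : LinearMap.range (S : WithLp 2 (H × H) →ₗ[ℂ] H) ≤ LinearMap.range ((A + B : H →L[ℂ] H) : H →ₗ[ℂ] H) := by
      rw [hrange, ← hrg]
    obtain ⟨c, hc0, hc⟩ := aux_adjoint_bound_of_range_le S (A + B) hle
    refine ⟨1 / 2, c ^ 2 + 1, by norm_num, by positivity, ?_, ?_⟩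
    · refine ⟨(hsaX.sub (hsaY (1 / 2))).isSymmetric, fun x => ?_⟩
      rw [reApplyInnerSelf_apply, expand']
      have h1 : ‖(A + B) x‖ ≤ ‖A x‖ + ‖B x‖ := by
        rw [ContinuousLinearMap.add_apply]; exact norm_add_le _ _
      nlinarith [h1, sq_nonneg (‖A x‖ - ‖B x‖), norm_nonneg (A x), norm_nonneg (B x),
        norm_nonneg ((A + B) x)]
    · refine ⟨((hsaY (c ^ 2 + 1)).sub hsaX).isSymmetric, fun x => ?_⟩
      rw [reApplyInnerSelf_apply, expand]
      have h1 : ‖S.adjoint x‖ ≤ c * ‖(A + B).adjoint x‖ := hc x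
      have h2 : ‖A x‖ ^ 2 + ‖B x‖ ^ 2 ≤ c ^ 2 * ‖(A + B) x‖ ^ 2 := by
        have h3 := hSnorm x
        have h4 : ‖(A + B).adjoint x‖ = ‖(A + B) x‖ := by rw [hTsa]
        rw [h4] at h1
        nlinarith [norm_nonneg (S.adjoint x), norm_nonneg ((A + B) x)]
      nlinarith [norm_nonneg ((A + B) x)]
  · -- Thompson equivalence implies range additivity
    rintro ⟨r, s, hr, hs, h1, h2⟩
    have hsq : ∀ z : H, ‖A z‖ ^ 2 + ‖B z‖ ^ 2 ≤ s * ‖(A + B) z‖ ^ 2 := by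
      intro z
      have := h2.2 z
      rw [reApplyInnerSelf_apply, expand] at this
      linarith
    have hbound1 : ∀ z : H, ‖S.adjoint z‖ ≤ Real.sqrt s * ‖(A + B).adjoint z‖ := by
      intro z
      rw [hTsa]
      have h3 : ‖S.adjoint z‖ = Real.sqrt (‖A z‖ ^ 2 + ‖B z‖ ^ 2) := by
        rw [← hSnorm z, Real.sqrt_sq (norm_nonneg _)]
      rw [h3]
      calc Real.sqrt (‖A z‖ ^ 2 + ‖B z‖ ^ 2) ≤ Real.sqrt (s * ‖(A + B) z‖ ^ 2) :=
            Real.sqrt_le_sqrt (hsq z)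
        _ = Real.sqrt s * ‖(A + B) z‖ := by
            rw [Real.sqrt_mul hs.le, Real.sqrt_sq (norm_nonneg _)]
    have hbound2 : ∀ z : H, ‖(A + B).adjoint z‖ ≤ Real.sqrt 2 * ‖S.adjoint z‖ := by
      intro z
      rw [hTsa]
      have h3 : ‖(A + B) z‖ ^ 2 ≤ 2 * (‖A z‖ ^ 2 + ‖B z‖ ^ 2) := by
        have h4 : ‖(A + B) z‖ ≤ ‖A z‖ + ‖B z‖ := by
          rw [ContinuousLinearMap.add_apply]; exact norm_add_le _ _
        nlinarith [h4, sq_nonneg (‖A z‖ - ‖B z‖), norm_nonneg (A z), norm_nonneg (B z),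
          norm_nonneg ((A + B) z)]
      have h5 : ‖(A + B) z‖ = Real.sqrt (‖(A + B) z‖ ^ 2) :=
        (Real.sqrt_sq (norm_nonneg _)).symm
      rw [h5]
      calc Real.sqrt (‖(A + B) z‖ ^ 2) ≤ Real.sqrt (2 * (‖A z‖ ^ 2 + ‖B z‖ ^ 2)) :=
            Real.sqrt_le_sqrt h3
        _ = Real.sqrt 2 * ‖S.adjoint z‖ := by
            rw [Real.sqrt_mul (by norm_num), ← hSnorm z, Real.sqrt_sq (norm_nonneg _)]
    apply le_antisymm
    · rw [← hrange]
      exact aux_range_le_of_adjoint_bound (A + B) S (Real.sqrt 2) hbound2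
    · rw [← hrange]
      exact aux_range_le_of_adjoint_bound S (A + B) (Real.sqrt s) hbound1
end

section
/- Let A be a positive bounded operator on a Hilbert space H and S a closed subspace. The shorted operator [S]A, defined as the maximum in the Löwner order of {X ∈ L(H)^+ : X ≤ A and R(X) ⊆ S}, exists and equals A^{1/2} P_M A^{1/2}, where M = (A^{1/2})^{-1}(S) and P_M is the orthogonal projection onto M. -/
open ContinuousLinearMap

/-- `P` is the orthogonal projection onto the closed subspace `S`: a selfadjoint
idempotent with range `S`. -/
def IsOrthoProj {E : Type*} [NormedAddCommGroup E] [InnerProductSpace ℂ E] [CompleteSpace E]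
    (P : E →L[ℂ] E) (S : Submodule ℂ E) : Prop :=
  IsIdempotentElem P ∧ IsSelfAdjoint P ∧ LinearMap.range (P : E →ₗ[ℂ] E) = S

variable {H : Type*} [NormedAddCommGroup H] [InnerProductSpace ℂ H] [CompleteSpace H]

open RCLike

local notation "⟪" x ", " y "⟫" => @inner ℂ _ _ x y

private lemma proj_inner_eq (P : H →L[ℂ] H) (h1 : P * P = P) (h2 : IsSelfAdjoint P) (u : H) :
    ⟪P u, u⟫ = ⟪P u, P u⟫ := by
  calc ⟪P u, u⟫ = ⟪P (P u), u⟫ := by rw [show P (P u) = (P * P) u from rfl, h1]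
    _ = ⟪(ContinuousLinearMap.adjoint P) (P u), u⟫ := by rw [h2.adjoint_eq]
    _ = ⟪P u, P u⟫ := adjoint_inner_left P u (P u)

lemma proj_re_inner_eq (P : H →L[ℂ] H) (h1 : P * P = P) (h2 : IsSelfAdjoint P) (u : H) :
    re ⟪P u, u⟫ = ‖P u‖ ^ 2 := by
  rw [proj_inner_eq P h1 h2 u, inner_self_eq_norm_sq]

lemma proj_isPositive (P : H →L[ℂ] H) (h1 : P * P = P) (h2 : IsSelfAdjoint P) :
    P.IsPositive := by
  refine ⟨h2.isSymmetric, fun u => ?_⟩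
  rw [reApplyInnerSelf, proj_re_inner_eq P h1 h2 u]
  positivity


/-- Krein: the set `{X ∈ L(H)⁺ : X ≤ A, R(X) ⊆ S}` has a Löwner-maximum, namely
`A^{1/2} P_M A^{1/2}` where `M = (A^{1/2})⁻¹(S)`.  Here `sA` is the positive square
root of `A` and `PM` the orthogonal projection onto `M`. -/
theorem krein_shorted_exists (A sA : H →L[ℂ] H) (hA : A.IsPositive)
    (hsA : sA.IsPositive) (hsA2 : sA ∘L sA = A)
    (S : Submodule ℂ H) (hS : IsClosed (S : Set H))
    (PM : H →L[ℂ] H) (hPM : IsOrthoProj PM (Submodule.comap (sA : H →ₗ[ℂ] H) S)) :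
    (sA ∘L PM ∘L sA).IsPositive ∧ (A - sA ∘L PM ∘L sA).IsPositive ∧
      LinearMap.range ((sA ∘L PM ∘L sA : H →L[ℂ] H) : H →ₗ[ℂ] H) ≤ S ∧
      ∀ X : H →L[ℂ] H, X.IsPositive → (A - X).IsPositive → LinearMap.range (X : H →ₗ[ℂ] H) ≤ S →
        ((sA ∘L PM ∘L sA) - X).IsPositive := by
  obtain ⟨hP1, hP2, hP3⟩ := hPM
  have hsAsa : IsSelfAdjoint sA := hsA.isSelfAdjoint
  have hPMpos : PM.IsPositive := proj_isPositive PM hP1 hP2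
  have hQ1 : (1 - PM) * (1 - PM) = 1 - PM := by
    have := hP1
    simp only [IsIdempotentElem] at this ⊢
    rw [mul_sub, sub_mul, sub_mul, this, one_mul, mul_one, one_mul]
    abel
  have hQ2 : IsSelfAdjoint (1 - PM) := (IsSelfAdjoint.one (H →L[ℂ] H)).sub hP2
  -- positivity of B
  have hBpos : (sA ∘L PM ∘L sA).IsPositive := by
    have := hPMpos.conj_adjoint sA
    rwa [hsAsa.adjoint_eq] at this
  refine ⟨hBpos, ?_, ?_, ?_⟩
  · have h := (proj_isPositive (1 - PM) hQ1 hQ2).conj_adjoint sA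
    rw [hsAsa.adjoint_eq] at h
    have : sA ∘L (1 - PM) ∘L sA = A - sA ∘L PM ∘L sA := by
      rw [← hsA2]; ext x; simp [sub_apply, comp_apply, map_sub]
    rwa [this] at h
  · rintro _ ⟨x, rfl⟩
    have hmem : PM (sA x) ∈ Submodule.comap (sA : H →ₗ[ℂ] H) S := by
      rw [← hP3]; exact LinearMap.mem_range_self _ _
    simpa [comp_apply] using (Submodule.mem_comap.mp hmem)
  · intro X hX hAX hXS
    refine ⟨(hBpos.isSelfAdjoint.sub hX.isSelfAdjoint).isSymmetric, fun x => ?_⟩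
    -- key inequality
    have hA2 : ∀ v : H, re ⟪A v, v⟫ = ‖sA v‖ ^ 2 := by
      intro v
      have h : ⟪A v, v⟫ = ⟪sA v, sA v⟫ := by
        rw [← hsA2]
        calc ⟪(sA ∘L sA) v, v⟫ = ⟪(ContinuousLinearMap.adjoint sA) (sA v), v⟫ := by
              rw [hsAsa.adjoint_eq]; rfl
          _ = ⟪sA v, sA v⟫ := adjoint_inner_left sA v (sA v)
      rw [h, inner_self_eq_norm_sq]
    have key : ∀ y ∈ Sᗮ, re ⟪X x, x⟫ ≤ ‖sA (x + y)‖ ^ 2 := by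
      intro y hy
      have hXxy : ⟪X x, y⟫ = 0 :=
        (Submodule.mem_orthogonal S y).mp hy (X x) (hXS (LinearMap.mem_range_self (X : H →ₗ[ℂ] H) x))
      have hXyx : ⟪X y, x⟫ = 0 := by
        rw [← hX.isSelfAdjoint.adjoint_eq, adjoint_inner_left]
        exact (Submodule.mem_orthogonal' S y).mp hy (X x) (hXS (LinearMap.mem_range_self (X : H →ₗ[ℂ] H) x))
      have hexp : re ⟪X (x + y), x + y⟫ = re ⟪X x, x⟫ + re ⟪X y, y⟫ := by
        rw [map_add, inner_add_left, inner_add_right, inner_add_right, hXxy, hXyx]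
        simp
      have h1 : re ⟪X x, x⟫ ≤ re ⟪X (x + y), x + y⟫ := by
        rw [hexp]; linarith [hX.re_inner_nonneg_left y]
      have h2 : re ⟪X (x + y), x + y⟫ ≤ re ⟪A (x + y), x + y⟫ := by
        have := hAX.re_inner_nonneg_left (x + y)
        rw [sub_apply, inner_sub_left, map_sub] at this
        linarith
      rw [← hA2]; linarith
    -- orthogonal characterization of M
    haveI : CompleteSpace S := hS.completeSpace_coe
    have hSorth : Sᗮᗮ = S := Submodule.orthogonal_orthogonal S
    have hM : Submodule.comap (sA : H →ₗ[ℂ] H) S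
        = (Submodule.map (sA : H →ₗ[ℂ] H) Sᗮ)ᗮ := by
      ext z
      rw [Submodule.mem_comap, Submodule.mem_orthogonal]
      constructor
      · rintro hz _ ⟨y, hy, rfl⟩
        show ⟪sA y, z⟫ = 0
        rw [← hsAsa.adjoint_eq, adjoint_inner_left]
        exact (Submodule.mem_orthogonal' S y).mp hy _ hz
      · intro hz
        show sA z ∈ S
        rw [show (S : Submodule ℂ H) = Sᗮᗮ from hSorth.symm, Submodule.mem_orthogonal]
        intro u hu
        have h5 : ⟪u, sA z⟫ = ⟪(ContinuousLinearMap.adjoint sA) u, z⟫ :=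
          (adjoint_inner_left sA z u).symm
        rw [h5, hsAsa.adjoint_eq]
        exact hz (sA u) ⟨u, hu, rfl⟩
    set w : H := sA x - PM (sA x) with hw_def
    have hw : w ∈ (Submodule.comap (sA : H →ₗ[ℂ] H) S)ᗮ := by
      rw [Submodule.mem_orthogonal]
      intro m hm
      rw [← hP3] at hm
      obtain ⟨u, rfl⟩ := hm
      have hfix : ⟪PM u, PM (sA x)⟫ = ⟪PM u, sA x⟫ := by
        rw [← adjoint_inner_left, hP2.adjoint_eq,
          show PM (PM u) = (PM * PM) u from rfl, hP1]
      rw [hw_def, inner_sub_right, ContinuousLinearMap.coe_coe, hfix, sub_self]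
    have hwc : (-w) ∈ closure ((Submodule.map (sA : H →ₗ[ℂ] H) Sᗮ : Set H)) := by
      rw [← Submodule.topologicalClosure_coe]
      exact neg_mem (by
        rw [← Submodule.orthogonal_orthogonal_eq_closure, ← hM]; exact hw)
    set c : ℝ := ‖PM (sA x)‖ with hc_def
    set r : ℝ := re ⟪X x, x⟫ with hr_def
    have hsqrt : Real.sqrt r ≤ c := by
      apply le_of_forall_pos_le_add
      intro ε hε
      obtain ⟨v, hvmem, hvd⟩ := Metric.mem_closure_iff.mp hwc ε hε
      obtain ⟨y, hy, rfl⟩ := hvmem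
      have h4 := key y hy
      have hnorm : ‖sA (x + y)‖ ≤ c + ε := by
        have hsplit : sA (x + y) = PM (sA x) + (w + sA y) := by
          rw [map_add, hw_def]; abel
        rw [hsplit]
        refine le_trans (norm_add_le _ _) (add_le_add_right ?_ c)
        have : ‖w + sA y‖ = dist (-w) ((sA : H →ₗ[ℂ] H) y) := by
          rw [dist_eq_norm, show -w - (sA : H →ₗ[ℂ] H) y = -(w + sA y) by
            simp [ContinuousLinearMap.coe_coe]; abel, norm_neg]
        rw [this]
        exact le_of_lt hvd
      calc Real.sqrt r ≤ Real.sqrt (‖sA (x + y)‖ ^ 2) := Real.sqrt_le_sqrt h4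
        _ = ‖sA (x + y)‖ := by rw [Real.sqrt_sq (norm_nonneg _)]
        _ ≤ c + ε := hnorm
    have hr0 : 0 ≤ r := hX.re_inner_nonneg_left x
    have hrc : r ≤ c ^ 2 := by
      nlinarith [Real.sq_sqrt hr0, Real.sqrt_nonneg r]
    have hB : re ⟪(sA ∘L PM ∘L sA) x, x⟫ = c ^ 2 := by
      rw [show (sA ∘L PM ∘L sA) x = sA (PM (sA x)) from rfl, ← hsAsa.adjoint_eq,
        adjoint_inner_left, hsAsa.adjoint_eq]
      exact proj_re_inner_eq PM hP1 hP2 (sA x)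
    show 0 ≤ re ⟪((sA ∘L PM ∘L sA) - X) x, x⟫
    rw [sub_apply, inner_sub_left, map_sub, hB]
    linarith
end

section
/- Let A be a positive bounded operator on a Hilbert space H and S a closed subspace. Then R(A) ∩ S ⊆ R([S]A) ⊆ R(([S]A)^{1/2}) = R(A^{1/2}) ∩ S; in particular R([S]A) is closed whenever R(A) ∩ S = R(A^{1/2}) ∩ S. -/
open ContinuousLinearMap

variable {H : Type*} [NormedAddCommGroup H] [InnerProductSpace ℂ H] [CompleteSpace H]

local notation "⟪" x ", " y "⟫" => @inner ℂ _ _ x y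

/-- Shmul'yan / Douglas range criterion: if `|⟪y, x⟫| ≤ c‖G* x‖` for all `x`,
then `y ∈ R(G)`. -/
lemma mem_range_of_inner_bound (G : H →L[ℂ] H) (y : H) (c : ℝ)
    (h : ∀ x, ‖⟪y, x⟫‖ ≤ c * ‖G.adjoint x‖) : y ∈ LinearMap.range ((G) : H →ₗ[ℂ] H) := by
  classical
  have wd : ∀ x x' : H, G.adjoint x = G.adjoint x' → ⟪y, x⟫ = ⟪y, x'⟫ := by
    intro x x' hxx
    have h0 := h (x - x')
    rw [map_sub, hxx, sub_self, norm_zero, mul_zero, inner_sub_right] at h0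
    exact sub_eq_zero.mp (norm_le_zero_iff.mp h0)
  set p : Submodule ℂ H := LinearMap.range ((G.adjoint) : H →ₗ[ℂ] H) with hp
  have rep : ∀ w : p, ∃ x : H, G.adjoint x = (w : H) := fun w => w.2
  choose r hr using rep
  have val_eq : ∀ (w : p) (x : H), G.adjoint x = (w : H) → ⟪y, r w⟫ = ⟪y, x⟫ := by
    intro w x hx; exact wd _ _ (by rw [hr w, hx])
  let f₀ : p →ₗ[ℂ] ℂ :=
    { toFun := fun w => ⟪y, r w⟫
      map_add' := by
        intro w w'
        rw [← inner_add_right]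
        exact val_eq (w + w') (r w + r w') (by rw [map_add, hr w, hr w']; rfl)
      map_smul' := by
        intro a w
        simp only [RingHom.id_apply]
        rw [smul_eq_mul, ← inner_smul_right]
        exact val_eq (a • w) (a • r w) (by rw [map_smul, hr]; rfl) }
  have f₀bound : ∀ w : p, ‖f₀ w‖ ≤ c * ‖(w : H)‖ := by
    intro w
    have := h (r w)
    rwa [hr w] at this
  let f : p →L[ℂ] ℂ := LinearMap.mkContinuous f₀ c f₀bound
  obtain ⟨g, hg, -⟩ := exists_extension_norm_eq p f
  set z := (InnerProductSpace.toDual ℂ H).symm g with hz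
  have hzg : ∀ w : H, ⟪z, w⟫ = g w := fun w => InnerProductSpace.toDual_symm_apply
  refine ⟨z, ?_⟩
  refine ext_inner_right ℂ (fun x => ?_)
  have h1 : ⟪z, G.adjoint x⟫ = g (G.adjoint x) := hzg _
  have h2 : g (G.adjoint x) = f ⟨G.adjoint x, ⟨x, rfl⟩⟩ := hg ⟨G.adjoint x, ⟨x, rfl⟩⟩
  have h3 : f ⟨G.adjoint x, ⟨x, rfl⟩⟩ = ⟪y, x⟫ := val_eq _ x rfl
  calc ⟪G z, x⟫ = ⟪z, G.adjoint x⟫ := (adjoint_inner_right G z x).symm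
    _ = ⟪y, x⟫ := by rw [h1, h2, h3]

/-- A selfadjoint operator whose square has the same range has closed range. -/
lemma closed_range_of_range_sq (C : H →L[ℂ] H) (hC : IsSelfAdjoint C)
    (hr : LinearMap.range ((C ∘L C) : H →ₗ[ℂ] H) = LinearMap.range ((C) : H →ₗ[ℂ] H)) :
    IsClosed ((LinearMap.range ((C) : H →ₗ[ℂ] H) : Submodule ℂ H) : Set H) := by
  classical
  have hadj : adjoint C = C := hC.adjoint_eq
  have hker : ∀ w : H, C (C w) = 0 → C w = 0 := by
    intro w hw
    have : ⟪C w, C w⟫ = 0 := by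
      calc ⟪C w, C w⟫ = ⟪(adjoint C) w, C w⟫ := by rw [hadj]
        _ = ⟪w, C (C w)⟫ := adjoint_inner_left C (C w) w
        _ = 0 := by rw [hw, inner_zero_right]
    exact inner_self_eq_zero.mp this
  set K : Submodule ℂ H := (LinearMap.ker ((C) : H →ₗ[ℂ] H))ᗮ with hK
  haveI : CompleteSpace (LinearMap.ker ((C) : H →ₗ[ℂ] H)) :=
    (ContinuousLinearMap.isClosed_ker C).completeSpace_coe
  have hKbot : Kᗮ = LinearMap.ker ((C) : H →ₗ[ℂ] H) := Submodule.orthogonal_orthogonal _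
  have hex : ∀ x : H, ∃ u, (C ∘L C) u = C x := by
    intro x
    have : C x ∈ LinearMap.range ((C ∘L C) : H →ₗ[ℂ] H) := hr.symm ▸ ⟨x, rfl⟩
    exact this
  choose u hu using hex
  let D₀ : H → H := fun x => (K.orthogonalProjectionOnto (u x) : H)
  have hDK : ∀ x, D₀ x ∈ K := fun x => (K.orthogonalProjectionOnto (u x)).2
  have hD : ∀ x, C (C (D₀ x)) = C x := by
    intro x
    have hmem : u x - D₀ x ∈ Kᗮ := K.sub_starProjection_mem_orthogonal (u x)
    have h0 : C (u x - D₀ x) = 0 := by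
      have := hmem; rw [hKbot] at this; exact this
    have : C (C (u x - D₀ x)) = 0 := by rw [h0, map_zero]
    have hsub : C (C (u x)) - C (C (D₀ x)) = 0 := by
      simpa [map_sub] using this
    have := hu x
    simp only [ContinuousLinearMap.comp_apply] at this
    rw [sub_eq_zero] at hsub
    rw [← hsub, this]
  have uniq : ∀ v v' : H, v ∈ K → v' ∈ K → C (C v) = C (C v') → v = v' := by
    intro v v' hv hv' he
    have h1 : C (C (v - v')) = 0 := by simp [map_sub, he]
    have h2 : C (v - v') = 0 := hker _ h1
    have h3 : v - v' ∈ LinearMap.ker ((C) : H →ₗ[ℂ] H) := h2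
    have h4 : v - v' ∈ K := K.sub_mem hv hv'
    have h5 : v - v' ∈ Kᗮ := hKbot.symm ▸ h3
    have : v - v' = 0 := by
      have h6 := (Submodule.mem_orthogonal K (v - v')).mp h5 (v - v') h4
      exact inner_self_eq_zero.mp h6
    exact sub_eq_zero.mp this
  let D : H →ₗ[ℂ] H :=
    { toFun := D₀
      map_add' := by
        intro a b
        refine uniq _ _ (hDK (a + b)) (K.add_mem (hDK a) (hDK b)) ?_
        rw [hD (a + b), map_add]
        simp only [map_add, hD a, hD b]
      map_smul' := by
        intro m a
        simp only [RingHom.id_apply]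
        refine uniq _ _ (hDK (m • a)) (K.smul_mem m (hDK a)) ?_
        rw [hD (m • a), map_smul]
        simp only [map_smul, hD a] }
  have hgraph : (D.graph : Set (H × H)) =
      {p : H × H | C p.1 = C (C p.2)} ∩ {p : H × H | p.2 ∈ K} := by
    ext p
    simp only [SetLike.mem_coe, LinearMap.mem_graph_iff, Set.mem_inter_iff, Set.mem_setOf_eq]
    constructor
    · intro hp
      rw [hp]
      exact ⟨(hD p.1).symm, hDK p.1⟩
    · rintro ⟨h1, h2⟩
      exact uniq _ _ h2 (hDK p.1) (by show C (C p.2) = C (C (D₀ p.1)); rw [hD p.1, h1])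
  have hclosed : IsClosed (D.graph : Set (H × H)) := by
    rw [hgraph]
    refine IsClosed.inter (isClosed_eq ?_ ?_) ?_
    · exact C.continuous.comp continuous_fst
    · exact (C.continuous.comp C.continuous).comp continuous_snd
    · exact (Submodule.isClosed_orthogonal (LinearMap.ker ((C) : H →ₗ[ℂ] H))).preimage continuous_snd
  have hcont : Continuous D := D.continuous_of_isClosed_graph hclosed
  let Dc : H →L[ℂ] H := ⟨D, hcont⟩
  have hcomp : (C ∘L C) ∘L Dc = C := by
    ext x
    exact hD x
  have hadjcomp : adjoint Dc ∘L (C ∘L C) = C := by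
    have := congrArg adjoint hcomp
    rwa [adjoint_comp, adjoint_comp, hadj] at this
  have hfix : ∀ w ∈ closure ((LinearMap.range ((C) : H →ₗ[ℂ] H) : Submodule ℂ H) : Set H),
      (adjoint Dc) (C w) = w := by
    intro w hw
    have hcl : IsClosed {w : H | (adjoint Dc) (C w) = w} :=
      isClosed_eq ((adjoint Dc).continuous.comp C.continuous) continuous_id
    refine hcl.closure_subset_iff.mpr ?_ hw
    rintro _ ⟨x, rfl⟩
    have := congrArg (fun f : H →L[ℂ] H => f x) hadjcomp
    simpa using this
  refine isClosed_of_closure_subset ?_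
  intro y hy
  have h1 : (adjoint Dc) (C y) = y := hfix y hy
  have h2 : C y ∈ LinearMap.range ((C ∘L C) : H →ₗ[ℂ] H) := hr.symm ▸ ⟨y, rfl⟩
  obtain ⟨z, hz⟩ := h2
  have : y = C z := by
    have hcz : C y = C (C z) := by rw [← hz]; rfl
    rw [← h1, hcz]
    have := congrArg (fun f : H →L[ℂ] H => f z) hadjcomp
    simpa using this
  exact this ▸ ⟨z, rfl⟩

lemma norm_sT_eq (sA PM sT : H →L[ℂ] H) (hsA : IsSelfAdjoint sA) (hPMsa : IsSelfAdjoint PM)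
    (hPMi : IsIdempotentElem PM) (hsTsa : IsSelfAdjoint sT)
    (hsT2 : sT ∘L sT = sA ∘L PM ∘L sA) (x : H) : ‖sT x‖ = ‖(PM ∘L sA) x‖ := by
  have hPMapp : ∀ v, PM (PM v) = PM v := by
    intro v
    have := congrArg (fun f : H →L[ℂ] H => f v) hPMi
    simpa [ContinuousLinearMap.mul_apply] using this
  have hTapp : sT (sT x) = sA (PM (sA x)) := by
    have := congrArg (fun f : H →L[ℂ] H => f x) hsT2
    simpa using this
  have m1 : ⟪x, sA (PM (sA x))⟫ = ⟪sA x, PM (sA x)⟫ := by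
    rw [← adjoint_inner_left sA (PM (sA x)) x, hsA.adjoint_eq]
  have m2 : ⟪sA x, PM (sA x)⟫ = ⟪PM (sA x), PM (sA x)⟫ := by
    conv_lhs => rw [← hPMapp (sA x)]
    rw [← adjoint_inner_left PM (PM (sA x)) (sA x), hPMsa.adjoint_eq]
  have key : ⟪sT x, sT x⟫ = ⟪(PM ∘L sA) x, (PM ∘L sA) x⟫ := by
    calc ⟪sT x, sT x⟫ = ⟪(adjoint sT) x, sT x⟫ := by rw [hsTsa.adjoint_eq]
      _ = ⟪x, sT (sT x)⟫ := adjoint_inner_left sT (sT x) x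
      _ = ⟪x, sA (PM (sA x))⟫ := by rw [hTapp]
      _ = ⟪PM (sA x), PM (sA x)⟫ := m1.trans m2
      _ = ⟪(PM ∘L sA) x, (PM ∘L sA) x⟫ := rfl
  have h2 : ‖sT x‖ ^ 2 = ‖(PM ∘L sA) x‖ ^ 2 := by
    rw [← @inner_self_eq_norm_sq ℂ, ← @inner_self_eq_norm_sq ℂ, key]
  exact sq_eq_sq₀ (norm_nonneg _) (norm_nonneg _) |>.mp h2

/-- `R(A) ∩ S ⊆ R([S]A) ⊆ R(([S]A)^{1/2}) = R(A^{1/2}) ∩ S`; in particular `R([S]A)`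
is closed whenever `R(A) ∩ S = R(A^{1/2}) ∩ S`.  Here `sA` is the positive square root
of `A`, `PM` the orthogonal projection onto `M = (A^{1/2})⁻¹(S)`, so that
`[S]A = sA ∘ PM ∘ sA`, and `sT` is the positive square root of `[S]A`. -/
theorem shorted_range_inclusions (A sA : H →L[ℂ] H) (hA : A.IsPositive)
    (hsA : sA.IsPositive) (hsA2 : sA ∘L sA = A)
    (S : Submodule ℂ H) (hS : IsClosed (S : Set H))
    (PM : H →L[ℂ] H) (hPM : IsOrthoProj PM (Submodule.comap (sA : H →ₗ[ℂ] H) S))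
    (sT : H →L[ℂ] H) (hsT : sT.IsPositive) (hsT2 : sT ∘L sT = sA ∘L PM ∘L sA) :
    LinearMap.range (A : H →ₗ[ℂ] H) ⊓ S ≤ LinearMap.range ((sA ∘L PM ∘L sA : H →L[ℂ] H) : H →ₗ[ℂ] H) ∧
    LinearMap.range ((sA ∘L PM ∘L sA : H →L[ℂ] H) : H →ₗ[ℂ] H) ≤ LinearMap.range (sT : H →ₗ[ℂ] H) ∧
    LinearMap.range (sT : H →ₗ[ℂ] H) = LinearMap.range (sA : H →ₗ[ℂ] H) ⊓ S ∧
    (LinearMap.range (A : H →ₗ[ℂ] H) ⊓ S = LinearMap.range (sA : H →ₗ[ℂ] H) ⊓ S →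
      IsClosed ((LinearMap.range ((sA ∘L PM ∘L sA : H →L[ℂ] H) : H →ₗ[ℂ] H) : Submodule ℂ H) : Set H)) := by
  obtain ⟨hPMi, hPMsa, hPMrange⟩ := hPM
  have hsAsa : IsSelfAdjoint sA := hsA.isSelfAdjoint
  have hsTsa : IsSelfAdjoint sT := hsT.isSelfAdjoint
  have hPMapp : ∀ v, PM (PM v) = PM v := by
    intro v
    have := congrArg (fun f : H →L[ℂ] H => f v) hPMi
    simpa [ContinuousLinearMap.mul_apply] using this
  have hPMfix : ∀ v, v ∈ LinearMap.range ((PM) : H →ₗ[ℂ] H) → PM v = v := by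
    rintro _ ⟨w, rfl⟩
    exact hPMapp w
  have hnorm : ∀ x, ‖sT x‖ = ‖(PM ∘L sA) x‖ :=
    norm_sT_eq sA PM sT hsAsa hPMsa hPMi hsTsa hsT2
  -- adjoint of sA ∘L PM
  have hadjB : adjoint (sA ∘L PM) = PM ∘L sA := by
    rw [adjoint_comp, hsAsa.adjoint_eq, hPMsa.adjoint_eq]
  -- Part 1
  have part1 : LinearMap.range ((A) : H →ₗ[ℂ] H) ⊓ S ≤ LinearMap.range ((sA ∘L PM ∘L sA) : H →ₗ[ℂ] H) := by
    rintro y hy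
    obtain ⟨⟨x, hx⟩, hyS⟩ := Submodule.mem_inf.mp hy
    have hax : sA (sA x) = y := by
      rw [← hx, ← hsA2]; rfl
    have hmem : sA x ∈ Submodule.comap (sA : H →ₗ[ℂ] H) S := by
      show sA (sA x) ∈ S
      rw [hax]; exact hyS
    rw [← hPMrange] at hmem
    have hfixx : PM (sA x) = sA x := hPMfix _ hmem
    exact ⟨x, by show sA (PM (sA x)) = y; rw [hfixx, hax]⟩
  -- Part 2
  have part2 : LinearMap.range ((sA ∘L PM ∘L sA) : H →ₗ[ℂ] H) ≤ LinearMap.range ((sT) : H →ₗ[ℂ] H) := by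
    rw [← hsT2]
    rintro _ ⟨x, rfl⟩
    exact ⟨sT x, rfl⟩
  -- Part 3, step a : range sT = range (sA ∘L PM)
  have step_a : LinearMap.range ((sT) : H →ₗ[ℂ] H) = LinearMap.range ((sA ∘L PM) : H →ₗ[ℂ] H) := by
    apply le_antisymm
    · rintro _ ⟨x, rfl⟩
      apply mem_range_of_inner_bound (sA ∘L PM) (sT x) ‖x‖
      intro w
      rw [hadjB]
      calc ‖⟪sT x, w⟫‖ = ‖⟪(adjoint sT) x, w⟫‖ := by rw [hsTsa.adjoint_eq]
        _ = ‖⟪x, sT w⟫‖ := by rw [adjoint_inner_left]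
        _ ≤ ‖x‖ * ‖sT w‖ := norm_inner_le_norm x (sT w)
        _ = ‖x‖ * ‖(PM ∘L sA) w‖ := by rw [hnorm w]
    · rintro _ ⟨x, rfl⟩
      apply mem_range_of_inner_bound sT ((sA ∘L PM) x) ‖x‖
      intro w
      rw [hsTsa.adjoint_eq]
      calc ‖⟪(sA ∘L PM) x, w⟫‖ = ‖⟪x, (PM ∘L sA) w⟫‖ := by
            rw [← adjoint_inner_right (sA ∘L PM) x w, hadjB]
        _ ≤ ‖x‖ * ‖(PM ∘L sA) w‖ := norm_inner_le_norm x _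
        _ = ‖x‖ * ‖sT w‖ := by rw [← hnorm w]
  -- Part 3, step b : range (sA ∘L PM) = range sA ⊓ S
  have step_b : LinearMap.range ((sA ∘L PM) : H →ₗ[ℂ] H) = LinearMap.range ((sA) : H →ₗ[ℂ] H) ⊓ S := by
    apply le_antisymm
    · rintro _ ⟨x, rfl⟩
      refine Submodule.mem_inf.mpr ⟨⟨PM x, rfl⟩, ?_⟩
      have hmem : PM x ∈ Submodule.comap (sA : H →ₗ[ℂ] H) S := by
        rw [← hPMrange]; exact ⟨x, rfl⟩
      exact hmem
    · rintro y hy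
      obtain ⟨⟨x, hx⟩, hyS⟩ := Submodule.mem_inf.mp hy
      have hmem : x ∈ Submodule.comap (sA : H →ₗ[ℂ] H) S := by
        show sA x ∈ S
        rw [show sA x = y from hx]; exact hyS
      rw [← hPMrange] at hmem
      have hfixx : PM x = x := hPMfix _ hmem
      exact ⟨x, by show sA (PM x) = y; rw [hfixx, show sA x = y from hx]⟩
  have part3 : LinearMap.range ((sT) : H →ₗ[ℂ] H) = LinearMap.range ((sA) : H →ₗ[ℂ] H) ⊓ S := step_a.trans step_b
  refine ⟨part1, part2, part3, ?_⟩
  -- Part 4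
  intro hyp
  have e1 : LinearMap.range ((sA ∘L PM ∘L sA) : H →ₗ[ℂ] H) = LinearMap.range ((sT) : H →ₗ[ℂ] H) := by
    apply le_antisymm part2
    rw [part3, ← hyp]
    exact part1
  have : ((LinearMap.range ((sA ∘L PM ∘L sA) : H →ₗ[ℂ] H) : Submodule ℂ H) : Set H) =
      ((LinearMap.range ((sT) : H →ₗ[ℂ] H) : Submodule ℂ H) : Set H) := by rw [e1]
  rw [this]
  exact closed_range_of_range_sq sT hsTsa (by rw [hsT2]; exact e1)
end

section
/- Let A be a positive bounded operator on a Hilbert space H and S a closed subspace. Then R((A − [S]A)^{1/2}) ∩ S = {0}; in particular, the closure of R([S]A) intersects R(A − [S]A) trivially. -/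
open ContinuousLinearMap

variable {H : Type*} [NormedAddCommGroup H] [InnerProductSpace ℂ H] [CompleteSpace H]

local notation "⟪" x ", " y "⟫" => @inner ℂ _ _ x y

/-- `R((A - [S]A)^{1/2}) ∩ S = {0}`; in particular the closure of `R([S]A)` intersects
`R(A - [S]A)` trivially.  Here `[S]A = sA ∘ PM ∘ sA` with `sA` the positive square root
of `A` and `PM` the orthogonal projection onto `M = (A^{1/2})⁻¹(S)`, and `sD` is the
positive square root of `A - [S]A`. -/
theorem shorted_complement_disjoint (A sA : H →L[ℂ] H) (hA : A.IsPositive)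
    (hsA : sA.IsPositive) (hsA2 : sA ∘L sA = A)
    (S : Submodule ℂ H) (hS : IsClosed (S : Set H))
    (PM : H →L[ℂ] H) (hPM : IsOrthoProj PM (Submodule.comap (sA : H →ₗ[ℂ] H) S))
    (sD : H →L[ℂ] H) (hsD : sD.IsPositive) (hsD2 : sD ∘L sD = A - sA ∘L PM ∘L sA) :
    LinearMap.range (sD : H →ₗ[ℂ] H) ⊓ S = ⊥ ∧
    (LinearMap.range ((sA ∘L PM ∘L sA : H →L[ℂ] H) : H →ₗ[ℂ] H)).topologicalClosure ⊓
      LinearMap.range ((A - sA ∘L PM ∘L sA : H →L[ℂ] H) : H →ₗ[ℂ] H) = ⊥ := by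
  obtain ⟨hQi, hQsa, hQr⟩ := hPM
  have hsAsym : ∀ x y : H, ⟪sA x, y⟫ = ⟪x, sA y⟫ := fun x y =>
    hsA.1 x y
  have hsDsym : ∀ x y : H, ⟪sD x, y⟫ = ⟪x, sD y⟫ := fun x y =>
    hsD.1 x y
  have hQsym : ∀ x y : H, ⟪PM x, y⟫ = ⟪x, PM y⟫ := fun x y =>
    isSelfAdjoint_iff_isSymmetric.mp hQsa x y
  have hQ2 : ∀ v, PM (PM v) = PM v := by
    intro v
    have := congrArg (fun T : H →L[ℂ] H => T v) hQi
    simpa using this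
  have hPMS : ∀ v, sA (PM v) ∈ S := by
    intro v
    have : PM v ∈ LinearMap.range (PM : H →ₗ[ℂ] H) := ⟨v, rfl⟩
    rw [hQr] at this
    exact this
  set B : H →L[ℂ] H := (1 - PM) ∘L sA with hB
  have hBapp : ∀ u, B u = sA u - PM (sA u) := by intro u; simp [hB, sub_apply]
  -- key norm identity
  have hnorm : ∀ u, ‖sD u‖ = ‖B u‖ := by
    intro u
    have h1 : ⟪sD u, sD u⟫ = ⟪u, (A - sA ∘L PM ∘L sA) u⟫ := by
      rw [hsDsym u (sD u), ← hsD2]; rfl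
    have h2 : ⟪B u, B u⟫ = ⟪u, (A - sA ∘L PM ∘L sA) u⟫ := by
      have e1 : ⟪PM (sA u), PM (sA u)⟫ = ⟪sA u, PM (sA u)⟫ := by
        rw [hQsym (sA u) (PM (sA u)), hQ2 (sA u)]
      have e2 : ⟪PM (sA u), sA u⟫ = ⟪sA u, PM (sA u)⟫ := hQsym _ _
      have e3 : ⟪u, A u⟫ = ⟪sA u, sA u⟫ := by
        rw [← hsA2, comp_apply, ← hsAsym u (sA u)]
      have e4 : ⟪u, (sA ∘L PM ∘L sA) u⟫ = ⟪sA u, PM (sA u)⟫ := by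
        rw [comp_apply, comp_apply, ← hsAsym u (PM (sA u))]
      rw [hBapp u, inner_sub_left, inner_sub_right, inner_sub_right, e1, e2,
        sub_apply, inner_sub_right, e3, e4]
      ring
    have h12 := h1.trans h2.symm
    rw [inner_self_eq_norm_sq_to_K, inner_self_eq_norm_sq_to_K] at h12
    have h12' : ((‖sD u‖ ^ 2 : ℝ) : ℂ) = ((‖B u‖ ^ 2 : ℝ) : ℂ) := by exact_mod_cast h12
    have := Complex.ofReal_injective h12'
    exact (sq_eq_sq₀ (norm_nonneg _) (norm_nonneg _)).mp this
  -- main claim: range sD ∩ S = 0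
  have main : ∀ x, x ∈ LinearMap.range (sD : H →ₗ[ℂ] H) → x ∈ S → x = 0 := by
    rintro x ⟨y, rfl⟩ hxS
    set x := sD y with hx
    -- the bound
    have hbound : ∀ u, ‖⟪x, u⟫‖ ≤ ‖y‖ * ‖B u‖ := by
      intro u
      rw [hx, hsDsym y u]
      calc ‖⟪y, sD u⟫‖ ≤ ‖y‖ * ‖sD u‖ := norm_inner_le_norm _ _
        _ = ‖y‖ * ‖B u‖ := by rw [hnorm u]
    -- build a bounded functional on the range of B
    set Bl : H →ₗ[ℂ] H := (B : H →ₗ[ℂ] H) with hBl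
    have hkerle : LinearMap.ker Bl ≤ LinearMap.ker ((innerSL ℂ x : H →L[ℂ] ℂ) : H →ₗ[ℂ] ℂ) := by
      intro u hu
      have hBu : B u = 0 := hu
      have := hbound u
      rw [hBu, norm_zero, mul_zero] at this
      have : ⟪x, u⟫ = 0 := norm_le_zero_iff.mp this
      simpa using this
    set φq : (H ⧸ LinearMap.ker Bl) →ₗ[ℂ] ℂ :=
      (LinearMap.ker Bl).liftQ ((innerSL ℂ x : H →L[ℂ] ℂ) : H →ₗ[ℂ] ℂ) hkerle with hφq
    set φ₀ : LinearMap.range Bl →ₗ[ℂ] ℂ := φq ∘ₗ Bl.quotKerEquivRange.symm.toLinearMap with hφ₀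
    have hφ₀app : ∀ u : H, φ₀ ⟨Bl u, ⟨u, rfl⟩⟩ = ⟪x, u⟫ := by
      intro u
      have : Bl.quotKerEquivRange.symm ⟨Bl u, ⟨u, rfl⟩⟩ = Submodule.Quotient.mk u := by
        have := Bl.quotKerEquivRange_symm_apply_image u ⟨u, rfl⟩
        simpa using this
      simp [hφ₀, this, hφq]
    have hφ₀bound : ∀ k : LinearMap.range Bl, ‖φ₀ k‖ ≤ ‖y‖ * ‖k‖ := by
      rintro ⟨k, u, rfl⟩
      rw [hφ₀app u]
      exact hbound u
    set φ : LinearMap.range Bl →L[ℂ] ℂ := φ₀.mkContinuous ‖y‖ hφ₀bound with hφ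
    obtain ⟨g, hg, -⟩ := exists_extension_norm_eq (LinearMap.range Bl) φ
    set z : H := (InnerProductSpace.toDual ℂ H).symm g with hzdef
    have hz : ∀ u, ⟪z, u⟫ = g u := fun u => InnerProductSpace.toDual_symm_apply
    set w : H := z - PM z with hw
    have hQw : PM w = 0 := by
      rw [hw, map_sub, hQ2 z, sub_self]
    -- x = sA w
    have hxw : x = sA w := by
      apply ext_inner_right ℂ
      intro u
      have hzB : ⟪z, B u⟫ = ⟪x, u⟫ := by
        rw [hz (B u)]
        have h1 : g (B u) = φ ⟨B u, ⟨u, rfl⟩⟩ := hg ⟨B u, ⟨u, rfl⟩⟩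
        have h2 : φ ⟨B u, ⟨u, rfl⟩⟩ = φ₀ ⟨Bl u, ⟨u, rfl⟩⟩ := rfl
        rw [h1, h2, hφ₀app u]
      have : ⟪sA w, u⟫ = ⟪z, B u⟫ := by
        rw [hsAsym w u, hw, inner_sub_left, hQsym z (sA u), ← inner_sub_right, ← hBapp u]
      rw [hzB] at this
      exact this.symm
    -- conclude w = 0
    have hwM : w ∈ Submodule.comap (sA : H →ₗ[ℂ] H) S := by
      simpa [Submodule.mem_comap, ← hxw] using hxS
    rw [← hQr] at hwM
    obtain ⟨t, ht⟩ := hwM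
    have : w = 0 := by
      have h1 : PM w = w := by rw [← ht]; exact hQ2 t
      rw [← h1, hQw]
    change x = 0
    rw [hxw, this, map_zero]
  constructor
  · rw [Submodule.eq_bot_iff]
    rintro x ⟨hx1, hx2⟩
    exact main x hx1 hx2
  · rw [Submodule.eq_bot_iff]
    rintro x ⟨hx1, hx2⟩
    have hclS : (LinearMap.range ((sA ∘L PM ∘L sA : H →L[ℂ] H) : H →ₗ[ℂ] H)).topologicalClosure ≤ S := by
      apply Submodule.topologicalClosure_minimal
      · rintro v ⟨u, rfl⟩
        exact hPMS (sA u)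
      · exact hS
    obtain ⟨u, rfl⟩ := hx2
    have : (A - sA ∘L PM ∘L sA) u ∈ LinearMap.range (sD : H →ₗ[ℂ] H) := by
      rw [← hsD2]
      exact ⟨sD u, rfl⟩
    exact main _ this (hclS hx1)
end

section
/- Let A, B be positive bounded operators on a Hilbert space H and suppose S = R(B) is closed. Then R([S](A+B)) = S and N([S](A+B)) = S^⊥. -/
open ContinuousLinearMap

/-- `T` is the Krein shorted operator `[S]A`: the Löwner-maximum of
`{X ∈ L(H)⁺ : X ≤ A, R(X) ⊆ S}`. -/
def IsShorted {E : Type*} [NormedAddCommGroup E] [InnerProductSpace ℂ E] [CompleteSpace E]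
    (S : Submodule ℂ E) (A T : E →L[ℂ] E) : Prop :=
  T.IsPositive ∧ (A - T).IsPositive ∧ LinearMap.range (T : E →ₗ[ℂ] E) ≤ S ∧
    ∀ X : E →L[ℂ] E, X.IsPositive → (A - X).IsPositive → LinearMap.range (X : E →ₗ[ℂ] E) ≤ S →
      (T - X).IsPositive

variable {H : Type*} [NormedAddCommGroup H] [InnerProductSpace ℂ H] [CompleteSpace H]

open RCLike

/-- Cauchy–Schwarz for the semi-inner-product induced by a positive operator. -/
lemma isPositive_cs {P : H →L[ℂ] H} (hP : P.IsPositive) (x y : H) :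
    ‖(inner ℂ x (P y) : ℂ)‖ * ‖(inner ℂ y (P x) : ℂ)‖ ≤
      re (inner ℂ x (P x) : ℂ) * re (inner ℂ y (P y) : ℂ) := by
  have hsym := hP.isSelfAdjoint.isSymmetric
  let c : PreInnerProductSpace.Core ℂ H :=
  { inner := fun a b => inner ℂ a (P b)
    conj_inner_symm := fun a b => by
      rw [inner_conj_symm]
      exact hsym a b
    re_inner_nonneg := fun a => hP.re_inner_nonneg_right a
    add_left := fun a b z => inner_add_left _ _ _
    smul_left := fun a b r => inner_smul_left _ _ _ }
  exact @InnerProductSpace.Core.inner_mul_inner_self_le ℂ H _ _ _ c x y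

/-- A positive operator vanishes where its quadratic form vanishes. -/
lemma isPositive_eq_zero_of_re_inner_eq_zero {P : H →L[ℂ] H} (hP : P.IsPositive) {x : H}
    (hx : re (inner ℂ x (P x) : ℂ) = 0) : P x = 0 := by
  have hsym := hP.isSelfAdjoint.isSymmetric
  have h := isPositive_cs hP x (P x)
  have h1 : (inner ℂ (P x) (P x) : ℂ) = inner ℂ x (P (P x)) := hsym x (P x)
  rw [← h1, hx, zero_mul] at h
  have h2 : ‖(inner ℂ (P x) (P x) : ℂ)‖ = 0 := by
    nlinarith [norm_nonneg (inner ℂ (P x) (P x) : ℂ)]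
  rw [norm_eq_zero, inner_self_eq_zero] at h2
  exact h2

/-- A symmetric operator with range in `U` vanishes on `Uᗮ`. -/
lemma symm_eq_zero_on_orthogonal {P : H →L[ℂ] H} (hsym : (P : H →ₗ[ℂ] H).IsSymmetric)
    {U : Submodule ℂ H} (hr : LinearMap.range (P : H →ₗ[ℂ] H) ≤ U) {x : H} (hx : x ∈ Uᗮ) : P x = 0 := by
  have h1 : (inner ℂ (P x) (P x) : ℂ) = inner ℂ x (P (P x)) := hsym x (P x)
  have h2 : (inner ℂ x (P (P x)) : ℂ) = 0 := by
    apply Submodule.inner_left_of_mem_orthogonal (hr ⟨P x, rfl⟩) hx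
  exact inner_self_eq_zero.mp (h1.trans h2)

set_option maxHeartbeats 1000000 in
/-- If `S = R(B)` is closed then `R([S](A+B)) = S` and `N([S](A+B)) = S^⊥`. -/
theorem shorted_range_ker_of_closed (A B : H →L[ℂ] H) (hA : A.IsPositive) (hB : B.IsPositive)
    (hRB : IsClosed ((LinearMap.range (B : H →ₗ[ℂ] H) : Submodule ℂ H) : Set H))
    (T : H →L[ℂ] H) (hT : IsShorted (LinearMap.range (B : H →ₗ[ℂ] H)) (A + B) T) :
    LinearMap.range (T : H →ₗ[ℂ] H) = LinearMap.range (B : H →ₗ[ℂ] H) ∧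
      LinearMap.ker (T : H →ₗ[ℂ] H) = (LinearMap.range (B : H →ₗ[ℂ] H))ᗮ := by
  set S := LinearMap.range (B : H →ₗ[ℂ] H) with hS
  obtain ⟨hTpos, hATpos, hrange, hmax⟩ := hT
  have hTB : (T - B).IsPositive := by
    have hA' : (A + B - B).IsPositive := by simpa using hA
    exact hmax B hB hA' le_rfl
  have symT := hTpos.isSelfAdjoint.isSymmetric
  have symB := hB.isSelfAdjoint.isSymmetric
  have hTperp : ∀ x ∈ Sᗮ, T x = 0 := fun x hx => symm_eq_zero_on_orthogonal symT hrange hx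
  have hBperp : ∀ x ∈ Sᗮ, B x = 0 := fun x hx => symm_eq_zero_on_orthogonal symB le_rfl hx
  have hker : LinearMap.ker (T : H →ₗ[ℂ] H) = Sᗮ := by
    apply le_antisymm
    · intro x hx
      have hx0 : T x = 0 := hx
      have hBx : B x = 0 := by
        apply isPositive_eq_zero_of_re_inner_eq_zero hB
        have h1 : 0 ≤ re (inner ℂ x (B x) : ℂ) := hB.re_inner_nonneg_right x
        have h2 : 0 ≤ re (inner ℂ x ((T - B) x) : ℂ) := hTB.re_inner_nonneg_right x
        have h3 : (T - B) x = -(B x) := by simp [hx0]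
        rw [h3] at h2
        simp only [inner_neg_right, map_neg] at h2
        linarith
      intro u hu
      obtain ⟨z, rfl⟩ := hu
      calc (inner ℂ (B z) x : ℂ) = inner ℂ z (B x) := symB z x
        _ = 0 := by rw [hBx, inner_zero_right]
    · intro x hx
      exact hTperp x hx
  refine ⟨?_, hker⟩
  haveI : CompleteSpace S := hRB.completeSpace_coe
  have hmem : ∀ x : S, B (x : H) ∈ S := fun x => ⟨(x : H), rfl⟩
  set B' : S →L[ℂ] S := (B.comp S.subtypeL).codRestrict S hmem with hB'def
  have hB'apply : ∀ x : S, (B' x : H) = B (x : H) := fun x => rfl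
  have hinj : LinearMap.ker (B' : S →ₗ[ℂ] S) = ⊥ := by
    rw [LinearMap.ker_eq_bot']
    intro x hx
    obtain ⟨z, hz⟩ := x.2
    have hBx : B (x : H) = 0 := by rw [← hB'apply x, show B' x = 0 from hx]; rfl
    have hxx : (inner ℂ (x : H) (x : H) : ℂ) = 0 := by
      calc (inner ℂ (x : H) (x : H) : ℂ) = inner ℂ (B z) (x : H) := by rw [show B z = (x : H) from hz]
        _ = inner ℂ z (B (x : H)) := symB z _
        _ = 0 := by rw [hBx, inner_zero_right]
    exact Subtype.ext (inner_self_eq_zero.mp hxx)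
  have hsurj : LinearMap.range (B' : S →ₗ[ℂ] S) = ⊤ := by
    rw [LinearMap.range_eq_top]
    intro s
    obtain ⟨z, hz⟩ := s.2
    refine ⟨S.orthogonalProjectionOnto z, Subtype.ext ?_⟩
    have h0 : B (z - (S.orthogonalProjectionOnto z : H)) = 0 :=
      hBperp _ (Submodule.sub_starProjection_mem_orthogonal z)
    rw [map_sub] at h0
    have : B ((S.orthogonalProjectionOnto z : H)) = B z := by
      rw [sub_eq_zero] at h0; exact h0.symm
    rw [show (((B' : S →ₗ[ℂ] S) (S.orthogonalProjectionOnto z) : S) : H) = B' (S.orthogonalProjectionOnto z) from rfl,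
      hB'apply, this, show B z = (s : H) from hz]
  set e := ContinuousLinearEquiv.ofBijective B' hinj hsurj with he
  set K : ℝ := ‖(e.symm : S →L[ℂ] S)‖ + 1 with hK
  have hKpos : 0 < K := by positivity
  have hbound : ∀ x : S, ‖(x : H)‖ ≤ K * ‖B (x : H)‖ := by
    intro x
    have h1 : e.symm (B' x) = x := by
      have : e x = B' x := rfl
      rw [← this, e.symm_apply_apply]
    have h2 : ‖x‖ ≤ ‖(e.symm : S →L[ℂ] S)‖ * ‖B' x‖ := by
      conv_lhs => rw [← h1]
      exact (e.symm : S →L[ℂ] S).le_opNorm (B' x)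
    have h3 : ‖B' x‖ = ‖B (x : H)‖ := by rw [← hB'apply x]; rfl
    have h4 : ‖x‖ = ‖(x : H)‖ := rfl
    rw [h3, h4] at h2
    nlinarith [norm_nonneg (B (x : H))]
  have hlow : ∀ x : S, ‖(x : H)‖ ^ 2 ≤ K * re (inner ℂ (x : H) (B (x : H)) : ℂ) := by
    intro x
    set y : S := e.symm x with hy
    have hBy : B (y : H) = (x : H) := by
      have h1 : e y = x := e.apply_symm_apply x
      have : B' y = x := h1
      rw [← hB'apply y, this]
    have cs := isPositive_cs hB (y : H) (x : H)
    have h5 : (inner ℂ (x : H) (B (y : H)) : ℂ) = inner ℂ (x : H) (x : H) := by rw [hBy]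
    have h6 : ‖(inner ℂ (x : H) (B (y : H)) : ℂ)‖ = ‖(x : H)‖ ^ 2 := by
      rw [h5, inner_self_eq_norm_sq_to_K, norm_pow]
      norm_num
    have h7a : (inner ℂ (y : H) (B (x : H)) : ℂ)
        = (starRingEnd ℂ) ((inner ℂ (B (x : H)) (y : H) : ℂ)) := (inner_conj_symm _ _).symm
    have h7b : (inner ℂ (B (x : H)) (y : H) : ℂ) = inner ℂ (x : H) (B (y : H)) := symB _ _
    have h7 : ‖(inner ℂ (y : H) (B (x : H)) : ℂ)‖ = ‖(x : H)‖ ^ 2 := by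
      rw [h7a, h7b, RCLike.norm_conj, h6]
    have h8 : re (inner ℂ (y : H) (B (y : H)) : ℂ) ≤ K * ‖(x : H)‖ ^ 2 := by
      have hre : re (inner ℂ (y : H) (B (y : H)) : ℂ) ≤ ‖(y : H)‖ * ‖(x : H)‖ := by
        calc re (inner ℂ (y : H) (B (y : H)) : ℂ) ≤ ‖(inner ℂ (y : H) (B (y : H)) : ℂ)‖ :=
            RCLike.re_le_norm _
          _ ≤ ‖(y : H)‖ * ‖B (y : H)‖ := norm_inner_le_norm _ _
          _ = ‖(y : H)‖ * ‖(x : H)‖ := by rw [hBy]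
      have hb2 := hbound y
      rw [hBy] at hb2
      nlinarith [norm_nonneg (x : H), norm_nonneg (y : H)]
    have h9 : 0 ≤ re (inner ℂ (x : H) (B (x : H)) : ℂ) := hB.re_inner_nonneg_right _
    rw [h6, h7] at cs
    rcases eq_or_ne ‖(x : H)‖ 0 with h0 | h0
    · rw [h0]; nlinarith [mul_nonneg hKpos.le h9]
    · have hpos : 0 < ‖(x : H)‖ ^ 2 := by positivity
      nlinarith
  have hlowT : ∀ x : S, ‖(x : H)‖ ^ 2 ≤ K * re (inner ℂ (x : H) (T (x : H)) : ℂ) := by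
    intro x
    have h1 := hTB.re_inner_nonneg_right (x : H)
    have h2 : (inner ℂ (x : H) ((T - B) (x : H)) : ℂ)
        = inner ℂ (x : H) (T (x : H)) - inner ℂ (x : H) (B (x : H)) := by
      simp [inner_sub_right]
    rw [h2, map_sub] at h1
    have := hlow x
    nlinarith
  set f : S →L[ℂ] H := T.comp S.subtypeL with hf
  have hfb : ∀ x : S, ‖x‖ ≤ K.toNNReal * ‖f x‖ := by
    intro x
    have h1 := hlowT x
    have h2 : re (inner ℂ (x : H) (T (x : H)) : ℂ) ≤ ‖(x : H)‖ * ‖T (x : H)‖ :=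
      (RCLike.re_le_norm _).trans (norm_inner_le_norm _ _)
    have h4 : ‖x‖ = ‖(x : H)‖ := rfl
    have h5 : ‖f x‖ = ‖T (x : H)‖ := rfl
    have hKc : (K.toNNReal : ℝ) = K := Real.coe_toNNReal K hKpos.le
    rw [h4, h5, hKc]
    rcases eq_or_ne ‖(x : H)‖ 0 with h0 | h0
    · rw [h0]; exact mul_nonneg hKpos.le (norm_nonneg _)
    · have hpos : 0 < ‖(x : H)‖ := lt_of_le_of_ne (norm_nonneg _) (Ne.symm h0)
      nlinarith [norm_nonneg (T (x : H))]
  have hclosedf : IsClosed (Set.range f) :=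
    (f.antilipschitz_of_bound hfb).isClosed_range f.uniformContinuous
  set RT : Submodule ℂ H := LinearMap.range (f : S →ₗ[ℂ] H) with hRT
  have hRTset : (RT : Set H) = Set.range f := by
    ext w; simp [hRT, LinearMap.mem_range, Set.mem_range]
  have hRTclosed : IsClosed (RT : Set H) := hRTset ▸ hclosedf
  have hRTle : RT ≤ S := by
    rintro w ⟨x, rfl⟩
    exact hrange ⟨(x : H), rfl⟩
  have hTrange_eq : LinearMap.range (T : H →ₗ[ℂ] H) = RT := by
    apply le_antisymm
    · rintro w ⟨x, rfl⟩
      have h0 : T (x - (S.orthogonalProjectionOnto x : H)) = 0 :=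
        hTperp _ (Submodule.sub_starProjection_mem_orthogonal x)
      rw [map_sub, sub_eq_zero] at h0
      exact ⟨S.orthogonalProjectionOnto x, h0.symm⟩
    · rintro w ⟨x, rfl⟩
      exact ⟨(x : H), rfl⟩
  haveI : CompleteSpace RT := hRTclosed.completeSpace_coe
  have hSle : S ≤ RT := by
    intro y hy
    set z := y - (RT.orthogonalProjectionOnto y : H) with hz
    have hzperp : z ∈ RTᗮ := Submodule.sub_starProjection_mem_orthogonal y
    have hTz : T z = 0 := symm_eq_zero_on_orthogonal symT hTrange_eq.le hzperp
    have hzS : z ∈ S := Submodule.sub_mem S hy (hRTle (RT.orthogonalProjectionOnto y).2)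
    have hzSperp : z ∈ Sᗮ := hker.le hTz
    have hz0 : z = 0 := by
      have := Submodule.inner_left_of_mem_orthogonal hzS hzSperp
      exact inner_self_eq_zero.mp this
    have : y = (RT.orthogonalProjectionOnto y : H) := by
      have := sub_eq_zero.mp (hz ▸ hz0)
      exact this
    rw [this]
    exact (RT.orthogonalProjectionOnto y).2
  rw [hTrange_eq]
  exact le_antisymm hRTle hSle
end

section
/- Let A be a positive bounded operator on a Hilbert space H and S a closed subspace. The following are equivalent: (1) R(A) = R([S]A) + R(A − [S]A) (the pair ([S]A, A − [S]A) has range additivity); (2) R([S]A) ⊆ R(A); (3) with M = (A^{1/2})^{-1}(S), R(A^{1/2}) = (M ∩ R(A^{1/2})) ⊕ (M^⊥ ∩ R(A^{1/2})). -/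
open ContinuousLinearMap

variable {H : Type*} [NormedAddCommGroup H] [InnerProductSpace ℂ H] [CompleteSpace H]

section AuxLemmas

local notation "⟪" x ", " y "⟫" => @inner ℂ _ _ x y

/-- Any two shorted operators agree. -/
lemma IsShorted.unique {S : Submodule ℂ H} {A T T' : H →L[ℂ] H}
    (h : IsShorted S A T) (h' : IsShorted S A T') : T = T' := by
  have h1 : T' ≤ T := (le_def _ _).mpr (h.2.2.2 T' h'.1 h'.2.1 h'.2.2.1)
  have h2 : T ≤ T' := (le_def _ _).mpr (h'.2.2.2 T h.1 h.2.1 h.2.2.1)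
  exact le_antisymm h2 h1

lemma aux_inner_proj (M : Submodule ℂ H) [CompleteSpace M] (v : H) :
    RCLike.re ⟪(M.subtypeL ∘L M.orthogonalProjectionOnto) v, v⟫
      = ‖(M.subtypeL ∘L M.orthogonalProjectionOnto) v‖ ^ 2 := by
  set P : H →L[ℂ] H := M.subtypeL ∘L M.orthogonalProjectionOnto with hP
  have hmem : P v ∈ M := by simp [hP]
  have horth : v - P v ∈ Mᗮ := Submodule.sub_starProjection_mem_orthogonal (K := M) v
  have h0 : ⟪P v, v - P v⟫ = 0 := Submodule.inner_right_of_mem_orthogonal hmem horth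
  have h1 : ⟪P v, v⟫ = ⟪P v, P v⟫ := by
    have h2 : ⟪P v, v⟫ - ⟪P v, P v⟫ = 0 := by rw [← inner_sub_right]; exact h0
    linear_combination h2
  rw [h1, inner_self_eq_norm_sq]

/-- The key construction: `sA ∘ P_M ∘ sA` is the shorted operator of `A = sA²` to `S`,
where `M = sA⁻¹(S)`. -/
lemma aux_isShorted_proj (A sA : H →L[ℂ] H)
    (hsA : sA.IsPositive) (hsA2 : sA ∘L sA = A)
    (S : Submodule ℂ H) (hS : IsClosed (S : Set H))
    (M : Submodule ℂ H) [CompleteSpace M]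
    (hM : M = Submodule.comap (sA : H →ₗ[ℂ] H) S) :
    IsShorted S A (sA ∘L (M.subtypeL ∘L M.orthogonalProjectionOnto) ∘L sA) := by
  set P : H →L[ℂ] H := M.subtypeL ∘L M.orthogonalProjectionOnto with hP
  have hsym : ∀ x y : H, ⟪sA x, y⟫ = ⟪x, sA y⟫ := isSelfAdjoint_iff_isSymmetric.mp hsA.isSelfAdjoint
  have hPmem : ∀ v : H, P v ∈ M := fun v => by simp [hP]
  have hPsa : IsSelfAdjoint P := isSelfAdjoint_starProjection M
  have hPpos : P.IsPositive := by
    refine isPositive_def'.mpr ⟨hPsa, fun v => ?_⟩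
    rw [reApplyInnerSelf_apply, aux_inner_proj]
    positivity
  have hT0pos : (sA ∘L P ∘L sA).IsPositive := by
    have := hPpos.adjoint_conj sA
    rwa [hsA.isSelfAdjoint.adjoint_eq] at this
  have hOnePpos : ((1 : H →L[ℂ] H) - P).IsPositive := by
    refine isPositive_def'.mpr ⟨(IsSelfAdjoint.one (H →L[ℂ] H)).sub hPsa, fun v => ?_⟩
    rw [reApplyInnerSelf_apply, sub_apply, one_apply_eq_self]
    have horth : v - P v ∈ Mᗮ := Submodule.sub_starProjection_mem_orthogonal (K := M) v
    have h0 : ⟪v - P v, P v⟫ = 0 := Submodule.inner_left_of_mem_orthogonal (hPmem v) horth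
    have heq : ⟪v - P v, v⟫ = ⟪v - P v, v - P v⟫ := by
      have h2 : ⟪v - P v, v⟫ - ⟪v - P v, v - P v⟫ = 0 := by
        rw [← inner_sub_right]
        have h3 : v - (v - P v) = P v := by abel
        rw [h3]; exact h0
      linear_combination h2
    rw [heq, inner_self_eq_norm_sq]
    positivity
  have hsub : A - sA ∘L P ∘L sA = sA ∘L ((1 : H →L[ℂ] H) - P) ∘L sA := by
    ext x
    simp [← hsA2, sub_apply, comp_apply, map_sub, one_apply]
  refine ⟨hT0pos, ?_, ?_, ?_⟩
  · rw [hsub]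
    have := hOnePpos.adjoint_conj sA
    rwa [hsA.isSelfAdjoint.adjoint_eq] at this
  · rintro y ⟨x, rfl⟩
    have : P (sA x) ∈ M := hPmem _
    rw [hM, Submodule.mem_comap] at this
    simpa using this
  · -- maximality
    intro X hX hAX hXS
    have hXsym : ∀ x y : H, ⟪X x, y⟫ = ⟪x, X y⟫ := isSelfAdjoint_iff_isSymmetric.mp hX.isSelfAdjoint
    refine isPositive_def'.mpr ⟨hT0pos.isSelfAdjoint.sub hX.isSelfAdjoint, fun x => ?_⟩
    set v : H := sA x with hv
    -- step 1 : for all s in Sᗮ, re ⟪X x, x⟫ ≤ ‖sA (x + s)‖ ^ 2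
    have key : ∀ s ∈ Sᗮ, RCLike.re ⟪X x, x⟫ ≤ ‖sA (x + s)‖ ^ 2 := by
      intro s hs
      have hXxS : X x ∈ S := hXS (LinearMap.mem_range_self _ x)
      have h1 : ⟪X x, s⟫ = 0 := Submodule.inner_right_of_mem_orthogonal hXxS hs
      have h2 : ⟪X s, x⟫ = 0 := by
        rw [hXsym s x]
        exact Submodule.inner_left_of_mem_orthogonal hXxS hs
      have hexp : ⟪X (x + s), x + s⟫ = ⟪X x, x⟫ + ⟪X s, s⟫ := by
        rw [map_add, inner_add_left, inner_add_right, inner_add_right, h1, h2]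
        ring
      have hXA : RCLike.re ⟪X (x + s), x + s⟫ ≤ RCLike.re ⟪A (x + s), x + s⟫ := by
        have := hAX.2 (x + s)
        rw [reApplyInnerSelf_apply, sub_apply, inner_sub_left, map_sub] at this
        linarith
      have hAn : RCLike.re ⟪A (x + s), x + s⟫ = ‖sA (x + s)‖ ^ 2 := by
        rw [← hsA2, comp_apply, hsym, inner_self_eq_norm_sq]
      have hXs : 0 ≤ RCLike.re ⟪X s, s⟫ := by
        have := hX.2 s; rwa [reApplyInnerSelf_apply] at this
      calc RCLike.re ⟪X x, x⟫ ≤ RCLike.re ⟪X x, x⟫ + RCLike.re ⟪X s, s⟫ := by linarith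
        _ = RCLike.re ⟪X (x + s), x + s⟫ := by rw [hexp, map_add]
        _ ≤ ‖sA (x + s)‖ ^ 2 := by rw [← hAn] at *; exact hXA
    -- step 2 : M = (sA Sᗮ)ᗮ and Mᗮ = closure (sA Sᗮ)
    set N : Submodule ℂ H := Submodule.map (sA : H →ₗ[ℂ] H) Sᗮ with hN
    have hNorth : Nᗮ = M := by
      ext u
      rw [Submodule.mem_orthogonal, hM, Submodule.mem_comap]
      constructor
      · intro h
        have hSu : sA u ∈ Sᗮᗮ := by
          rw [Submodule.mem_orthogonal]
          intro s hsS
          have := h (sA s) ⟨s, hsS, rfl⟩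
          rwa [hsym] at this
        rwa [Submodule.orthogonal_orthogonal_eq_closure,
          hS.submodule_topologicalClosure_eq] at hSu
      · rintro h w ⟨s, hsS, rfl⟩
        show ⟪sA s, u⟫ = 0
        rw [hsym]
        exact Submodule.inner_left_of_mem_orthogonal h hsS
    have hMorth : (Mᗮ : Set H) ⊆ closure (N : Set H) := by
      rw [← hNorth, Submodule.orthogonal_orthogonal_eq_closure]
      exact subset_rfl
    -- step 3 : conclude re ⟪X x, x⟫ ≤ ‖P v‖ ^ 2
    have hclosed : IsClosed {w : H | RCLike.re ⟪X x, x⟫ ≤ ‖v + w‖ ^ 2} :=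
      isClosed_le continuous_const (((continuous_const.add continuous_id).norm).pow 2)
    have hNsub : (N : Set H) ⊆ {w : H | RCLike.re ⟪X x, x⟫ ≤ ‖v + w‖ ^ 2} := by
      rintro w ⟨s, hsS, rfl⟩
      have := key s hsS
      rwa [map_add] at this
    have hPvM : P v - v ∈ Mᗮ := by
      have := Submodule.sub_starProjection_mem_orthogonal (K := M) v
      have h' : P v - v = -(v - P v) := by abel
      rw [h']
      exact neg_mem this
    have hfinal : RCLike.re ⟪X x, x⟫ ≤ ‖v + (P v - v)‖ ^ 2 :=
      (hclosed.closure_subset_iff.mpr hNsub) (hMorth hPvM)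
    have hvv : v + (P v - v) = P v := by abel
    rw [hvv] at hfinal
    -- finish
    rw [reApplyInnerSelf_apply, sub_apply, inner_sub_left, map_sub, comp_apply, comp_apply,
      hsym]
    have hPinner : RCLike.re ⟪P (sA x), sA x⟫ = ‖P (sA x)‖ ^ 2 := aux_inner_proj M (sA x)
    rw [hPinner]
    rw [← hv] at *
    linarith

end AuxLemmas

/-- TFAE: (1) `R(A) = R([S]A) + R(A - [S]A)`; (2) `R([S]A) ⊆ R(A)`;
(3) `R(A^{1/2}) = (M ∩ R(A^{1/2})) ⊕ (M^⊥ ∩ R(A^{1/2}))` where `M = (A^{1/2})⁻¹(S)`.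
Here `sA` is the positive square root of `A` and `T = [S]A`. -/
theorem shorted_range_additivity_tfae (A sA : H →L[ℂ] H) (hA : A.IsPositive)
    (hsA : sA.IsPositive) (hsA2 : sA ∘L sA = A)
    (S : Submodule ℂ H) (hS : IsClosed (S : Set H))
    (T : H →L[ℂ] H) (hT : IsShorted S A T) :
    List.TFAE
      [LinearMap.range (A : H →ₗ[ℂ] H) = LinearMap.range (T : H →ₗ[ℂ] H) ⊔
         LinearMap.range ((A - T : H →L[ℂ] H) : H →ₗ[ℂ] H),
       LinearMap.range (T : H →ₗ[ℂ] H) ≤ LinearMap.range (A : H →ₗ[ℂ] H),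
       LinearMap.range (sA : H →ₗ[ℂ] H) =
         (Submodule.comap (sA : H →ₗ[ℂ] H) S ⊓ LinearMap.range (sA : H →ₗ[ℂ] H)) ⊔
           ((Submodule.comap (sA : H →ₗ[ℂ] H) S)ᗮ ⊓ LinearMap.range (sA : H →ₗ[ℂ] H))] := by
  classical
  set M : Submodule ℂ H := Submodule.comap (sA : H →ₗ[ℂ] H) S with hMdef
  have hMclosed : IsClosed (M : Set H) := hS.preimage sA.continuous
  haveI : CompleteSpace M := hMclosed.completeSpace_coe
  set P : H →L[ℂ] H := M.subtypeL ∘L M.orthogonalProjectionOnto with hPdef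
  have hTeq : T = sA ∘L P ∘L sA :=
    hT.unique (aux_isShorted_proj A sA hsA hsA2 S hS M hMdef)
  have hsym : ∀ x y : H, @inner ℂ _ _ (sA x) y = @inner ℂ _ _ x (sA y) :=
    isSelfAdjoint_iff_isSymmetric.mp hsA.isSelfAdjoint
  have hPmem : ∀ v : H, P v ∈ M := fun v => by simp [hPdef]
  have hPfix : ∀ m ∈ M, P m = m := by
    intro m hm
    show M.starProjection m = m
    rw [Submodule.starProjection_eq_self_iff]
    exact hm
  have hPzero : ∀ m ∈ Mᗮ, P m = 0 := by
    intro m hm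
    show (↑(M.orthogonalProjectionOnto m) : H) = 0
    rw [Submodule.orthogonalProjectionOnto_apply_of_mem_orthogonal hm]
    simp
  have hAapp : ∀ x : H, A x = sA (sA x) := fun x => by rw [← hsA2]; rfl
  have hTapp : ∀ x : H, T x = sA (P (sA x)) := fun x => by rw [hTeq]; rfl
  tfae_have 1 → 2
  | h1 => by rw [h1]; exact le_sup_left
  tfae_have 2 → 3
  | h2 => by
    refine le_antisymm ?_ (sup_le inf_le_right inf_le_right)
    rintro r ⟨x, rfl⟩
    have hTx : sA (P (sA x)) ∈ LinearMap.range (A : H →ₗ[ℂ] H) := by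
      rw [← hTapp]
      exact h2 (LinearMap.mem_range_self _ x)
    obtain ⟨z, hz⟩ := hTx
    set k : H := P (sA x) - sA z with hk
    have hkk : sA k = 0 := by
      rw [hk, map_sub, ← hAapp, show A z = sA (P (sA x)) from hz, sub_self]
    -- k ∈ (ker sA)ᗮ-complement computation: show k = 0
    have hq : sA x - P (sA x) ∈ Mᗮ := Submodule.sub_starProjection_mem_orthogonal (K := M) (sA x)
    have hkerM : LinearMap.ker (sA : H →ₗ[ℂ] H) ≤ M := by
      intro u hu
      rw [LinearMap.mem_ker] at hu
      rw [hMdef, Submodule.mem_comap]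
      show sA u ∈ S
      rw [show ((sA : H →ₗ[ℂ] H) u) = sA u from rfl] at hu
      rw [hu]
      exact S.zero_mem
    have hqker : ∀ u : H, sA u = 0 → @inner ℂ _ _ u (sA x - P (sA x)) = 0 := by
      intro u hu
      have huM : u ∈ M := hkerM (by simpa [LinearMap.mem_ker] using hu)
      exact Submodule.inner_right_of_mem_orthogonal huM hq
    have hk0 : k = 0 := by
      have h1 : @inner ℂ _ _ k (sA x - sA z) = 0 := by
        rw [← map_sub, ← hsym, hkk, inner_zero_left]
      have h2 : @inner ℂ _ _ k (sA x - P (sA x)) = 0 := hqker k hkk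
      have h3 : @inner ℂ _ _ k k = 0 := by
        have hkeq : k = (sA x - sA z) - (sA x - P (sA x)) := by rw [hk]; abel
        calc @inner ℂ _ _ k k = @inner ℂ _ _ k ((sA x - sA z) - (sA x - P (sA x))) := by
              rw [← hkeq]
          _ = @inner ℂ _ _ k (sA x - sA z) - @inner ℂ _ _ k (sA x - P (sA x)) := by
              rw [inner_sub_right]
          _ = 0 := by rw [h1, h2, sub_zero]
      exact inner_self_eq_zero.mp h3
    have hPr : P (sA x) = sA z := by
      have := sub_eq_zero.mp (hk ▸ hk0)
      exact this
    refine Submodule.mem_sup.mpr ⟨P (sA x), ⟨hPmem _, ⟨z, hPr.symm⟩⟩,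
      sA x - P (sA x), ⟨hq, ?_⟩, by abel⟩
    rw [hPr]
    exact ⟨x - z, by rw [map_sub]; rfl⟩
  tfae_have 3 → 1
  | h3 => by
    have hdecomp : ∀ r ∈ LinearMap.range (sA : H →ₗ[ℂ] H),
        ∃ m ∈ M ⊓ LinearMap.range (sA : H →ₗ[ℂ] H), ∃ m' ∈ Mᗮ ⊓ LinearMap.range (sA : H →ₗ[ℂ] H), r = m + m' := by
      intro r hr
      have := h3.le hr
      obtain ⟨m, hm, m', hm', heq⟩ := Submodule.mem_sup.mp this
      exact ⟨m, hm, m', hm', heq.symm⟩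
    refine le_antisymm ?_ (sup_le ?_ ?_)
    · rintro y ⟨x, rfl⟩
      obtain ⟨m, hm, m', hm', heq⟩ := hdecomp (sA x) ⟨x, rfl⟩
      obtain ⟨u, hu : sA u = m⟩ := hm.2
      obtain ⟨u', hu' : sA u' = m'⟩ := hm'.2
      refine Submodule.mem_sup.mpr ⟨sA m, ?_, sA m', ?_, ?_⟩
      · exact ⟨u, by show T u = sA m; rw [hTapp, hu, hPfix m hm.1]⟩
      · refine ⟨u', ?_⟩
        show A u' - T u' = sA m'
        rw [hTapp, hAapp, hu', hPzero m' hm'.1, map_zero, sub_zero]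
      · show sA m + sA m' = A x; rw [hAapp, heq, map_add]
    · rintro y ⟨x, rfl⟩
      obtain ⟨m, hm, m', hm', heq⟩ := hdecomp (sA x) ⟨x, rfl⟩
      obtain ⟨u, hu : sA u = m⟩ := hm.2
      refine ⟨u, ?_⟩
      show A u = T x
      rw [hAapp, hu, hTapp, heq, map_add, hPfix m hm.1, hPzero m' hm'.1, add_zero]
    · rintro y ⟨x, rfl⟩
      obtain ⟨m, hm, m', hm', heq⟩ := hdecomp (sA x) ⟨x, rfl⟩
      obtain ⟨u', hu' : sA u' = m'⟩ := hm'.2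
      refine ⟨u', ?_⟩
      have : (A - T) x = sA m' := by
        show A x - T x = sA m'
        rw [hTapp, hAapp, heq, map_add, map_add, hPfix m hm.1, hPzero m' hm'.1, add_zero,
          add_sub_cancel_left]
      show A u' = (A - T) x
      rw [hAapp, hu', this]
  tfae_finish
end

section
/- Let A, B be positive bounded operators on a Hilbert space H with R(B) closed. Then R(A+B) = R(A) + R(B) if and only if the pair (A, N(B)) is compatible, i.e., N(B) + (A·N(B))^⊥ = H. -/
open ContinuousLinearMap

variable {H : Type*} [NormedAddCommGroup H] [InnerProductSpace ℂ H] [CompleteSpace H]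

local notation "⟪" x ", " y "⟫" => @inner ℂ _ _ x y

namespace RangeAdd

lemma sa_inner {T : H →L[ℂ] H} (h : IsSelfAdjoint T) (x y : H) :
    ⟪T x, y⟫ = ⟪x, T y⟫ := by
  conv_lhs => rw [← h.adjoint_eq]
  exact ContinuousLinearMap.adjoint_inner_left T y x

/-- Cauchy–Schwarz for the semi-inner product induced by a positive operator. -/
lemma cs {T : H →L[ℂ] H} (hT : T.IsPositive) (x y : H) :
    ‖⟪T x, y⟫‖ ^ 2 ≤ RCLike.re ⟪T x, x⟫ * RCLike.re ⟪T y, y⟫ := by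
  have key : ‖⟪T x, y⟫‖ * ‖⟪T y, x⟫‖ ≤ RCLike.re ⟪T x, x⟫ * RCLike.re ⟪T y, y⟫ :=
    @InnerProductSpace.Core.inner_mul_inner_self_le ℂ H _ _ _
    ⟨⟨fun u v => ⟪T u, v⟫⟩, by
      intro u v
      show (starRingEnd ℂ) ⟪T v, u⟫ = ⟪T u, v⟫
      rw [inner_conj_symm, ← sa_inner hT.isSelfAdjoint], fun u => hT.re_inner_nonneg_left u,
      fun u v w => by show ⟪T (u + v), w⟫ = ⟪T u, w⟫ + ⟪T v, w⟫; simp [inner_add_left],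
      fun u v r => by
        show ⟪T (r • u), v⟫ = (starRingEnd ℂ) r * ⟪T u, v⟫
        simp [inner_smul_left, mul_comm]⟩ x y
  have h2 : ‖⟪T y, x⟫‖ = ‖⟪T x, y⟫‖ := by
    rw [sa_inner hT.isSelfAdjoint y x, norm_inner_symm]
  rw [h2] at key
  nlinarith [key, norm_nonneg ⟪T x, y⟫]

lemma norm_sq_le {T : H →L[ℂ] H} (hT : T.IsPositive) (x : H) :
    ‖T x‖ ^ 2 ≤ ‖T‖ * RCLike.re ⟪T x, x⟫ := by
  have key := cs hT x (T x)
  have h1 : ‖⟪T x, T x⟫‖ = ‖T x‖ ^ 2 := by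
    rw [@inner_self_eq_norm_sq_to_K ℂ]
    simp [norm_pow]
  rw [h1] at key
  have h3 : 0 ≤ RCLike.re ⟪T x, x⟫ := hT.re_inner_nonneg_left x
  have h2 : RCLike.re ⟪T (T x), T x⟫ ≤ ‖T‖ * ‖T x‖ * ‖T x‖ := by
    calc RCLike.re ⟪T (T x), T x⟫ ≤ ‖⟪T (T x), T x⟫‖ := RCLike.re_le_norm _
    _ ≤ ‖T (T x)‖ * ‖T x‖ := norm_inner_le_norm _ _
    _ ≤ (‖T‖ * ‖T x‖) * ‖T x‖ := by
        gcongr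
        exact T.le_opNorm _
    _ = ‖T‖ * ‖T x‖ * ‖T x‖ := by ring
  rcases eq_or_lt_of_le (norm_nonneg (T x)) with h0 | h0
  · rw [← h0]
    simpa using mul_nonneg (norm_nonneg T) h3
  · have h4 := mul_le_mul_of_nonneg_left h2 h3
    have h5 : ‖T x‖ ^ 2 * ‖T x‖ ^ 2 ≤ (‖T‖ * RCLike.re ⟪T x, x⟫) * ‖T x‖ ^ 2 := by
      nlinarith [key, h4]
    exact le_of_mul_le_mul_right h5 (by positivity)


lemma exists_inverse {T : H →L[ℂ] H} {C : ℝ} (hC : 0 < C)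
    (h1 : ∀ h, ‖h‖ ≤ C * ‖T h‖) (h2 : ∀ h, ‖h‖ ≤ C * ‖ContinuousLinearMap.adjoint T h‖) :
    ∃ S : H →L[ℂ] H, T * S = 1 ∧ S * T = 1 := by
  have hker : LinearMap.ker (T : H →ₗ[ℂ] H) = ⊥ := by
    rw [LinearMap.ker_eq_bot']
    intro x hx
    have := h1 x
    rw [show T x = 0 from hx] at this
    simp only [norm_zero, mul_zero] at this
    exact norm_le_zero_iff.mp this
  have hbound : ∀ x, ‖x‖ ≤ (C.toNNReal : ℝ) * ‖T x‖ := by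
    intro x
    rw [Real.coe_toNNReal _ hC.le]
    exact h1 x
  have hclosed : IsClosed (Set.range T) :=
    (T.antilipschitz_of_bound hbound).isClosed_range T.uniformContinuous
  have hclosed' : IsClosed ((LinearMap.range (T : H →ₗ[ℂ] H) : Submodule ℂ H) : Set H) := by
    have : ((LinearMap.range (T : H →ₗ[ℂ] H) : Submodule ℂ H) : Set H) = Set.range T := by
      ext v; simp [LinearMap.mem_range]
    rwa [this]
  have hrange : LinearMap.range (T : H →ₗ[ℂ] H) = ⊤ := by
    haveI : CompleteSpace (LinearMap.range (T : H →ₗ[ℂ] H) : Submodule ℂ H) := hclosed'.completeSpace_coe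
    rw [← Submodule.orthogonal_eq_bot_iff]
    rw [Submodule.eq_bot_iff]
    intro u hu
    have hadj : ContinuousLinearMap.adjoint T u = 0 := by
      have hz : ∀ h : H, ⟪h, ContinuousLinearMap.adjoint T u⟫ = 0 := by
        intro h
        rw [ContinuousLinearMap.adjoint_inner_right]
        exact (Submodule.mem_orthogonal _ u).mp hu _ ⟨h, rfl⟩
      have := hz (ContinuousLinearMap.adjoint T u)
      rwa [inner_self_eq_zero] at this
    have := h2 u
    rw [hadj] at this
    simp only [norm_zero, mul_zero] at this
    exact norm_le_zero_iff.mp this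
  let e := ContinuousLinearEquiv.ofBijective T hker hrange
  refine ⟨(e.symm : H →L[ℂ] H), ?_, ?_⟩
  · ext x
    have : T ((e.symm : H →L[ℂ] H) x) = e (e.symm x) := rfl
    simp only [ContinuousLinearMap.mul_apply, ContinuousLinearMap.one_apply, this,
      ContinuousLinearEquiv.apply_symm_apply]
  · ext x
    have : (e.symm : H →L[ℂ] H) (T x) = e.symm (e x) := rfl
    simp only [ContinuousLinearMap.mul_apply, ContinuousLinearMap.one_apply, this,
      ContinuousLinearEquiv.symm_apply_apply]

lemma exists_inverse_coercive {T : H →L[ℂ] H} {c : ℝ} (hc : 0 < c)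
    (hT : ∀ h, c * ‖h‖ ^ 2 ≤ RCLike.re ⟪T h, h⟫) :
    ∃ S : H →L[ℂ] H, T * S = 1 ∧ S * T = 1 := by
  have hb : ∀ (R : H →L[ℂ] H), (∀ h, c * ‖h‖ ^ 2 ≤ RCLike.re ⟪R h, h⟫) → ∀ h, ‖h‖ ≤ c⁻¹ * ‖R h‖ := by
    intro R hR h
    rcases eq_or_lt_of_le (norm_nonneg h) with h0 | h0
    · rw [← h0]; positivity
    · have k1 : c * ‖h‖ ^ 2 ≤ ‖R h‖ * ‖h‖ := by
        calc c * ‖h‖ ^ 2 ≤ RCLike.re ⟪R h, h⟫ := hR h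
        _ ≤ ‖⟪R h, h⟫‖ := RCLike.re_le_norm _
        _ ≤ ‖R h‖ * ‖h‖ := norm_inner_le_norm _ _
      rw [le_inv_mul_iff₀ hc]
      have k2 : (c * ‖h‖) * ‖h‖ ≤ ‖R h‖ * ‖h‖ := by nlinarith [k1]
      exact le_of_mul_le_mul_right k2 h0
  have hadj : ∀ h, c * ‖h‖ ^ 2 ≤ RCLike.re ⟪ContinuousLinearMap.adjoint T h, h⟫ := by
    intro h
    have : ⟪ContinuousLinearMap.adjoint T h, h⟫ = ⟪h, T h⟫ :=
      ContinuousLinearMap.adjoint_inner_left T h h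
    rw [this, inner_re_symm]
    exact hT h
  exact exists_inverse (inv_pos.mpr hc) (hb T hT) (hb _ hadj)


/-- Douglas' factorization (existence of a bounded solution, via the closed graph theorem). -/
lemma douglas {S T : H →L[ℂ] H} (h : ∀ x, ∃ y, T y = S x) :
    ∃ C : H →L[ℂ] H, T * C = S := by
  classical
  set K := LinearMap.ker (T : H →ₗ[ℂ] H) with hK
  haveI : CompleteSpace K := T.isClosed_ker.completeSpace_coe
  let T₀ : (Kᗮ : Submodule ℂ H) →ₗ[ℂ] H := T.toLinearMap.comp Kᗮ.subtype
  have hT₀ : ∀ u : Kᗮ, T₀ u = T (u : H) := fun u => rfl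
  have hinj : Function.Injective T₀ := by
    rintro ⟨a, ha⟩ ⟨b, hb⟩ hab
    have hTab : T a = T b := hab
    have hmem : a - b ∈ K := LinearMap.mem_ker.mpr (by show T (a - b) = 0; rw [map_sub, hTab, sub_self])
    have hmem2 : a - b ∈ Kᗮ := sub_mem ha hb
    have h0 : a - b = 0 := by
      have := (Submodule.mem_orthogonal K (a - b)).mp hmem2 (a - b) hmem
      rwa [inner_self_eq_zero] at this
    exact Subtype.ext (sub_eq_zero.mp h0)
  have hmem : ∀ x, S x ∈ LinearMap.range T₀ := by
    intro x
    obtain ⟨y, hy⟩ := h x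
    refine ⟨⟨y - (K.orthogonalProjectionOnto y : H), Submodule.sub_starProjection_mem_orthogonal y⟩, ?_⟩
    have hz : T ((K.orthogonalProjectionOnto y : H)) = 0 :=
      LinearMap.mem_ker.mp (K.orthogonalProjectionOnto y).2
    rw [hT₀]
    simp only [map_sub, hz, sub_zero]
    exact hy
  let e := LinearEquiv.ofInjective T₀ hinj
  let C₀ : H →ₗ[ℂ] H :=
    Kᗮ.subtype ∘ₗ (e.symm.toLinearMap ∘ₗ ((S : H →ₗ[ℂ] H).codRestrict (LinearMap.range T₀) hmem))
  have hTC : ∀ x, T (C₀ x) = S x := by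
    intro x
    have h1 : T₀ (e.symm ⟨S x, hmem x⟩) = S x := by
      have h2 := e.apply_symm_apply ⟨S x, hmem x⟩
      have h3 : ((e (e.symm ⟨S x, hmem x⟩)) : H) = S x := by rw [h2]
      rwa [LinearEquiv.ofInjective_apply] at h3
    exact h1
  have hmemC : ∀ x, C₀ x ∈ Kᗮ := by
    intro x
    exact (e.symm ((S : H →ₗ[ℂ] H).codRestrict (LinearMap.range T₀) hmem x)).2
  have hcont : Continuous C₀ := by
    apply LinearMap.continuous_of_seq_closed_graph
    intro u x y hu hy
    have hyK : y ∈ Kᗮ := by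
      have hc : IsClosed ((Kᗮ : Submodule ℂ H) : Set H) := Submodule.isClosed_orthogonal K
      exact hc.mem_of_tendsto hy (Filter.Eventually.of_forall fun n => hmemC (u n))
    have hTy : T y = S x := by
      have l1 : Filter.Tendsto (fun n => T (C₀ (u n))) Filter.atTop (nhds (T y)) :=
        (T.continuous.tendsto y).comp hy
      have l2 : (fun n => T (C₀ (u n))) = fun n => S (u n) := funext fun n => hTC (u n)
      have l3 : Filter.Tendsto (fun n => S (u n)) Filter.atTop (nhds (S x)) :=
        (S.continuous.tendsto x).comp hu
      rw [l2] at l1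
      exact tendsto_nhds_unique l1 l3
    have heq : T₀ ⟨y, hyK⟩ = T₀ ⟨C₀ x, hmemC x⟩ := by
      show T y = T (C₀ x)
      rw [hTy, hTC]
    exact congrArg Subtype.val (hinj heq)
  exact ⟨⟨C₀, hcont⟩, by ext x; exact hTC x⟩

/-- If `X, Y` are positive then `1 + X*Y` is bounded below. -/
lemma one_add_bddBelow {X Y : H →L[ℂ] H} (hX : X.IsPositive) (hY : Y.IsPositive) (w : H) :
    ‖w‖ ≤ (1 + ‖X‖ * ‖Y‖) * ‖(1 + X * Y) w‖ := by
  set r := ‖(1 + X * Y) w‖ with hr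
  have hYw : ‖Y w‖ ≤ ‖Y‖ * r := by
    have h1 : ‖Y w‖ ^ 2 ≤ ‖Y‖ * RCLike.re ⟪Y w, w⟫ := norm_sq_le hY w
    have h2 : RCLike.re ⟪Y w, w⟫ ≤ RCLike.re ⟪(1 + X * Y) w, Y w⟫ := by
      have he : ⟪(1 + X * Y) w, Y w⟫ = ⟪w, Y w⟫ + ⟪X (Y w), Y w⟫ := by
        simp [ContinuousLinearMap.add_apply, ContinuousLinearMap.mul_apply,
          ContinuousLinearMap.one_apply, inner_add_left]
      rw [he, map_add, inner_re_symm]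
      have := hX.re_inner_nonneg_left (Y w)
      linarith
    have h3 : RCLike.re ⟪(1 + X * Y) w, Y w⟫ ≤ r * ‖Y w‖ := by
      calc RCLike.re ⟪(1 + X * Y) w, Y w⟫ ≤ ‖⟪(1 + X * Y) w, Y w⟫‖ := RCLike.re_le_norm _
      _ ≤ ‖(1 + X * Y) w‖ * ‖Y w‖ := norm_inner_le_norm _ _
      _ = r * ‖Y w‖ := by rw [hr]
    rcases eq_or_lt_of_le (norm_nonneg (Y w)) with h0 | h0
    · rw [← h0]
      have : (0:ℝ) ≤ ‖Y‖ * r := by positivity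
      linarith
    · have h5 := mul_le_mul_of_nonneg_left (h2.trans h3) (norm_nonneg Y)
      have h4 : ‖Y w‖ * ‖Y w‖ ≤ (‖Y‖ * r) * ‖Y w‖ := by nlinarith [h1, h5]
      exact le_of_mul_le_mul_right h4 h0
  have hw : w = (1 + X * Y) w - X (Y w) := by
    simp [ContinuousLinearMap.add_apply, ContinuousLinearMap.mul_apply,
      ContinuousLinearMap.one_apply]
  calc ‖w‖ = ‖(1 + X * Y) w - X (Y w)‖ := by rw [← hw]
  _ ≤ r + ‖X (Y w)‖ := by
      rw [hr]
      exact norm_sub_le _ _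
  _ ≤ r + ‖X‖ * (‖Y‖ * r) := by
      have := (X.le_opNorm (Y w)).trans (mul_le_mul_of_nonneg_left hYw (norm_nonneg X))
      linarith
  _ = (1 + ‖X‖ * ‖Y‖) * r := by ring

/-- If `X, Y` are positive then `1 + X*Y` is invertible. -/
lemma one_add_invertible {X Y : H →L[ℂ] H} (hX : X.IsPositive) (hY : Y.IsPositive) :
    ∃ S : H →L[ℂ] H, (1 + X * Y) * S = 1 ∧ S * (1 + X * Y) = 1 := by
  have hCpos : (0:ℝ) < 1 + ‖X‖ * ‖Y‖ := by positivity
  apply exists_inverse hCpos (one_add_bddBelow hX hY)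
  intro h
  have hadj : ContinuousLinearMap.adjoint (1 + X * Y) = 1 + Y * X := by
    rw [← ContinuousLinearMap.star_eq_adjoint]
    rw [star_add, star_one, star_mul, hX.isSelfAdjoint.star_eq, hY.isSelfAdjoint.star_eq]
  rw [hadj]
  have := one_add_bddBelow hY hX h
  calc ‖h‖ ≤ (1 + ‖Y‖ * ‖X‖) * ‖(1 + Y * X) h‖ := this
  _ = (1 + ‖X‖ * ‖Y‖) * ‖(1 + Y * X) h‖ := by ring


end RangeAdd

set_option maxHeartbeats 1600000 in
open RangeAdd in
/-- For positive `A, B` with `R(B)` closed: `R(A+B) = R(A) + R(B)` iff the pair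
`(A, N(B))` is compatible, i.e. `N(B) + (A(N(B)))^⊥ = H`. -/
theorem range_additivity_iff_compatible (A B : H →L[ℂ] H)
    (hA : A.IsPositive) (hB : B.IsPositive)
    (hRB : IsClosed ((LinearMap.range (B : H →ₗ[ℂ] H) : Submodule ℂ H) : Set H)) :
    LinearMap.range ((A + B : H →L[ℂ] H) : H →ₗ[ℂ] H) = LinearMap.range (A : H →ₗ[ℂ] H) ⊔ LinearMap.range (B : H →ₗ[ℂ] H) ↔
      LinearMap.ker (B : H →ₗ[ℂ] H) ⊔ (Submodule.map (A : H →ₗ[ℂ] H) (LinearMap.ker (B : H →ₗ[ℂ] H)))ᗮ = ⊤ := by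
  classical
  have hAsa : IsSelfAdjoint A := hA.isSelfAdjoint
  have hBsa : IsSelfAdjoint B := hB.isSelfAdjoint
  set N : Submodule ℂ H := LinearMap.ker (B : H →ₗ[ℂ] H) with hNdef
  haveI : CompleteSpace N := B.isClosed_ker.completeSpace_coe
  haveI : CompleteSpace (Nᗮ : Submodule ℂ H) := N.isClosed_orthogonal.completeSpace_coe
  set P : H →L[ℂ] H := Nᗮ.subtypeL ∘L Nᗮ.orthogonalProjectionOnto with hPdef
  set Q : H →L[ℂ] H := 1 - P with hQdef
  have ap : ∀ (S T : H →L[ℂ] H) (h : H), (S * T) h = S (T h) := fun _ _ _ => rfl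
  have hQapp : ∀ h, Q h = h - P h := fun h => rfl
  have hPQsum : ∀ h, P h + Q h = h := by
    intro h; rw [hQapp]; abel
  have hPsa : IsSelfAdjoint P := isSelfAdjoint_starProjection Nᗮ
  have hQsa : IsSelfAdjoint Q := by
    show star Q = Q
    rw [hQdef, star_sub, star_one, hPsa.star_eq]
  have hPmem : ∀ h, P h ∈ Nᗮ := fun h => (Nᗮ.orthogonalProjectionOnto h).2
  have hPfix : ∀ u, u ∈ Nᗮ → P u = u := fun u hu => Submodule.starProjection_eq_self_iff.mpr hu
  have hPker : ∀ n, n ∈ N → P n = 0 := by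
    intro n hn
    have h1 : Nᗮ.orthogonalProjectionOnto n = 0 :=
      Submodule.orthogonalProjectionOnto_apply_of_mem_orthogonal
        (N.le_orthogonal_orthogonal hn)
    show (Nᗮ.subtypeL (Nᗮ.orthogonalProjectionOnto n) : H) = 0
    rw [h1]; rfl
  have hQmem : ∀ h, Q h ∈ N := by
    intro h
    have h1 := Submodule.sub_starProjection_mem_orthogonal (K := Nᗮ) h
    rw [N.orthogonal_orthogonal] at h1
    exact h1
  have hQfix : ∀ n, n ∈ N → Q n = n := by
    intro n hn; rw [hQapp, hPker n hn, sub_zero]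
  have hQkill : ∀ u, u ∈ Nᗮ → Q u = 0 := by
    intro u hu; rw [hQapp, hPfix u hu, sub_self]
  have hPP : ∀ h, P (P h) = P h := fun h => hPfix _ (hPmem h)
  have hQQ : ∀ h, Q (Q h) = Q h := fun h => hQfix _ (hQmem h)
  have hPQ0 : ∀ h, P (Q h) = 0 := fun h => hPker _ (hQmem h)
  have hQP0 : ∀ h, Q (P h) = 0 := fun h => hQkill _ (hPmem h)
  -- B-related operator identities
  have hBmem : ∀ h, B h ∈ Nᗮ := by
    intro h
    rw [Submodule.mem_orthogonal]
    intro n hn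
    rw [← sa_inner hBsa, show B n = 0 from LinearMap.mem_ker.mp hn, inner_zero_left]
  have hPB : P * B = B := by
    ext h; exact hPfix _ (hBmem h)
  have hBP : B * P = B := by
    have h1 := congrArg star hPB
    rwa [star_mul, hPsa.star_eq, hBsa.star_eq] at h1
  have hBPa : ∀ h, B (P h) = B h := fun h => ContinuousLinearMap.ext_iff.mp hBP h
  have hBQa : ∀ h, B (Q h) = 0 := fun h => LinearMap.mem_ker.mp (hQmem h)
  have hQBa : ∀ h, Q (B h) = 0 := fun h => hQkill _ (hBmem h)
  -- range B = Nᗮ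
  have hRangeB : LinearMap.range (B : H →ₗ[ℂ] H) = Nᗮ := by
    have horth : (LinearMap.range (B : H →ₗ[ℂ] H))ᗮ = N := by
      ext u
      constructor
      · intro hu
        have hz : ∀ h : H, ⟪h, B u⟫ = 0 := by
          intro h
          rw [← sa_inner hBsa]
          exact (Submodule.mem_orthogonal _ u).mp hu (B h) (LinearMap.mem_range_self (B : H →ₗ[ℂ] H) h)
        have := hz (B u)
        rw [inner_self_eq_zero] at this
        exact LinearMap.mem_ker.mpr this
      · intro hu
        rw [Submodule.mem_orthogonal]
        rintro v ⟨h, rfl⟩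
        rw [show (B : H →ₗ[ℂ] H) h = B h from rfl, sa_inner hBsa, show B u = 0 from LinearMap.mem_ker.mp hu, inner_zero_right]
    calc LinearMap.range (B : H →ₗ[ℂ] H) = (LinearMap.range (B : H →ₗ[ℂ] H)).topologicalClosure :=
          (hRB.submodule_topologicalClosure_eq).symm
    _ = ((LinearMap.range (B : H →ₗ[ℂ] H))ᗮ)ᗮ := (Submodule.orthogonal_orthogonal_eq_closure _).symm
    _ = Nᗮ := by rw [horth]
  -- coercivity of B on Nᗮ
  obtain ⟨c, hc, hcoer⟩ :
      ∃ c : ℝ, 0 < c ∧ ∀ h, c * ‖P h‖ ^ 2 ≤ RCLike.re ⟪B h, h⟫ := by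
    by_cases hB0 : B = 0
    · refine ⟨1, one_pos, ?_⟩
      intro h
      have hN : N = ⊤ := by
        rw [hNdef, hB0]; exact LinearMap.ker_zero
      have hPh : P h = 0 := by
        have := hPmem h
        rw [hN, Submodule.top_orthogonal_eq_bot, Submodule.mem_bot] at this
        exact this
      rw [hPh, hB0]
      simp
    · haveI : CompleteSpace (LinearMap.range (B : H →ₗ[ℂ] H) : Submodule ℂ H) := hRB.completeSpace_coe
      have hmemr : ∀ x : (Nᗮ : Submodule ℂ H), (B.comp Nᗮ.subtypeL) x ∈ LinearMap.range (B : H →ₗ[ℂ] H) :=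
        fun x => LinearMap.mem_range_self (B : H →ₗ[ℂ] H) _
      let Br : (Nᗮ : Submodule ℂ H) →L[ℂ] (LinearMap.range (B : H →ₗ[ℂ] H) : Submodule ℂ H) :=
        (B.comp Nᗮ.subtypeL).codRestrict _ hmemr
      have hker : LinearMap.ker (Br : (Nᗮ : Submodule ℂ H) →ₗ[ℂ] (LinearMap.range (B : H →ₗ[ℂ] H) : Submodule ℂ H)) = ⊥ := by
        rw [LinearMap.ker_eq_bot']
        intro u hu
        have h1 : B (u : H) = 0 := congrArg Subtype.val hu
        have h2 : (u : H) ∈ N := LinearMap.mem_ker.mpr h1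
        have h3 : ⟪(u : H), (u : H)⟫ = 0 :=
          (Submodule.mem_orthogonal N (u : H)).mp u.2 (u : H) h2
        exact Subtype.ext (inner_self_eq_zero.mp h3)
      have hrange : LinearMap.range (Br : (Nᗮ : Submodule ℂ H) →ₗ[ℂ] (LinearMap.range (B : H →ₗ[ℂ] H) : Submodule ℂ H)) = ⊤ := by
        rw [LinearMap.range_eq_top]
        rintro ⟨v, hv⟩
        obtain ⟨h, rfl⟩ := hv
        exact ⟨⟨P h, hPmem h⟩, Subtype.ext (hBPa h)⟩
      let e := ContinuousLinearEquiv.ofBijective Br hker hrange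
      set Cb : ℝ := ‖(e.symm : (LinearMap.range (B : H →ₗ[ℂ] H) : Submodule ℂ H) →L[ℂ] (Nᗮ : Submodule ℂ H))‖ + 1
        with hCbdef
      have hCb : 0 < Cb := by positivity
      have hbb : ∀ u, u ∈ Nᗮ → ‖u‖ ≤ Cb * ‖B u‖ := by
        intro u hu
        have h1 : ‖u‖ = ‖e.symm (e ⟨u, hu⟩)‖ := by rw [e.symm_apply_apply]; rfl
        have h2 : ‖e.symm (e ⟨u, hu⟩)‖ ≤
            ‖(e.symm : (LinearMap.range (B : H →ₗ[ℂ] H) : Submodule ℂ H) →L[ℂ] (Nᗮ : Submodule ℂ H))‖ *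
            ‖e ⟨u, hu⟩‖ :=
          (e.symm : (LinearMap.range (B : H →ₗ[ℂ] H) : Submodule ℂ H) →L[ℂ] (Nᗮ : Submodule ℂ H)).le_opNorm _
        have h3 : ‖e ⟨u, hu⟩‖ = ‖B u‖ := rfl
        rw [h3] at h2
        rw [h1]
        calc _ ≤ _ := h2
        _ ≤ Cb * ‖B u‖ := by
            have : (0:ℝ) ≤ ‖B u‖ := norm_nonneg _
            nlinarith [this]
      have hBnorm : (0:ℝ) < ‖B‖ := by
        rcases eq_or_lt_of_le (norm_nonneg B) with h0 | h0
        · exact absurd (ContinuousLinearMap.opNorm_zero_iff B |>.mp h0.symm) hB0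
        · exact h0
      refine ⟨(Cb ^ 2 * ‖B‖)⁻¹, by positivity, ?_⟩
      intro h
      have hBh : RCLike.re ⟪B h, h⟫ = RCLike.re ⟪B (P h), P h⟫ := by
        have hsplit : ⟪B h, P h⟫ + ⟪B h, Q h⟫ = ⟪B h, h⟫ := by
          rw [← inner_add_right, hPQsum]
        have hz : ⟪B h, Q h⟫ = 0 := by
          rw [sa_inner hBsa, hBQa, inner_zero_right]
        rw [← hsplit, hz, add_zero, hBPa]
      have key1 : ‖B (P h)‖ ^ 2 ≤ ‖B‖ * RCLike.re ⟪B (P h), P h⟫ := norm_sq_le hB (P h)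
      have key2 : ‖P h‖ ≤ Cb * ‖B (P h)‖ := hbb _ (hPmem h)
      have key3 : ‖P h‖ ^ 2 ≤ Cb ^ 2 * ‖B (P h)‖ ^ 2 := by
        nlinarith [key2, norm_nonneg (P h), norm_nonneg (B (P h)), hCb]
      have key4 := mul_le_mul_of_nonneg_left key1 (sq_nonneg Cb)
      rw [hBh, inv_mul_le_iff₀ (by positivity)]
      nlinarith [key3, key4]
  -- the operator G and its inverse
  set G : H →L[ℂ] H := P * A * P + B + Q with hGdef
  have hGapp : ∀ h, G h = P (A (P h)) + B h + Q h := fun h => rfl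
  have hGsa : IsSelfAdjoint G := by
    show star G = G
    rw [hGdef]
    simp only [star_add, star_mul, hPsa.star_eq, hQsa.star_eq, hBsa.star_eq, hAsa.star_eq,
      mul_assoc]
  have hpyth : ∀ h, ‖h‖ ^ 2 = ‖P h‖ ^ 2 + ‖Q h‖ ^ 2 := by
    intro h
    have horth : ⟪P h, Q h⟫ = 0 := by
      rw [inner_eq_zero_symm]
      exact (Submodule.mem_orthogonal N (P h)).mp (hPmem h) (Q h) (hQmem h)
    have hns := norm_add_sq (𝕜 := ℂ) (P h) (Q h)
    rw [hPQsum h, horth] at hns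
    simpa using hns
  have hQinner : ∀ h, RCLike.re ⟪Q h, h⟫ = ‖Q h‖ ^ 2 := by
    intro h
    have hsplit : ⟪Q h, P h⟫ + ⟪Q h, Q h⟫ = ⟪Q h, h⟫ := by
      rw [← inner_add_right, hPQsum]
    have h1 : ⟪Q h, P h⟫ = 0 :=
      (Submodule.mem_orthogonal N (P h)).mp (hPmem h) (Q h) (hQmem h)
    rw [← hsplit, h1, zero_add, inner_self_eq_norm_sq]
  have hGdec : ∀ h, RCLike.re ⟪G h, h⟫ =
      RCLike.re ⟪A (P h), P h⟫ + RCLike.re ⟪B h, h⟫ + ‖Q h‖ ^ 2 := by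
    intro h
    rw [hGapp, inner_add_left, inner_add_left, sa_inner hPsa (A (P h)) h,
      map_add, map_add, hQinner]
  have hGcoer : ∀ h, min c 1 * ‖h‖ ^ 2 ≤ RCLike.re ⟪G h, h⟫ := by
    intro h
    rw [hGdec]
    have h1 : 0 ≤ RCLike.re ⟪A (P h), P h⟫ := hA.re_inner_nonneg_left (P h)
    have h2 := hcoer h
    have h3 := hpyth h
    have h4 : min c 1 ≤ c := min_le_left _ _
    have h5 : min c 1 ≤ 1 := min_le_right _ _
    nlinarith [sq_nonneg ‖P h‖, sq_nonneg ‖Q h‖, lt_min hc one_pos]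
  obtain ⟨Gi, hGi1, hGi2⟩ := exists_inverse_coercive (lt_min hc one_pos) hGcoer
  have hGisa : IsSelfAdjoint Gi := by
    have h1 : star Gi * G = 1 := by
      have := congrArg star hGi1
      rwa [star_mul, hGsa.star_eq, star_one] at this
    show star Gi = Gi
    calc star Gi = star Gi * (G * Gi) := by rw [hGi1, mul_one]
    _ = (star Gi * G) * Gi := by rw [mul_assoc]
    _ = Gi := by rw [h1, one_mul]
  have hPBa : ∀ h, P (B h) = B h := fun h => hPfix _ (hBmem h)
  have hPPop : P * P = P := by ext h; exact hPP h
  have hstarQAQ : star (Q * A * Q) = Q * A * Q := by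
    simp only [star_mul, hQsa.star_eq, hAsa.star_eq]
    rw [← mul_assoc]
  have hstarQAP : star (Q * A * P) = P * A * Q := by
    simp only [star_mul, hQsa.star_eq, hPsa.star_eq, hAsa.star_eq]
    rw [← mul_assoc]
  have hGP : P * G = G * P := by
    ext h
    show P (G h) = G (P h)
    rw [hGapp, hGapp]
    simp only [map_add, hPP, hPBa, hPQ0, hQP0, hBPa, add_zero]
  have hGiP : Gi * P = P * Gi := by
    have hPgi : P = (P * G) * Gi := by rw [mul_assoc, hGi1, mul_one]
    calc Gi * P = Gi * ((P * G) * Gi) := by rw [← hPgi]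
    _ = Gi * ((G * P) * Gi) := by rw [hGP]
    _ = ((Gi * G) * P) * Gi := by rw [← mul_assoc, ← mul_assoc]
    _ = P * Gi := by rw [hGi2, one_mul]
  have hGiPa : ∀ h, Gi (P h) = P (Gi h) := fun h => ContinuousLinearMap.ext_iff.mp hGiP h
  have hGipos : ∀ u, 0 ≤ RCLike.re ⟪Gi u, u⟫ := by
    intro u
    have h1 : u = G (Gi u) := (ContinuousLinearMap.ext_iff.mp hGi1 u).symm
    calc (0:ℝ) ≤ min c 1 * ‖Gi u‖ ^ 2 := by positivity
    _ ≤ RCLike.re ⟪G (Gi u), Gi u⟫ := hGcoer (Gi u)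
    _ = RCLike.re ⟪Gi u, u⟫ := by
        conv_lhs => rw [sa_inner hGsa, ← h1]
  -- now split the iff
  constructor
  · -- range additivity → compatibility
    intro hEq
    have hstarPAQ : star (P * A * Q) = Q * A * P := by
      have h0 := congrArg star hstarQAP
      rw [star_star] at h0
      exact h0.symm
    set m : H →L[ℂ] H := (Q * A * P) * Gi * (P * A * Q) with hmdef
    set β : H →L[ℂ] H := Q * A * Q - m with hβdef
    have hXβ : ∀ h, ∃ k, β k = (Q * A * P) h := by
      intro h
      have hmem : (Q * A * P) h ∈ LinearMap.range ((A + B : H →L[ℂ] H) : H →ₗ[ℂ] H) := by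
        rw [hEq]
        have h1 : (Q * A * P) h = A (P h) - P (A (P h)) := rfl
        rw [h1]
        apply Submodule.sub_mem
        · exact Submodule.mem_sup_left (LinearMap.mem_range_self (A : H →ₗ[ℂ] H) (P h))
        · apply Submodule.mem_sup_right
          rw [hRangeB]
          exact hPmem (A (P h))
      obtain ⟨k, hk⟩ := hmem
      refine ⟨k, ?_⟩
      have h0 : P ((A + B) k) = 0 := by
        rw [show (A + B) k = (Q * A * P) h from hk]
        show P (Q (A (P h))) = 0
        exact hPQ0 _
      have hAk : A k = A (P k) + A (Q k) := by
        conv_lhs => rw [← hPQsum k]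
        rw [map_add]
      have h0' : P (A (P k)) + P (A (Q k)) + B k = 0 := by
        have e : P ((A + B) k) = P (A (P k)) + P (A (Q k)) + B k := by
          show P (A k + B k) = _
          rw [hAk, map_add, map_add, hPBa]
        rw [← e, h0]
      have hGPk : G (P k) = - (P (A (Q k))) := by
        rw [hGapp, hPP, hBPa, hQP0, add_zero, eq_neg_iff_add_eq_zero]
        have : P (A (P k)) + B k + P (A (Q k)) = P (A (P k)) + P (A (Q k)) + B k := by abel
        rw [this, h0']
      have hPk2 : P k = - Gi (P (A (Q k))) := by
        have h1 : Gi (G (P k)) = P k := ContinuousLinearMap.ext_iff.mp hGi2 (P k)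
        rw [← h1, hGPk, map_neg]
      have hQAk : (Q * A * P) h = Q (A (P k)) + Q (A (Q k)) := by
        have h2 : Q ((A + B) k) = (Q * A * P) h := by
          rw [show (A + B) k = (Q * A * P) h from hk]
          exact hQQ (A (P h))
        rw [← h2]
        show Q (A k + B k) = _
        rw [hAk, map_add, map_add, hQBa, add_zero]
      set v := P (A (Q k)) with hvdef
      have hPv : P v = v := hPP _
      have hPGiv : P (Gi v) = Gi v := by
        rw [← hGiPa v, hPv]
      have e2 : m k = Q (A (Gi v)) := by
        show Q (A (P (Gi v))) = Q (A (Gi v))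
        rw [hPGiv]
      have e3 : Q (A (P k)) = - Q (A (Gi v)) := by
        rw [hPk2, map_neg, map_neg]
      have e1 : β k = Q (A (Q k)) - m k := rfl
      rw [e1, e2, hQAk, e3]
      abel
    obtain ⟨z, hz⟩ := douglas hXβ
    have hmsa : star m = m := by
      rw [hmdef, star_mul ((Q * A * P) * Gi) (P * A * Q), star_mul (Q * A * P) Gi,
        hstarPAQ, hstarQAP, hGisa.star_eq, ← mul_assoc]
    have hβsa : IsSelfAdjoint β := by
      show star β = β
      rw [hβdef, star_sub, hstarQAQ, hmsa]
    have hβpos : β.IsPositive := by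
      refine isPositive_def'.mpr ⟨hβsa, ?_⟩
      intro h
      show 0 ≤ RCLike.re ⟪β h, h⟫
      set v := P (A (Q h)) with hvdef
      have hPv : P v = v := hPP _
      set g := Gi v with hgdef
      have hPg : P g = g := by
        rw [hgdef, ← hGiPa v, hPv]
      have e0 : β h = (Q * A * Q) h - m h := rfl
      have e2 : ⟪(Q * A * Q) h, h⟫ = ⟪A (Q h), Q h⟫ := by
        show ⟪Q (A (Q h)), h⟫ = _
        rw [sa_inner hQsa]
      have e3 : ⟪m h, h⟫ = ⟪g, v⟫ := by
        show ⟪(Q * A * P) (Gi v), h⟫ = ⟪g, v⟫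
        have a0 : (Q * A * P) (Gi v) = (ContinuousLinearMap.adjoint (P * A * Q)) (Gi v) := by
          rw [← ContinuousLinearMap.star_eq_adjoint, hstarPAQ]
        rw [a0, ContinuousLinearMap.adjoint_inner_left]
        rfl
      have t1 : ⟪g, v⟫ = ⟪A g, Q h⟫ := by
        calc ⟪g, v⟫ = ⟪g, P (A (Q h))⟫ := by rw [hvdef]
        _ = ⟪P g, A (Q h)⟫ := (sa_inner hPsa g (A (Q h))).symm
        _ = ⟪g, A (Q h)⟫ := by rw [hPg]
        _ = ⟪A g, Q h⟫ := (sa_inner hAsa g (Q h)).symm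
      have t3 : 0 ≤ RCLike.re ⟪g, v⟫ := hGipos v
      have t2 : RCLike.re ⟪A g, g⟫ ≤ RCLike.re ⟪g, v⟫ := by
        have u1 : RCLike.re ⟪G g, g⟫ =
            RCLike.re ⟪A g, g⟫ + RCLike.re ⟪B g, g⟫ := by
          have := hGdec g
          rw [hPg] at this
          have hQg : Q g = 0 := by
            rw [← hPg]
            exact hQP0 g
          rw [hQg] at this
          simpa using this
        have u2 : RCLike.re ⟪G g, g⟫ = RCLike.re ⟪g, v⟫ := by
          have hGg : G g = v := by
            rw [hgdef]
            exact ContinuousLinearMap.ext_iff.mp hGi1 v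
          rw [hGg, inner_re_symm]
        have u3 : 0 ≤ RCLike.re ⟪B g, g⟫ := hB.re_inner_nonneg_left g
        linarith
      have t6 : 0 ≤ RCLike.re ⟪A (Q h), Q h⟫ := hA.re_inner_nonneg_left (Q h)
      have t4 := cs hA g (Q h)
      have t4a : RCLike.re ⟪g, v⟫ ≤ ‖⟪A g, Q h⟫‖ := by
        rw [t1]
        exact RCLike.re_le_norm _
      have t5 : (RCLike.re ⟪g, v⟫) ^ 2 ≤ ‖⟪A g, Q h⟫‖ ^ 2 := by
        nlinarith [t4a, t3, norm_nonneg ⟪A g, Q h⟫]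
      have t8 := mul_le_mul_of_nonneg_right t2 t6
      have t7 : (RCLike.re ⟪g, v⟫) ^ 2 ≤ (RCLike.re ⟪g, v⟫) * RCLike.re ⟪A (Q h), Q h⟫ := by
        linarith [t4, t5, t8]
      have t9 : RCLike.re ⟪g, v⟫ ≤ RCLike.re ⟪A (Q h), Q h⟫ := by
        nlinarith [t7, t3, t6]
      rw [e0, inner_sub_left, map_sub, e2, e3]
      linarith
    have hzpos : (z * Gi * star z).IsPositive := by
      refine isPositive_def'.mpr ⟨?_, ?_⟩
      · show star (z * Gi * star z) = z * Gi * star z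
        simp only [star_mul, star_star, hGisa.star_eq, mul_assoc]
      · intro hh
        show 0 ≤ RCLike.re ⟪(z * Gi * star z) hh, hh⟫
        have e : ⟪(z * Gi * star z) hh, hh⟫ = ⟪Gi (star z hh), star z hh⟫ := by
          show ⟪z (Gi (star z hh)), hh⟫ = _
          have a0 : z (Gi (star z hh)) =
              (ContinuousLinearMap.adjoint (star z)) (Gi (star z hh)) := by
            rw [← ContinuousLinearMap.star_eq_adjoint, star_star]
          rw [a0, ContinuousLinearMap.adjoint_inner_left]
        rw [e]
        exact hGipos _
    have hzstar : star z * β = P * A * Q := by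
      have := congrArg star hz
      rwa [star_mul, hβsa.star_eq, hstarQAP] at this
    have hmfac : m = β * (z * Gi * star z) * β := by
      rw [hmdef, ← hz, ← hzstar]
      simp only [mul_assoc]
    have hKfac : β * (1 + (z * Gi * star z) * β) = Q * A * Q := by
      rw [mul_add, mul_one, ← mul_assoc, ← hmfac, hβdef]
      exact sub_add_cancel _ _
    obtain ⟨Ji, hJi1, hJi2⟩ := one_add_invertible hzpos hβpos
    have hfinal : ∀ h, Q (A (P h)) = Q (A (Q (Ji (z h)))) := by
      intro h
      calc Q (A (P h)) = (β * z) h := by rw [hz]; exact rfl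
      _ = β (z h) := rfl
      _ = β (((1 + (z * Gi * star z) * β) * Ji) (z h)) := by rw [hJi1]; rfl
      _ = (β * (1 + (z * Gi * star z) * β)) (Ji (z h)) := rfl
      _ = (Q * A * Q) (Ji (z h)) := by rw [hKfac]
      _ = Q (A (Q (Ji (z h)))) := rfl
    rw [eq_top_iff]
    rintro h -
    set n₀ := Ji (z h) with hn₀def
    have hQAw : Q (A (P h - Q n₀)) = 0 := by
      rw [map_sub, map_sub, hfinal h, sub_self]
    refine Submodule.mem_sup.mpr ⟨Q h + Q n₀, ?_, P h - Q n₀, ?_, ?_⟩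
    · exact Submodule.add_mem N (hQmem h) (hQmem n₀)
    · rw [Submodule.mem_orthogonal]
      rintro w ⟨n', hn', rfl⟩
      show ⟪A n', P h - Q n₀⟫ = 0
      rw [sa_inner hAsa]
      have hAw : A (P h - Q n₀) = P (A (P h - Q n₀)) := by
        conv_lhs => rw [← hPQsum (A (P h - Q n₀)), hQAw, add_zero]
      rw [hAw, ← sa_inner hPsa, hPker n' hn', inner_zero_left]
    · calc Q h + Q n₀ + (P h - Q n₀) = P h + Q h := by abel
      _ = h := hPQsum h
  · -- compatibility → range additivity
    intro hCompat
    have hX : ∀ h, ∃ n, (Q * A * Q) n = (Q * A * P) h := by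
      intro h
      have hmem : P h ∈ N ⊔ (Submodule.map (A : H →ₗ[ℂ] H) N)ᗮ := by
        rw [hCompat]; trivial
      obtain ⟨n, hn, w, hw, hsum⟩ := Submodule.mem_sup.mp hmem
      have hAw : Q (A w) = 0 := by
        apply hQkill
        rw [Submodule.mem_orthogonal]
        intro n' hn'
        rw [← sa_inner hAsa]
        exact (Submodule.mem_orthogonal _ w).mp hw (A n')
          (Submodule.mem_map_of_mem hn')
      refine ⟨n, ?_⟩
      show Q (A (Q n)) = Q (A (P h))
      rw [hQfix n hn, ← hsum, map_add, map_add, hAw, add_zero]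
    obtain ⟨y₀, hy₀⟩ := douglas hX
    set y : H →L[ℂ] H := Q * y₀ * P with hydef
    have hyapp : ∀ h, y h = Q (y₀ (P h)) := fun _ => rfl
    have hQy : ∀ h, Q (y h) = y h := fun h => hQQ (y₀ (P h))
    have hya : ∀ h, Q (A (y h)) = Q (A (P h)) := by
      intro h
      have h0 := ContinuousLinearMap.ext_iff.mp hy₀ (P h)
      calc Q (A (y h)) = Q (A (Q (y₀ (P h)))) := by rw [hyapp]
      _ = Q (A (P (P h))) := h0
      _ = Q (A (P h)) := by rw [hPP]
    have hyop : (Q * A * Q) * y = Q * A * P := by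
      ext h
      show Q (A (Q (y h))) = Q (A (P h))
      rw [hQy]
      exact hya h
    have hystar : star y = P * (star y₀ * Q) := by
      rw [hydef]
      simp only [star_mul, hPsa.star_eq, hQsa.star_eq, mul_assoc]
    have hPAQ : P * A * Q = star y * (Q * A * Q) := by
      have h1 := congrArg star hyop
      rw [star_mul, hstarQAQ, hstarQAP] at h1
      exact h1.symm
    set T : H →L[ℂ] H := star y * (Q * A * Q) * y with hTdef
    have hTapp : ∀ h, T h = star y (Q (A (Q (y h)))) := fun _ => rfl
    have hTinner : ∀ h v, ⟪T h, v⟫ = ⟪(Q * A * Q) (y h), y v⟫ := by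
      intro h v
      rw [hTapp]
      have : (star y) (Q (A (Q (y h)))) = (ContinuousLinearMap.adjoint y) (Q (A (Q (y h)))) := by
        rw [ContinuousLinearMap.star_eq_adjoint]
      rw [this, ContinuousLinearMap.adjoint_inner_left]
      rfl
    set K : H →L[ℂ] H := G - T with hKdef
    have hKey : ∀ h, RCLike.re ⟪(Q * A * Q) (y h), y h⟫ ≤ RCLike.re ⟪A (P h), P h⟫ := by
      intro h
      set p := P h with hpd
      set w := y h with hwd
      have hQw : Q w = w := hQy h
      have hQAp : Q (A p) = Q (A w) := (hya h).symm
      have hσ1 : ⟪A p, w⟫ = ⟪A w, w⟫ := by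
        calc ⟪A p, w⟫ = ⟪A p, Q w⟫ := by rw [hQw]
        _ = ⟪Q (A p), w⟫ := (sa_inner hQsa (A p) w).symm
        _ = ⟪Q (A w), w⟫ := by rw [hQAp]
        _ = ⟪A w, Q w⟫ := sa_inner hQsa (A w) w
        _ = ⟪A w, w⟫ := by rw [hQw]
      have hσ2 : RCLike.re ⟪A w, p⟫ = RCLike.re ⟪A w, w⟫ := by
        have h1 : ⟪A w, p⟫ = starRingEnd ℂ ⟪A p, w⟫ := by
          rw [sa_inner hAsa w p, ← inner_conj_symm]
        rw [h1, RCLike.conj_re, hσ1]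
      have hQAQw : RCLike.re ⟪(Q * A * Q) w, w⟫ = RCLike.re ⟪A w, w⟫ := by
        have : (Q * A * Q) w = Q (A (Q w)) := rfl
        rw [this, hQw, sa_inner hQsa (A w) w, hQw]
      have hpos := hA.re_inner_nonneg_left (p - w)
      have hexp : RCLike.re ⟪A (p - w), p - w⟫ =
          RCLike.re ⟪A p, p⟫ - RCLike.re ⟪A w, w⟫ := by
        rw [map_sub, inner_sub_left, inner_sub_right, inner_sub_right]
        rw [map_sub, map_sub, map_sub]
        have e1 : RCLike.re ⟪A p, w⟫ = RCLike.re ⟪A w, w⟫ := by rw [hσ1]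
        rw [e1, hσ2]
        ring
      rw [hQAQw]
      rw [hexp] at hpos
      linarith
    have hKcoer : ∀ h, min c 1 * ‖h‖ ^ 2 ≤ RCLike.re ⟪K h, h⟫ := by
      intro h
      have e0 : K h = G h - T h := rfl
      have e1 : RCLike.re ⟪K h, h⟫ = RCLike.re ⟪G h, h⟫ - RCLike.re ⟪T h, h⟫ := by
        rw [e0, inner_sub_left, map_sub]
      rw [e1, hGdec, hTinner]
      have h1 := hKey h
      have h2 := hcoer h
      have h3 := hpyth h
      have h4 : min c 1 ≤ c := min_le_left _ _
      have h5 : min c 1 ≤ 1 := min_le_right _ _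
      nlinarith [sq_nonneg ‖P h‖, sq_nonneg ‖Q h‖, lt_min hc one_pos]
    obtain ⟨Ki, hKi1, hKi2⟩ := exists_inverse_coercive (lt_min hc one_pos) hKcoer
    have hyP : y * P = y := by
      rw [hydef, mul_assoc, hPPop]
    have hPystar : P * star y = star y := by
      rw [hystar, ← mul_assoc, hPPop]
    have hKP : K * P = P * K := by
      have hTP : T * P = T := by
        rw [hTdef, mul_assoc, hyP]
      have hPT : P * T = T := by
        rw [hTdef, mul_assoc (star y) (Q * A * Q) y,
          ← mul_assoc P (star y) ((Q * A * Q) * y), hPystar]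
      rw [hKdef, sub_mul, mul_sub, hTP, hPT, hGP]
    have hKiP : Ki * P = P * Ki := by
      have hPgi : P = (P * K) * Ki := by rw [mul_assoc, hKi1, mul_one]
      calc Ki * P = Ki * ((P * K) * Ki) := by rw [← hPgi]
      _ = Ki * ((K * P) * Ki) := by rw [hKP]
      _ = ((Ki * K) * P) * Ki := by rw [← mul_assoc, ← mul_assoc]
      _ = P * Ki := by rw [hKi2, one_mul]
    have hBsub : ∀ h, ∃ z, (A + B) z = B h := by
      intro h
      set u := B h with hud
      have hu : P u = u := hPBa h
      set p := Ki u with hpdef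
      have hp : P p = p := by
        rw [hpdef]
        calc P (Ki u) = (P * Ki) u := rfl
        _ = (Ki * P) u := by rw [hKiP]
        _ = Ki (P u) := rfl
        _ = Ki u := by rw [hu]
      refine ⟨p - y p, ?_⟩
      have hsplitz : ∀ v, v = P v + Q v := fun v => (hPQsum v).symm
      have hexp : (A + B) (p - y p) = A p - A (y p) + (B p - B (y p)) := by
        simp only [ContinuousLinearMap.add_apply, map_sub]
        abel
      have hByp : B (y p) = 0 := hBQa (y₀ (P p))
      have hQAp : Q (A p) = Q (A (y p)) := by
        conv_lhs => rw [← hp]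
        exact (hya p).symm
      have hQz : Q ((A + B) (p - y p)) = 0 := by
        rw [hexp, map_add, map_sub, map_sub, hByp, map_zero, hQBa, hQAp]
        abel
      have hPz : P ((A + B) (p - y p)) = u := by
        rw [hexp, map_add, map_sub, map_sub, hByp, map_zero, hPBa]
        have hPAyp : P (A (y p)) = T p := by
          have e2 : P (A (y p)) = P (A (Q (y p))) := by rw [hQy]
          have e3 : P (A (Q (y p))) = (P * A * Q) (y p) := rfl
          rw [e2, e3, hPAQ]
          rfl
        rw [hPAyp]
        have hPAp : P (A p) = (P * A * P) p := by
          conv_lhs => rw [← hp]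
          rfl
        have hKp : K p = u := by
          rw [hpdef]
          calc K (Ki u) = (K * Ki) u := rfl
          _ = u := by rw [hKi1]; rfl
        have hKexp : K p = P (A p) + B p + Q p - T p := by
          rw [hPAp]
          rfl
        have hQp : Q p = 0 := by
          conv_lhs => rw [← hp]
          exact hQP0 p
        rw [← hKp, hKexp, hQp]
        abel
      calc (A + B) (p - y p) = P ((A + B) (p - y p)) + Q ((A + B) (p - y p)) :=
            (hPQsum _).symm
      _ = u + 0 := by rw [hPz, hQz]
      _ = u := add_zero u
    apply le_antisymm
    · rintro v ⟨h, rfl⟩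
      exact Submodule.mem_sup.mpr
        ⟨A h, LinearMap.mem_range_self (A : H →ₗ[ℂ] H) h, B h, LinearMap.mem_range_self (B : H →ₗ[ℂ] H) h, rfl⟩
    · rw [sup_le_iff]
      constructor
      · rintro v ⟨h, rfl⟩
        obtain ⟨z, hz⟩ := hBsub h
        refine ⟨h - z, ?_⟩
        rw [map_sub, show ((A + B : H →L[ℂ] H) : H →ₗ[ℂ] H) z = B h from hz]
        show (A h + B h) - B h = A h
        abel
      · rintro v ⟨h, rfl⟩
        obtain ⟨z, hz⟩ := hBsub h
        exact ⟨z, hz⟩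
end

section
/- Let A be a positive bounded operator on a Hilbert space H and S a closed subspace with orthogonal projection P_S. Then (A, S) is compatible (i.e., S + (A(S))^⊥ = H) if and only if R(A + (I − P_S)) = R(A) + R(I − P_S) = R(A) + S^⊥. -/
section
open ContinuousLinearMap

variable {H : Type*} [NormedAddCommGroup H] [InnerProductSpace ℂ H] [CompleteSpace H]

local notation "⟪" x ", " y "⟫" => @inner ℂ _ _ x y

private theorem aux_le {t s : ℝ} (ht : 0 ≤ t) (hs : 0 ≤ s) (h : t ^ 2 ≤ t * s) : t ≤ s := by
  nlinarith

private theorem aux_swap {R : Type*} [Ring R] {X Y : R} (h : IsUnit (1 - Y * X)) :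
    IsUnit (1 - X * Y) := by
  obtain ⟨w, hw⟩ := h
  have hv : (1 - Y * X) * ↑w⁻¹ = 1 := by rw [← hw]; exact w.mul_inv
  have hv' : (↑w⁻¹ : R) * (1 - Y * X) = 1 := by rw [← hw]; exact w.inv_mul
  refine isUnit_iff_exists.mpr ⟨1 + X * ↑w⁻¹ * Y, ?_, ?_⟩
  · have key : (1 - X * Y) * (1 + X * ↑w⁻¹ * Y) =
        1 + X * ((1 - Y * X) * ↑w⁻¹ - 1) * Y := by noncomm_ring
    rw [key, hv]; simp
  · have key : (1 + X * ↑w⁻¹ * Y) * (1 - X * Y) =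
        1 + X * (↑w⁻¹ * (1 - Y * X) - 1) * Y := by noncomm_ring
    rw [key, hv']; simp

private theorem aux_isUnit_of_coercive {T : H →L[ℂ] H}
    (h : ∀ x : H, ‖x‖ ^ 2 ≤ RCLike.re ⟪T x, x⟫) : IsUnit T := by
  have hbound : ∀ x : H, ‖x‖ ≤ ‖T x‖ := by
    intro x
    rcases eq_or_ne x 0 with rfl | hx
    · simp
    · have h1 : ‖x‖ ^ 2 ≤ ‖T x‖ * ‖x‖ := by
        refine (h x).trans ?_
        calc RCLike.re ⟪T x, x⟫ ≤ ‖(⟪T x, x⟫ : ℂ)‖ := RCLike.re_le_norm _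
          _ ≤ ‖T x‖ * ‖x‖ := norm_inner_le_norm _ _
      have hxpos : (0:ℝ) < ‖x‖ := norm_pos_iff.mpr hx
      nlinarith
  have hker : LinearMap.ker (T : H →ₗ[ℂ] H) = ⊥ := by
    rw [Submodule.eq_bot_iff]
    intro x hx
    have h0 : T x = 0 := hx
    have h1 := hbound x
    rw [h0, norm_zero] at h1
    exact norm_le_zero_iff.mp h1
  have hanti : AntilipschitzWith 1 T := T.antilipschitz_of_bound (by simpa using hbound)
  have hclosed : IsClosed ((LinearMap.range (T : H →ₗ[ℂ] H) : Submodule ℂ H) : Set H) := by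
    rw [LinearMap.coe_range]
    exact hanti.isClosed_range T.uniformContinuous
  haveI : CompleteSpace (LinearMap.range (T : H →ₗ[ℂ] H)) := hclosed.completeSpace_coe
  have horth : (LinearMap.range (T : H →ₗ[ℂ] H))ᗮ = ⊥ := by
    rw [Submodule.eq_bot_iff]
    intro y hy
    have h0 : ⟪T y, y⟫ = 0 := (Submodule.mem_orthogonal _ y).mp hy (T y) ⟨y, rfl⟩
    have : ‖y‖ ^ 2 ≤ 0 := by simpa [h0] using h y
    have : ‖y‖ = 0 := by nlinarith [norm_nonneg y]
    exact norm_eq_zero.mp this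
  have hsurj : LinearMap.range (T : H →ₗ[ℂ] H) = ⊤ := by
    rw [← Submodule.orthogonal_orthogonal (LinearMap.range (T : H →ₗ[ℂ] H)), horth,
      Submodule.bot_orthogonal_eq_top]
  let e := ContinuousLinearEquiv.ofBijective T hker hsurj
  refine isUnit_iff_exists.mpr ⟨(e.symm : H →L[ℂ] H), ?_, ?_⟩
  · ext x
    have h1 : e (e.symm x) = x := e.apply_symm_apply x
    have h2 : e (e.symm x) = T (e.symm x) := by
      exact congrFun (ContinuousLinearEquiv.coeFn_ofBijective T hker hsurj) (e.symm x)
    simpa [mul_apply] using h2.symm.trans h1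
  · ext x
    have h1 : e.symm (e x) = x := e.symm_apply_apply x
    have h2 : e x = T x := congrFun (ContinuousLinearEquiv.coeFn_ofBijective T hker hsurj) x
    rw [h2] at h1
    simpa [mul_apply] using h1

private theorem aux_isUnit_one_add {c : H →L[ℂ] H}
    (hpos : ∀ x : H, 0 ≤ RCLike.re ⟪c x, x⟫) : IsUnit (1 + c) := by
  apply aux_isUnit_of_coercive
  intro x
  have : RCLike.re ⟪(1 + c) x, x⟫ = RCLike.re ⟪x, x⟫ + RCLike.re ⟪c x, x⟫ := by
    simp [inner_add_left]
  rw [this, inner_self_eq_norm_sq]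
  linarith [hpos x]

private theorem aux_cs {A : H →L[ℂ] H} (hA : A.IsPositive) (v w : H) :
    RCLike.re ⟪A v, w⟫ ^ 2 ≤ RCLike.re ⟪A v, v⟫ * RCLike.re ⟪A w, w⟫ := by
  have hsym : ∀ x y : H, ⟪A x, y⟫ = ⟪x, A y⟫ := by
    intro x y
    have := ContinuousLinearMap.adjoint_inner_left A y x
    rwa [ContinuousLinearMap.isSelfAdjoint_iff'.mp hA.isSelfAdjoint] at this
  have key : ∀ r : ℝ, 0 ≤ RCLike.re ⟪A w, w⟫ * (r * r) + 2 * RCLike.re ⟪A v, w⟫ * r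
      + RCLike.re ⟪A v, v⟫ := by
    intro r
    have h0 : 0 ≤ RCLike.re ⟪A (v + (r : ℂ) • w), v + (r : ℂ) • w⟫ := hA.re_inner_nonneg_left _
    have hexp : ⟪A (v + (r : ℂ) • w), v + (r : ℂ) • w⟫ =
        ⟪A v, v⟫ + (r : ℂ) * ⟪A v, w⟫ + (r : ℂ) * (starRingEnd ℂ) ⟪A v, w⟫
          + (r : ℂ) * ((r : ℂ) * ⟪A w, w⟫) := by
      rw [map_add, inner_add_left, inner_add_right, inner_add_right, map_smul,
        inner_smul_left, inner_smul_right, inner_smul_left, inner_smul_right]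
      have h1 : ⟪A w, v⟫ = (starRingEnd ℂ) ⟪A v, w⟫ := by
        rw [hsym w v, inner_conj_symm]
      rw [h1, Complex.conj_ofReal]
      ring
    rw [hexp] at h0
    simp only [RCLike.re_to_complex, Complex.add_re, Complex.mul_re, Complex.ofReal_re,
      Complex.ofReal_im, Complex.conj_re, Complex.conj_im] at h0 ⊢
    nlinarith [h0]
  have hd := discrim_le_zero key
  rw [discrim] at hd
  nlinarith [hd]

private theorem aux_douglas {f g : H →L[ℂ] H} (h : LinearMap.range (f : H →ₗ[ℂ] H) ≤ LinearMap.range (g : H →ₗ[ℂ] H)) :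
    ∃ d : H →L[ℂ] H, f = g * d := by
  set K := LinearMap.ker (g : H →ₗ[ℂ] H) with hKdef
  haveI : CompleteSpace K := (ContinuousLinearMap.isClosed_ker g).completeSpace_coe
  have key : ∀ x : H, ∃! z : H, z ∈ Kᗮ ∧ g z = f x := by
    intro x
    obtain ⟨w, hw⟩ : f x ∈ LinearMap.range (g : H →ₗ[ℂ] H) := h ⟨x, rfl⟩
    replace hw : g w = f x := hw
    refine ⟨w - K.starProjection w,
      ⟨K.sub_starProjection_mem_orthogonal w, ?_⟩, ?_⟩
    · have hmem : (K.starProjection w) ∈ K := K.starProjection_apply_mem w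
      have : g (K.starProjection w) = 0 := hmem
      rw [map_sub, this, hw, sub_zero]
    · rintro z ⟨hz1, hz2⟩
      have hmemK : z - (w - K.starProjection w) ∈ K := by
        have hg : g (w - K.starProjection w) = f x := by
          have hmem : (K.starProjection w) ∈ K := K.starProjection_apply_mem w
          have h0 : g (K.starProjection w) = 0 := hmem
          rw [map_sub, h0, hw, sub_zero]
        show g _ = 0
        rw [map_sub, hz2, hg, sub_self]
      have hmemO : z - (w - K.starProjection w) ∈ Kᗮ :=
        Submodule.sub_mem _ hz1 (K.sub_starProjection_mem_orthogonal w)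
      have h0 : z - (w - K.starProjection w) = 0 :=
        Submodule.disjoint_def.mp (Submodule.orthogonal_disjoint K) _ hmemK hmemO
      exact sub_eq_zero.mp h0
  choose zf hzf using key
  have hmem : ∀ x, zf x ∈ Kᗮ := fun x => (hzf x).1.1
  have happ : ∀ x, g (zf x) = f x := fun x => (hzf x).1.2
  have huniq : ∀ x z, z ∈ Kᗮ → g z = f x → z = zf x := fun x z h1 h2 => (hzf x).2 z ⟨h1, h2⟩
  let d₀ : H →ₗ[ℂ] H :=
    { toFun := zf
      map_add' := fun x y => (huniq (x + y) (zf x + zf y)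
        (Submodule.add_mem _ (hmem x) (hmem y))
        (by rw [map_add, happ, happ, map_add])).symm
      map_smul' := fun r x => (huniq (r • x) (r • zf x)
        (Submodule.smul_mem _ _ (hmem x))
        (by rw [map_smul, happ, map_smul])).symm }
  have hgraph : IsClosed (d₀.graph : Set (H × H)) := by
    have hset : (d₀.graph : Set (H × H)) =
        {p : H × H | p.2 ∈ Kᗮ} ∩ {p : H × H | g p.2 = f p.1} := by
      ext p
      constructor
      · intro hp
        have hp2 : p.2 = zf p.1 := (LinearMap.mem_graph_iff _ _).mp hp
        refine ⟨?_, ?_⟩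
        · show p.2 ∈ Kᗮ
          rw [hp2]; exact hmem _
        · show g p.2 = f p.1
          rw [hp2]; exact happ _
      · rintro ⟨h1, h2⟩
        exact (LinearMap.mem_graph_iff _ _).mpr (huniq p.1 p.2 h1 h2)
    rw [hset]
    refine IsClosed.inter ?_ ?_
    · exact (Submodule.isClosed_orthogonal K).preimage continuous_snd
    · exact isClosed_eq (g.continuous.comp continuous_snd) (f.continuous.comp continuous_fst)
  refine ⟨ContinuousLinearMap.ofIsClosedGraph hgraph, ?_⟩
  ext x
  have hd : (ContinuousLinearMap.ofIsClosedGraph hgraph) x = zf x :=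
    congrFun (ContinuousLinearMap.coeFn_ofIsClosedGraph hgraph) x
  rw [mul_apply_eq_comp, hd, happ]


set_option maxHeartbeats 4000000 in
/-- `(A, S)` is compatible (`S + (A(S))^⊥ = H`) iff
`R(A + (I - P_S)) = R(A) + R(I - P_S) = R(A) + S^⊥`. -/
theorem compatible_iff_range_additivity_proj (A : H →L[ℂ] H) (hA : A.IsPositive)
    (S : Submodule ℂ H) (hS : IsClosed (S : Set H))
    (PS : H →L[ℂ] H) (hPS : IsOrthoProj PS S) :
    S ⊔ (Submodule.map (A : H →ₗ[ℂ] H) S)ᗮ = ⊤ ↔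
      (LinearMap.range ((A + (1 - PS) : H →L[ℂ] H) : H →ₗ[ℂ] H) = LinearMap.range (A : H →ₗ[ℂ] H) ⊔ LinearMap.range ((1 - PS : H →L[ℂ] H) : H →ₗ[ℂ] H) ∧
        LinearMap.range (A : H →ₗ[ℂ] H) ⊔ LinearMap.range ((1 - PS : H →L[ℂ] H) : H →ₗ[ℂ] H) = LinearMap.range (A : H →ₗ[ℂ] H) ⊔ Sᗮ) := by
  obtain ⟨hP2, hPsa', hPrange⟩ := hPS
  have hPsa : star PS = PS := hPsa'
  have hAsa : star A = A := hA.isSelfAdjoint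
  set Q : H →L[ℂ] H := 1 - PS with hQdef
  have happly : ∀ f g : H →L[ℂ] H, f = g → ∀ x, f x = g x := fun f g h x => by rw [h]
  have hmove : ∀ (T : H →L[ℂ] H) (x y : H), ⟪(star T) x, y⟫ = ⟪x, T y⟫ := fun T x y => by
    rw [ContinuousLinearMap.star_eq_adjoint]
    exact ContinuousLinearMap.adjoint_inner_left T y x
  have hresymm : ∀ v w : H, RCLike.re ⟪v, w⟫ = RCLike.re ⟪w, v⟫ := fun v w => by
    rw [← inner_conj_symm v w]
    exact RCLike.conj_re _
  have hQapp : ∀ x : H, Q x = x - PS x := fun x => by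
    rw [hQdef]; simp [sub_apply]
  have hPP : ∀ x : H, PS (PS x) = PS x := fun x => by
    rw [← mul_apply_eq_comp, hP2]
  have hPQsum : ∀ x : H, PS x + Q x = x := fun x => by
    rw [hQapp]; abel
  have hPQ0 : ∀ x : H, PS (Q x) = 0 := fun x => by
    rw [hQapp, map_sub, hPP, sub_self]
  have hQP0 : ∀ x : H, Q (PS x) = 0 := fun x => by
    rw [hQapp, hPP, sub_self]
  have hQQ : ∀ x : H, Q (Q x) = Q x := fun x => by
    rw [hQapp (Q x), hPQ0, sub_zero]
  have hS_P : ∀ s ∈ S, PS s = s := by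
    intro s hs
    rw [← hPrange] at hs
    obtain ⟨y, rfl⟩ := hs
    exact hPP y
  have hPmem : ∀ x : H, PS x ∈ S := fun x => by
    rw [← hPrange]; exact ⟨x, rfl⟩
  have hkerP : ∀ x : H, PS x = 0 ↔ x ∈ Sᗮ := by
    intro x
    constructor
    · intro h0
      rw [Submodule.mem_orthogonal]
      intro u hu
      have h1 : ⟪PS u, x⟫ = ⟪u, PS x⟫ := by
        have := hmove PS u x
        rwa [hPsa] at this
      rw [← hS_P u hu, h1, h0, inner_zero_right]
    · intro hx
      have h2 : ⟪PS (PS x), x⟫ = ⟪PS x, PS x⟫ := by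
        have := hmove PS (PS x) x
        rwa [hPsa] at this
      rw [hPP] at h2
      have h3 : ⟪PS x, x⟫ = 0 := (Submodule.mem_orthogonal _ x).mp hx (PS x) (hPmem x)
      rw [h3] at h2
      exact inner_self_eq_zero.mp h2.symm
  have hQmem : ∀ x : H, Q x ∈ Sᗮ := fun x => (hkerP _).mp (hPQ0 x)
  have hQfix : ∀ x ∈ Sᗮ, Q x = x := fun x hx => by
    rw [hQapp, (hkerP x).mpr hx, sub_zero]
  have hrangeQ : LinearMap.range (Q : H →ₗ[ℂ] H) = Sᗮ := by
    apply le_antisymm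
    · rintro _ ⟨x, rfl⟩; exact hQmem x
    · intro x hx; exact ⟨x, hQfix x hx⟩
  -- the compression operators
  set a : H →L[ℂ] H := PS * A * PS with hadef
  set b : H →L[ℂ] H := PS * A * Q with hbdef
  set c : H →L[ℂ] H := Q * A * Q with hcdef
  have hQsa : star Q = Q := by rw [hQdef, star_sub, star_one, hPsa]
  have hQ2 : Q * Q = Q := by
    rw [hQdef]
    have h1 : (1 - PS) * (1 - PS) = 1 - PS - (PS - PS * PS) := by noncomm_ring
    rw [h1, hP2.eq, sub_self, sub_zero]
  have haapp : ∀ x, a x = PS (A (PS x)) := fun x => by rw [hadef]; simp [mul_apply]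
  have hbapp : ∀ x, b x = PS (A (Q x)) := fun x => by rw [hbdef]; simp [mul_apply]
  have hcapp : ∀ x, c x = Q (A (Q x)) := fun x => by rw [hcdef]; simp [mul_apply]
  have hasa : star a = a := by
    rw [hadef]
    calc star (PS * A * PS) = star PS * (star A * star PS) := by rw [star_mul, star_mul]
    _ = PS * (A * PS) := by rw [hPsa, hAsa]
    _ = PS * A * PS := by rw [mul_assoc]
  have hcsa : star c = c := by
    rw [hcdef]
    calc star (Q * A * Q) = star Q * (star A * star Q) := by rw [star_mul, star_mul]
    _ = Q * (A * Q) := by rw [hQsa, hAsa]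
    _ = Q * A * Q := by rw [mul_assoc]
  have hbstar : star b = Q * A * PS := by
    rw [hbdef]
    calc star (PS * A * Q) = star Q * (star A * star PS) := by rw [star_mul, star_mul]
    _ = Q * (A * PS) := by rw [hQsa, hAsa, hPsa]
    _ = Q * A * PS := by rw [mul_assoc]
  have hbsapp : ∀ x, (star b) x = Q (A (PS x)) := fun x => by rw [hbstar]; simp [mul_apply]
  have hPA : ∀ x, PS (A x) = a x + b x := by
    intro x
    rw [haapp, hbapp, ← map_add, ← map_add, hPQsum]
  have hQA : ∀ x, Q (A x) = (star b) x + c x := by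
    intro x
    rw [hbsapp, hcapp, ← map_add, ← map_add, hPQsum]
  have hdecompA : ∀ x, a x + b x + ((star b) x + c x) = A x := by
    intro x
    rw [← hPA, ← hQA, hPQsum]
  have hapos : ∀ x, 0 ≤ RCLike.re ⟪a x, x⟫ := by
    intro x
    have h1 : ⟪a x, x⟫ = ⟪A (PS x), PS x⟫ := by
      rw [haapp]
      have := hmove PS (A (PS x)) x
      rwa [hPsa] at this
    rw [h1]
    exact hA.re_inner_nonneg_left _
  have hcpos : ∀ x, 0 ≤ RCLike.re ⟪c x, x⟫ := by
    intro x
    have h1 : ⟪c x, x⟫ = ⟪A (Q x), Q x⟫ := by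
      rw [hcapp]
      have := hmove Q (A (Q x)) x
      rwa [hQsa] at this
    rw [h1]
    exact hA.re_inner_nonneg_left _
  -- the invertible operator 1 + c and its inverse u
  have hCunit : IsUnit (1 + c) := aux_isUnit_one_add hcpos
  set u : H →L[ℂ] H := ↑hCunit.unit⁻¹ with hudef
  have hu1 : (1 + c) * u = 1 := hCunit.mul_val_inv
  have hu2 : u * (1 + c) = 1 := hCunit.val_inv_mul
  have huIsUnit : IsUnit u := by rw [hudef]; exact (hCunit.unit⁻¹).isUnit
  have hQc : Q * c = c := by
    rw [hcdef, ← mul_assoc, ← mul_assoc, hQ2]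
  have hcQ : c * Q = c := by
    rw [hcdef, mul_assoc, hQ2]
  have hbQ : b * Q = b := by
    rw [hbdef, mul_assoc, hQ2]
  have hucomm : Q * u = u * Q := by
    have hCQcomm : Commute Q (1 + c) := by
      show Q * (1 + c) = (1 + c) * Q
      rw [mul_add, add_mul, mul_one, one_mul, hQc, hcQ]
    rw [← hCunit.unit_spec] at hCQcomm
    have := hCQcomm.units_inv_right
    rw [← hudef] at this
    exact this
  have hQu : ∀ v, Q (u v) = u (Q v) := fun v => by
    have := happly _ _ hucomm v
    simpa [mul_apply] using this
  have hCsa : star (1 + c) = 1 + c := by rw [star_add, star_one, hcsa]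
  have husa : star u = u := by
    have h1 : star u * (1 + c) = 1 := by
      have h2 := congrArg star hu1
      rw [star_mul, star_one, hCsa] at h2
      exact h2
    calc star u = star u * ((1 + c) * u) := by rw [hu1, mul_one]
    _ = (star u * (1 + c)) * u := by rw [mul_assoc]
    _ = u := by rw [h1, one_mul]
  have hu1app : ∀ w : H, u w + c (u w) = w := by
    intro w
    have := happly _ _ hu1 w
    simpa [mul_apply, add_apply, one_apply] using this
  have hupos : ∀ x, 0 ≤ RCLike.re ⟪u x, x⟫ := by
    intro x
    have h1 : x = u x + c (u x) := (hu1app x).symm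
    have h2 : RCLike.re ⟪u x, x⟫ = RCLike.re ⟪x, u x⟫ := hresymm _ _
    rw [h2]
    nth_rewrite 1 [h1]
    rw [inner_add_left]
    rw [map_add]
    have h3 : RCLike.re ⟪u x, u x⟫ = ‖u x‖ ^ 2 := inner_self_eq_norm_sq _
    have h4 : RCLike.re ⟪c (u x), u x⟫ ≥ 0 := hcpos (u x)
    nlinarith [sq_nonneg ‖u x‖]
  have hu_sum : u * (Q + c) = Q := by
    have hQ1c : Q * (1 + c) = Q + c := by rw [mul_add, mul_one, hQc]
    calc u * (Q + c) = u * (Q * (1 + c)) := by rw [hQ1c]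
    _ = (u * Q) * (1 + c) := by rw [mul_assoc]
    _ = (Q * u) * (1 + c) := by rw [← hucomm]
    _ = Q * (u * (1 + c)) := by rw [mul_assoc]
    _ = Q := by rw [hu2, mul_one]
  have hu_sum_app : ∀ x, u (Q x + c x) = Q x := fun x => by
    have := happly _ _ hu_sum x
    simpa [mul_apply, add_apply] using this
  -- the reduced Schur-complement-type operator m
  set m : H →L[ℂ] H := a - b * u * star b with hmdef
  have hmapp : ∀ x, m x = a x - b (u ((star b) x)) := fun x => by
    rw [hmdef]; simp [mul_apply, sub_apply]
  have hmsa : star m = m := by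
    have h1 : star (b * u * star b) = b * u * star b := by
      rw [star_mul (b * u) (star b), star_mul b u, star_star, husa, ← mul_assoc b u (star b)]
    rw [hmdef, star_sub, hasa, h1]
  have haP : a * PS = a := by rw [hadef, mul_assoc, hP2.eq]
  have hsbP : star b * PS = star b := by rw [hbstar, mul_assoc, hP2.eq]
  have hmP : m * PS = m := by
    rw [hmdef, sub_mul, haP]
    congr 1
    rw [mul_assoc (b * u) (star b) PS, hsbP]
  have hmPapp : ∀ x, m (PS x) = m x := fun x => by
    have := happly _ _ hmP x
    simpa [mul_apply] using this
  have hmpos : ∀ x, 0 ≤ RCLike.re ⟪m x, x⟫ := by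
    intro x
    have ht0 : 0 ≤ RCLike.re ⟪u ((star b) x), (star b) x⟫ := hupos _
    set q : H := (star b) x with hqdef
    set y : H := u q with hydef
    -- re ⟪b y, x⟫ = t
    have e1 : ⟪b y, x⟫ = ⟪y, q⟫ := by
      have := hmove (star b) y x
      rwa [star_star, ← hqdef] at this
    -- re ⟪b y, x⟫ = re ⟪A (Q y), PS x⟫
    have e2 : ⟪b y, x⟫ = ⟪A (Q y), PS x⟫ := by
      rw [hbapp]
      have := hmove PS (A (Q y)) x
      rwa [hPsa] at this
    have e3 : RCLike.re ⟪A (PS x), PS x⟫ = RCLike.re ⟪a x, x⟫ := by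
      have h1 : ⟪a x, x⟫ = ⟪A (PS x), PS x⟫ := by
        rw [haapp]
        have := hmove PS (A (PS x)) x
        rwa [hPsa] at this
      rw [h1]
    have e4 : RCLike.re ⟪A (Q y), Q y⟫ = RCLike.re ⟪c y, y⟫ := by
      have h1 : ⟪c y, y⟫ = ⟪A (Q y), Q y⟫ := by
        rw [hcapp]
        have := hmove Q (A (Q y)) y
        rwa [hQsa] at this
      rw [h1]
    have e5 : RCLike.re ⟪c y, y⟫ ≤ RCLike.re ⟪u q, q⟫ := by
      have h1 : RCLike.re ⟪(1 + c) y, y⟫ = RCLike.re ⟪y, y⟫ + RCLike.re ⟪c y, y⟫ := by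
        rw [add_apply, one_apply_eq_self, inner_add_left, map_add]
      have h2 : (1 + c) y = q := by
        have := hu1app q
        rw [← hydef] at this
        rw [add_apply, one_apply_eq_self]
        exact this
      have h3 : RCLike.re ⟪q, y⟫ = RCLike.re ⟪u q, q⟫ := by
        rw [hresymm q y, hydef]
      have h4 : 0 ≤ RCLike.re ⟪y, y⟫ := by
        rw [inner_self_eq_norm_sq]
        positivity
      rw [h2] at h1
      rw [h3] at h1
      linarith
    have hcs := aux_cs hA (Q y) (PS x)
    rw [e4, e3] at hcs
    have e6 : RCLike.re ⟪A (Q y), PS x⟫ = RCLike.re ⟪u q, q⟫ := by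
      rw [← e2, e1, hydef]
    rw [e6] at hcs
    have e7 : RCLike.re ⟪u q, q⟫ ≤ RCLike.re ⟪a x, x⟫ := by
      apply aux_le ht0 (hapos x)
      calc RCLike.re ⟪u q, q⟫ ^ 2 ≤ RCLike.re ⟪c y, y⟫ * RCLike.re ⟪a x, x⟫ := hcs
      _ ≤ RCLike.re ⟪u q, q⟫ * RCLike.re ⟪a x, x⟫ :=
        mul_le_mul_of_nonneg_right e5 (hapos x)
    have e8 : RCLike.re ⟪m x, x⟫ = RCLike.re ⟪a x, x⟫ - RCLike.re ⟪b y, x⟫ := by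
      rw [hmapp, ← hqdef, ← hydef, inner_sub_left, map_sub]
    rw [e8]
    have e9 : RCLike.re ⟪b y, x⟫ = RCLike.re ⟪u q, q⟫ := by rw [e1, hydef]
    linarith
  -- compatibility in terms of a and b
  have hWiff : ∀ w : H, w ∈ (Submodule.map (A : H →ₗ[ℂ] H) S)ᗮ ↔ PS (A w) = 0 := by
    intro w
    rw [Submodule.mem_orthogonal]
    constructor
    · intro hw
      apply (hkerP (A w)).mpr
      rw [Submodule.mem_orthogonal]
      intro s hs
      have h1 : (A : H →ₗ[ℂ] H) s ∈ Submodule.map (A : H →ₗ[ℂ] H) S :=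
        Submodule.mem_map_of_mem hs
      have h2 := hw _ h1
      have h3 : ⟪A s, w⟫ = ⟪s, A w⟫ := by
        have := hmove A s w
        rwa [hAsa] at this
      rw [← h3]
      simpa using h2
    · intro h0 v hv
      obtain ⟨s, hs, rfl⟩ := hv
      have hAw : A w ∈ Sᗮ := (hkerP _).mp h0
      have h3 : ⟪A s, w⟫ = ⟪s, A w⟫ := by
        have := hmove A s w
        rwa [hAsa] at this
      have h4 : ⟪s, A w⟫ = 0 := (Submodule.mem_orthogonal _ _).mp hAw s hs
      simpa [h3, h4] using (h3.trans h4)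
  have hcompat_iff : (S ⊔ (Submodule.map (A : H →ₗ[ℂ] H) S)ᗮ = ⊤) ↔ ∀ x, ∃ v, a v = b x := by
    constructor
    · intro htop x
      have hx : Q x ∈ S ⊔ (Submodule.map (A : H →ₗ[ℂ] H) S)ᗮ := by
        rw [htop]; trivial
      obtain ⟨s, hs, w, hw, hsum⟩ := Submodule.mem_sup.mp hx
      refine ⟨s, ?_⟩
      have h1 : a s = PS (A s) := by rw [haapp, hS_P s hs]
      have h2 : b x = PS (A (Q x)) := hbapp x
      rw [h1, h2, ← hsum, map_add, map_add, (hWiff w).mp hw, add_zero]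
    · intro hex
      rw [Submodule.eq_top_iff']
      intro x
      obtain ⟨v, hv⟩ := hex x
      refine Submodule.mem_sup.mpr ⟨PS x + PS v, Submodule.add_mem _ (hPmem x) (hPmem v),
        Q x - PS v, ?_, ?_⟩
      · apply (hWiff _).mpr
        rw [map_sub, map_sub, ← hbapp]
        have h1 : PS (A (PS v)) = a v := (haapp v).symm
        rw [h1, hv, sub_self]
      · calc PS x + PS v + (Q x - PS v) = PS x + Q x := by abel
        _ = x := hPQsum x
  -- trivial range inclusion
  have htriv : LinearMap.range ((A + Q : H →L[ℂ] H) : H →ₗ[ℂ] H) ≤ LinearMap.range (A : H →ₗ[ℂ] H) ⊔ LinearMap.range (Q : H →ₗ[ℂ] H) := by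
    rintro _ ⟨x, rfl⟩
    exact Submodule.mem_sup.mpr ⟨A x, ⟨x, rfl⟩, Q x, ⟨x, rfl⟩, (add_apply A Q x).symm⟩
  -- the key construction: R(b) ≤ R(m) gives R(A) ⊔ Sᗮ ≤ R(A + Q)
  have hmain1 : (∀ x, ∃ w, m w = b x) → LinearMap.range (A : H →ₗ[ℂ] H) ⊔ Sᗮ ≤ LinearMap.range ((A + Q : H →L[ℂ] H) : H →ₗ[ℂ] H) := by
    intro hbm z hz
    obtain ⟨z1, hz1, q₀, hq₀, hsum⟩ := Submodule.mem_sup.mp hz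
    obtain ⟨x, rfl⟩ := hz1
    have hQq₀ : Q q₀ = q₀ := hQfix q₀ hq₀
    obtain ⟨w₁, hw₁⟩ := hbm (u (Q x - q₀))
    set ζ : H := PS (x + w₁) with hζdef
    set η : H := u (Q (A x) + q₀) with hηdef
    refine ⟨ζ + η - u ((star b) ζ), ?_⟩
    show (A + Q) (ζ + η - u ((star b) ζ)) = z
    have hPζ : PS ζ = ζ := hPP _
    have hQη : Q η = η := by
      rw [hηdef, hQu, map_add, hQQ, hQq₀]
    have hQυ : Q (u ((star b) ζ)) = u ((star b) ζ) := by
      rw [hQu]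
      congr 1
      rw [hbsapp, hQQ]
    have hTP : ∀ v, PS v = v → (A + Q) v = a v + (star b) v := by
      intro v hv
      rw [add_apply]
      have h1 : Q v = 0 := by rw [← hv]; exact hQP0 v
      rw [h1, add_zero]
      have h2 : a v = PS (A v) := by rw [haapp, hv]
      have h3 : (star b) v = Q (A v) := by rw [hbsapp, hv]
      rw [h2, h3, hPQsum]
    have hTQ : ∀ v, Q v = v → (A + Q) v = b v + c v + v := by
      intro v hv
      rw [add_apply, hv]
      have h2 : b v = PS (A v) := by rw [hbapp, hv]
      have h3 : c v = Q (A v) := by rw [hcapp, hv]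
      rw [h2, h3]
      rw [hPQsum (A v)]
    have e1 : (A + Q) (ζ + η - u ((star b) ζ)) =
        (A + Q) ζ + (A + Q) η - (A + Q) (u ((star b) ζ)) := by
      rw [map_sub, map_add]
    rw [e1, hTP ζ hPζ, hTQ η hQη, hTQ _ hQυ, ← hsum]
    -- auxiliary identities
    have hcυ : c (u ((star b) ζ)) + u ((star b) ζ) = (star b) ζ := by
      have := hu1app ((star b) ζ)
      rw [add_comm] at this
      exact this
    have hCη : c η + η = Q (A x) + q₀ := by
      have := hu1app (Q (A x) + q₀)
      rw [← hηdef, add_comm] at this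
      exact this
    have hmζ : a ζ - b (u ((star b) ζ)) = m x + b (u (Q x - q₀)) := by
      have h1 : m ζ = a ζ - b (u ((star b) ζ)) := hmapp ζ
      have h2 : m ζ = m (x + w₁) := by rw [hζdef, hmPapp]
      rw [← h1, h2, map_add, hw₁]
    have hkey : b (u (Q x - q₀)) + b η = b x + b (u ((star b) x)) := by
      have h2 : Q (A x) = (star b) x + c x := hQA x
      have h1 : (Q x - q₀) + (Q (A x) + q₀) = (Q x + c x) + (star b) x := by
        rw [h2]; abel
      calc b (u (Q x - q₀)) + b η
          = b (u ((Q x - q₀) + (Q (A x) + q₀))) := by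
            rw [hηdef, ← map_add, ← map_add]
      _ = b (u ((Q x + c x) + (star b) x)) := by rw [h1]
      _ = b (u (Q x + c x)) + b (u ((star b) x)) := by rw [map_add, map_add]
      _ = b (Q x) + b (u ((star b) x)) := by rw [hu_sum_app]
      _ = b x + b (u ((star b) x)) := by
            have := happly _ _ hbQ x
            simp only [mul_apply_eq_comp] at this
            rw [this]
    have hmx : m x + b (u ((star b) x)) = a x := by
      rw [hmapp]; abel
    calc a ζ + (star b) ζ + (b η + c η + η) - (b (u ((star b) ζ)) + c (u ((star b) ζ)) + u ((star b) ζ))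
        = (a ζ - b (u ((star b) ζ))) + ((star b) ζ - (c (u ((star b) ζ)) + u ((star b) ζ)))
          + (b η + (c η + η)) := by abel
    _ = (m x + b (u (Q x - q₀))) + ((star b) ζ - (star b) ζ) + (b η + (Q (A x) + q₀)) := by
          rw [hmζ, hcυ, hCη]
    _ = m x + (b (u (Q x - q₀)) + b η) + Q (A x) + q₀ := by abel
    _ = m x + (b x + b (u ((star b) x))) + Q (A x) + q₀ := by rw [hkey]
    _ = (m x + b (u ((star b) x))) + b x + Q (A x) + q₀ := by abel
    _ = a x + b x + Q (A x) + q₀ := by rw [hmx]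
    _ = a x + b x + ((star b) x + c x) + q₀ := by rw [hQA x]
    _ = (a x + b x + ((star b) x + c x)) + q₀ := by abel
    _ = A x + q₀ := by rw [hdecompA x]
  -- extraction: the range hypothesis gives R(b) ≤ R(m)
  have hmain2 : LinearMap.range (A : H →ₗ[ℂ] H) ⊔ Sᗮ ≤ LinearMap.range ((A + Q : H →L[ℂ] H) : H →ₗ[ℂ] H) → ∀ x, ∃ y, m y = b x := by
    intro hsup x
    have hbx : b x ∈ LinearMap.range (A : H →ₗ[ℂ] H) ⊔ Sᗮ := by
      refine Submodule.mem_sup.mpr ⟨A (Q x), ⟨Q x, rfl⟩, -(Q (A (Q x))),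
        Submodule.neg_mem _ (hQmem _), ?_⟩
      rw [hbapp]
      have h2 : PS (A (Q x)) = A (Q x) - Q (A (Q x)) := eq_sub_of_add_eq (hPQsum (A (Q x)))
      rw [h2]
      abel
    obtain ⟨y, hy⟩ := hsup hbx
    replace hy : (A + Q) y = b x := hy
    refine ⟨y, ?_⟩
    have hbxP : PS (b x) = b x := by rw [hbapp, hPP]
    have hbxQ : Q (b x) = 0 := by rw [hbapp]; exact hQP0 _
    have h1 : a y + b y = b x := by
      have h2 : PS ((A + Q) y) = PS (b x) := by rw [hy]
      rw [add_apply, map_add, hPA, hPQ0, add_zero, hbxP] at h2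
      exact h2
    have h2 : ((star b) y + c y) + Q y = 0 := by
      have h2' : Q ((A + Q) y) = Q (b x) := by rw [hy]
      rw [add_apply, map_add, hQA, hQQ, hbxQ] at h2'
      exact h2'
    have h3 : (star b) y = -(c y + Q y) := by
      have h2'' : (star b) y + (c y + Q y) = 0 := by rw [← add_assoc]; exact h2
      exact eq_neg_of_add_eq_zero_left h2''
    have h4 : u ((star b) y) = -(Q y) := by
      rw [h3, map_neg]
      congr 1
      rw [add_comm]
      exact hu_sum_app y
    have h5 : m y = a y + b (Q y) := by
      rw [hmapp, h4, map_neg, sub_neg_eq_add]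
    have h6 : b (Q y) = b y := by
      have := happly _ _ hbQ y
      simpa [mul_apply] using this
    rw [h5, h6]
    exact h1
  -- direction 1: compatibility gives R(b) ≤ R(m)
  have hdir1 : (∀ x, ∃ v, a v = b x) → (∀ x, ∃ w, m w = b x) := by
    intro hab
    have hrange : LinearMap.range (b : H →ₗ[ℂ] H) ≤ LinearMap.range (a : H →ₗ[ℂ] H) := by
      rintro _ ⟨x, rfl⟩
      obtain ⟨v, hv⟩ := hab x
      exact ⟨v, hv⟩
    obtain ⟨d, hd⟩ := aux_douglas hrange
    have hbad : ∀ x, b x = a (d x) := fun x => by rw [hd]; rfl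
    have hcs : ∀ x, RCLike.re ⟪a (d x), d x⟫ ≤ RCLike.re ⟪c x, x⟫ := by
      intro x
      have ht0 : 0 ≤ RCLike.re ⟪a (d x), d x⟫ := hapos (d x)
      have heq1 : ⟪a (d x), d x⟫ = ⟪A (Q x), PS (d x)⟫ := by
        conv_lhs => rw [← hbad x]
        rw [hbapp]
        have := hmove PS (A (Q x)) (d x)
        rwa [hPsa] at this
      have heq2 : RCLike.re ⟪A (PS (d x)), PS (d x)⟫ = RCLike.re ⟪a (d x), d x⟫ := by
        have h1 : ⟪a (d x), d x⟫ = ⟪A (PS (d x)), PS (d x)⟫ := by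
          rw [haapp]
          have := hmove PS (A (PS (d x))) (d x)
          rwa [hPsa] at this
        rw [h1]
      have heq3 : RCLike.re ⟪A (Q x), Q x⟫ = RCLike.re ⟪c x, x⟫ := by
        have h1 : ⟪c x, x⟫ = ⟪A (Q x), Q x⟫ := by
          rw [hcapp]
          have := hmove Q (A (Q x)) x
          rwa [hQsa] at this
        rw [h1]
      have hcs0 := aux_cs hA (Q x) (PS (d x))
      rw [heq2, heq3] at hcs0
      have ht : RCLike.re ⟪A (Q x), PS (d x)⟫ = RCLike.re ⟪a (d x), d x⟫ := by rw [← heq1]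
      rw [ht] at hcs0
      apply aux_le ht0 (hcpos x)
      calc RCLike.re ⟪a (d x), d x⟫ ^ 2
          ≤ RCLike.re ⟪c x, x⟫ * RCLike.re ⟪a (d x), d x⟫ := hcs0
      _ = RCLike.re ⟪a (d x), d x⟫ * RCLike.re ⟪c x, x⟫ := mul_comm _ _
    have hpos3 : ∀ x, 0 ≤ RCLike.re ⟪(c - star d * (a * d)) x, x⟫ := by
      intro x
      have e1 : (c - star d * (a * d)) x = c x - (star d) (a (d x)) := by
        simp [sub_apply, mul_apply]
      have e2 : ⟪(star d) (a (d x)), x⟫ = ⟪a (d x), d x⟫ := hmove d (a (d x)) x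
      rw [e1, inner_sub_left, map_sub, e2]
      linarith [hcs x]
    have hunit2 : IsUnit (1 + (c - star d * (a * d))) := aux_isUnit_one_add hpos3
    have hsbd : star b * d = star d * (a * d) := by
      rw [hd, star_mul, hasa, mul_assoc]
    have hfact : 1 - u * (star b) * d = u * (1 + (c - star d * (a * d))) := by
      calc 1 - u * (star b) * d = u * (1 + c) - u * (star b * d) := by
            rw [hu2, mul_assoc u (star b) d]
      _ = u * ((1 + c) - star b * d) := by rw [mul_sub]
      _ = u * (1 + (c - star d * (a * d))) := by rw [hsbd, add_sub_assoc]
    have hunitk' : IsUnit (1 - u * (star b) * d) := by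
      rw [hfact]
      exact huIsUnit.mul hunit2
    have hunitk : IsUnit (1 - d * (u * (star b))) := by
      exact aux_swap (Y := u * (star b)) (X := d) hunitk'
    have hma : m = a * (1 - d * (u * (star b))) := by
      rw [hmdef, mul_sub, mul_one]
      congr 1
      rw [hd]
      noncomm_ring
    obtain ⟨V, hV⟩ := hunitk
    have haV : a = m * ↑V⁻¹ := by
      calc a = a * 1 := (mul_one a).symm
      _ = a * (↑V * ↑V⁻¹) := by rw [V.mul_inv]
      _ = (a * ↑V) * ↑V⁻¹ := (mul_assoc a _ _).symm
      _ = m * ↑V⁻¹ := by rw [hV, ← hma]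
    intro x
    refine ⟨(↑V⁻¹ : H →L[ℂ] H) (d x), ?_⟩
    rw [hbad x, haV]
    simp [mul_apply]
  -- direction 2: R(b) ≤ R(m) gives R(b) ≤ R(a)
  have hdir2 : (∀ x, ∃ y, m y = b x) → (∀ x, ∃ v, a v = b x) := by
    intro hbm
    have hrange : LinearMap.range (b : H →ₗ[ℂ] H) ≤ LinearMap.range (m : H →ₗ[ℂ] H) := by
      rintro _ ⟨x, rfl⟩
      exact hbm x
    obtain ⟨e, he⟩ := aux_douglas hrange
    have hbme : ∀ x, b x = m (e x) := fun x => by rw [he]; rfl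
    have hpos4 : ∀ x, 0 ≤ RCLike.re ⟪(c + star b * e) x, x⟫ := by
      intro x
      have e1 : (c + star b * e) x = c x + (star b) (e x) := by
        simp [add_apply, mul_apply]
      have e2 : ⟪(star b) (e x), x⟫ = ⟪e x, b x⟫ := hmove b (e x) x
      have e4 : RCLike.re ⟪e x, b x⟫ = RCLike.re ⟪m (e x), e x⟫ := by
        rw [hbme x, hresymm]
      rw [e1, inner_add_left, map_add, e2, e4]
      have := hcpos x
      have := hmpos (e x)
      linarith
    have hunit3 : IsUnit (1 + (c + star b * e)) := aux_isUnit_one_add hpos4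
    have hfact2 : 1 + u * (star b) * e = u * (1 + (c + star b * e)) := by
      calc 1 + u * (star b) * e = u * (1 + c) + u * (star b * e) := by
            rw [hu2, mul_assoc u (star b) e]
      _ = u * ((1 + c) + star b * e) := (mul_add u (1 + c) (star b * e)).symm
      _ = u * (1 + (c + star b * e)) := by rw [add_assoc]
    have hXY' : IsUnit (1 - (-(u * (star b))) * e) := by
      rw [neg_mul, sub_neg_eq_add, hfact2]
      exact huIsUnit.mul hunit3
    have hXY : IsUnit (1 + e * (u * (star b))) := by
      have := aux_swap (X := e) (Y := -(u * (star b))) hXY'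
      rwa [mul_neg, sub_neg_eq_add] at this
    have hae : a = m * (1 + e * (u * (star b))) := by
      have h1 : a = m + b * u * star b := by rw [hmdef]; abel
      rw [h1, mul_add, mul_one]
      congr 1
      nth_rewrite 1 [he]
      noncomm_ring
    obtain ⟨V, hV⟩ := hXY
    have hmV : m = a * ↑V⁻¹ := by
      calc m = m * 1 := (mul_one m).symm
      _ = m * (↑V * ↑V⁻¹) := by rw [V.mul_inv]
      _ = (m * ↑V) * ↑V⁻¹ := (mul_assoc m _ _).symm
      _ = a * ↑V⁻¹ := by rw [hV, ← hae]
    intro x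
    refine ⟨(↑V⁻¹ : H →L[ℂ] H) (e x), ?_⟩
    rw [hbme x, hmV]
    simp [mul_apply]
  -- final assembly
  constructor
  · intro hcompat
    have hbm := hdir1 (hcompat_iff.mp hcompat)
    have hsub := hmain1 hbm
    constructor
    · apply le_antisymm htriv
      rw [hrangeQ]
      exact hsub
    · rw [hrangeQ]
  · rintro ⟨h1, _h2⟩
    apply hcompat_iff.mpr
    apply hdir2
    apply hmain2
    refine le_of_eq ?_
    rw [h1, hrangeQ]

end
end
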